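/- arXiv:2602.14722 — 5 statements merged into one kernel-verified Lean document; each statement's English description precedes it below -/
import Mathlib

section
/- Let L₁ and L₂ be context-free languages over an alphabet Σ. Suppose that for every natural number n there exist strings P₁, P₂, P₃, P₄ such that (i) the concatenation w = P₁P₂P₃P₄ belongs to L₁ ∩ L₂, (ii) |Pᵢ| ≥ n for every i ∈ {1,2,3,4}, (iii) L₁ has a pump-sensitive linkage (P₁, P₃) on this factorization, and (iv) L₂ has a pump-sensitive linkage (P₂, P₄) on this factorization. Then L₁ ∩ L₂ is not context-free. -/
namespace CFPump

open ContextFreeGrammar ContextFreeRule Symbol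

variable {T : Type}

/-- terminal embedding -/
abbrev emb {N : Type} (w : List T) : List (Symbol T N) := w.map Symbol.terminal

variable {g : ContextFreeGrammar.{0} T}

inductive DerivesIn (g : ContextFreeGrammar.{0} T) :
    List (Symbol T g.NT) → List (Symbol T g.NT) → ℕ → Prop
  | refl (w) : DerivesIn g w w 0
  | head {u v w k} : g.Produces u v → DerivesIn g v w k → DerivesIn g u w (k + 1)

lemma DerivesIn.derives {u v : List (Symbol T g.NT)} {k : ℕ} (h : DerivesIn g u v k) :
    g.Derives u v := by
  induction h with
  | refl w => exact Relation.ReflTransGen.refl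
  | head p _ ih => exact (Relation.ReflTransGen.single p).trans ih

lemma Derives.derivesIn {u v : List (Symbol T g.NT)} (h : g.Derives u v) :
    ∃ k, DerivesIn g u v k := by
  induction h using Relation.ReflTransGen.head_induction_on with
  | refl => exact ⟨0, .refl v⟩
  | head p _ ih => obtain ⟨k, hk⟩ := ih; exact ⟨k + 1, .head p hk⟩

lemma DerivesIn.trans {u v w : List (Symbol T g.NT)} {k l : ℕ}
    (h₁ : DerivesIn g u v k) (h₂ : DerivesIn g v w l) : DerivesIn g u w (k + l) := by
  induction h₁ with
  | refl => simpa using h₂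
  | head p _ ih => have := DerivesIn.head p (ih h₂); convert this using 1; omega

lemma DerivesIn.append_left {v w : List (Symbol T g.NT)} {k : ℕ}
    (h : DerivesIn g v w k) (p : List (Symbol T g.NT)) :
    DerivesIn g (p ++ v) (p ++ w) k := by
  induction h with
  | refl => exact .refl _
  | head hp _ ih => exact .head (hp.append_left p) ih

lemma DerivesIn.append_right {v w : List (Symbol T g.NT)} {k : ℕ}
    (h : DerivesIn g v w k) (p : List (Symbol T g.NT)) :
    DerivesIn g (v ++ p) (w ++ p) k := by
  induction h with
  | refl => exact .refl _
  | head hp _ ih => exact .head (hp.append_right p) ih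

lemma DerivesIn.append {u₁ v₁ u₂ v₂ : List (Symbol T g.NT)} {k₁ k₂ : ℕ}
    (h₁ : DerivesIn g u₁ v₁ k₁) (h₂ : DerivesIn g u₂ v₂ k₂) :
    DerivesIn g (u₁ ++ u₂) (v₁ ++ v₂) (k₁ + k₂) :=
  (h₁.append_right u₂).trans (h₂.append_left v₁)

/-- no rewriting of all-terminal strings -/
lemma no_produces_emb {w : List T} {v : List (Symbol T g.NT)}
    (h : g.Produces (emb w) v) : False := by
  obtain ⟨r, _, hr⟩ := h
  obtain ⟨p, q, hu, -⟩ := hr.exists_parts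
  have : Symbol.nonterminal r.input ∈ emb (N := g.NT) w := by
    rw [hu]; simp
  simp only [emb, List.mem_map] at this
  obtain ⟨a, -, ha⟩ := this
  cases ha

lemma DerivesIn.emb_eq {w : List T} {v : List (Symbol T g.NT)} {k : ℕ}
    (h : DerivesIn g (emb w) v k) : v = emb w ∧ k = 0 := by
  cases h with
  | refl => exact ⟨rfl, rfl⟩
  | head p _ => exact absurd p no_produces_emb

lemma DerivesIn.append_split {p q w : List (Symbol T g.NT)} {k : ℕ}
    (h : DerivesIn g (p ++ q) w k) :
    ∃ w₁ w₂ k₁ k₂, w = w₁ ++ w₂ ∧ k = k₁ + k₂ ∧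
      DerivesIn g p w₁ k₁ ∧ DerivesIn g q w₂ k₂ := by
  generalize hpq : p ++ q = u at h
  induction h generalizing p q with
  | refl w => exact ⟨p, q, 0, 0, hpq.symm, rfl, .refl p, .refl q⟩
  | @head u v w k hp _ ih =>
    obtain ⟨r, hr, hrw⟩ := hp
    obtain ⟨x, y, hu, hv⟩ := hrw.exists_parts
    rw [← hpq, List.append_assoc] at hu
    rcases List.append_eq_append_iff.mp hu with ⟨a', hx, hq⟩ | ⟨c', hp', hy⟩
    · -- rewrite inside q : q = a' ++ [NT] ++ y
      have hq' : g.Produces q (a' ++ r.output ++ y) :=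
        ⟨r, hr, by rw [hq, ← List.append_assoc]; exact r.rewrites_of_exists_parts a' y⟩
      have hv' : p ++ (a' ++ r.output ++ y) = v := by
        rw [hv, hx]; simp
      obtain ⟨w₁, w₂, k₁, k₂, hw, hk, d₁, d₂⟩ := ih hv'
      exact ⟨w₁, w₂, k₁, k₂ + 1, hw, by omega, d₁, .head hq' d₂⟩
    · -- p = x ++ c',  [NT] ++ y = c' ++ q
      cases c' with
      | nil =>
        -- p = x, q = [NT] ++ y
        have hqe : q = [Symbol.nonterminal r.input] ++ y := by simpa using hy.symm
        have hq' : g.Produces q (r.output ++ y) := by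
          refine ⟨r, hr, ?_⟩
          rw [hqe]
          simpa using r.rewrites_of_exists_parts [] y
        have hv' : p ++ (r.output ++ y) = v := by
          rw [hv, hp']; simp
        obtain ⟨w₁, w₂, k₁, k₂, hw, hk, d₁, d₂⟩ := ih hv'
        exact ⟨w₁, w₂, k₁, k₂ + 1, hw, by omega, d₁, .head hq' d₂⟩
      | cons s c'' =>
        -- s = NT, y = c'' ++ q, p = x ++ [NT] ++ c''
        have hs : s = Symbol.nonterminal r.input ∧ y = c'' ++ q := by
          constructor
          · have := congrArg (List.head? ·) hy; simpa using this.symm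
          · have := congrArg (List.tail ·) hy; simpa using this
        obtain ⟨rfl, rfl⟩ := hs
        have hp2 : g.Produces p (x ++ r.output ++ c'') :=
          ⟨r, hr, by rw [hp']; simpa using r.rewrites_of_exists_parts x c''⟩
        have hv' : (x ++ r.output ++ c'') ++ q = v := by
          rw [hv]; simp
        obtain ⟨w₁, w₂, k₁, k₂, hw, hk, d₁, d₂⟩ := ih hv'
        exact ⟨w₁, w₂, k₁ + 1, k₂, hw, by omega, .head hp2 d₁, d₂⟩


/-- derivation from a single terminal symbol -/
lemma DerivesIn.terminal_eq {t : T} {w : List T} {k : ℕ}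
    (h : DerivesIn g [Symbol.terminal t] (emb w) k) : w = [t] ∧ k = 0 := by
  have h' : DerivesIn g (emb [t]) (emb w) k := by simpa using h
  obtain ⟨hv, hk⟩ := h'.emb_eq
  have hw : w = [t] := List.map_injective_iff.mpr
    (fun a b hab => Symbol.terminal.inj hab) hv
  exact ⟨hw, hk⟩

/-- split a derivation from a list of symbols into per-symbol derivations -/
lemma derivesIn_list_split : ∀ (ss : List (Symbol T g.NT)) {w : List T} {k : ℕ},
    DerivesIn g ss (emb w) k →
    ∃ l : List (List T × ℕ),
      List.Forall₂ (fun s p => DerivesIn g [s] (emb p.1) p.2) ss l ∧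
      w = (l.map Prod.fst).flatten ∧ k = (l.map Prod.snd).sum := by
  intro ss
  induction ss with
  | nil =>
    intro w k h
    have h' : DerivesIn g (emb []) (emb w) k := by simpa using h
    obtain ⟨hv, hk⟩ := h'.emb_eq
    have hw : w = [] := by
      simpa [emb] using hv
    exact ⟨[], by simp [hw, hk]⟩
  | cons s ss ih =>
    intro w k h
    have h' : DerivesIn g ([s] ++ ss) (emb w) k := by simpa using h
    obtain ⟨w₁, w₂, k₁, k₂, hw, hk, d₁, d₂⟩ := h'.append_split
    obtain ⟨u₁, u₂, rfl, hu₁, hu₂⟩ := List.map_eq_append_iff.mp hw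
    obtain ⟨l, hf, hwl, hkl⟩ := ih (by rw [← hu₂] at d₂; exact d₂)
    refine ⟨(u₁, k₁) :: l, ?_, ?_, ?_⟩
    · exact List.Forall₂.cons (by rw [← hu₁] at d₁; exact d₁) hf
    · simp [← hwl]
    · simp [← hkl, hk]

/-- converse: combine per-symbol derivations -/
lemma derivesIn_of_forall₂ : ∀ {ss : List (Symbol T g.NT)} {l : List (List T × ℕ)},
    List.Forall₂ (fun s p => DerivesIn g [s] (emb p.1) p.2) ss l →
    DerivesIn g ss (emb (l.map Prod.fst).flatten) ((l.map Prod.snd).sum) := by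
  intro ss l hf
  induction hf with
  | nil => simpa using DerivesIn.refl ([] : List (Symbol T g.NT))
  | @cons s p ss l hd _ ih =>
    have := hd.append ih
    simpa using this

/-- the first step from a single nonterminal -/
lemma DerivesIn.head_of_nonterminal {A : g.NT} {w : List T} {k : ℕ}
    (h : DerivesIn g [Symbol.nonterminal A] (emb w) k) :
    ∃ r ∈ g.rules, ∃ k', r.input = A ∧ k = k' + 1 ∧ DerivesIn g r.output (emb w) k' := by
  generalize hv : emb (N := g.NT) w = v at h
  cases h with
  | refl =>
    exfalso; cases w <;> simp [emb] at hv
  | @head _ mid _ k hp hd =>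
    subst hv
    obtain ⟨r, hr, hrw⟩ := hp
    obtain ⟨p, q, hu, hv⟩ := hrw.exists_parts
    have hpq : p = [] ∧ q = [] := by
      cases p with
      | nil => refine ⟨rfl, ?_⟩; simpa using congrArg (List.tail ·) hu
      | cons a p' => exfalso; have := congrArg List.length hu; simp at this
    obtain ⟨rfl, rfl⟩ := hpq
    have hin : r.input = A := by
      have := congrArg (List.head? ·) hu; simp at this; exact this.symm
    refine ⟨r, hr, k, hin, rfl, ?_⟩
    rw [hv] at hd; simpa using hd

lemma DerivesIn.of_eq {u v : List (Symbol T g.NT)} {k k' : ℕ}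
    (h : DerivesIn g u v k) (hk : k = k') : DerivesIn g u v k' := hk ▸ h

def mconst (g : ContextFreeGrammar.{0} T) : ℕ :=
  (g.rules.sup fun r => r.output.length) + 2

lemma two_le_mconst : 2 ≤ mconst g := Nat.le_add_left 2 _

lemma one_le_mconst : 1 ≤ mconst g := le_trans (by norm_num) two_le_mconst

lemma output_le_mconst {r : ContextFreeRule T g.NT} (hr : r ∈ g.rules) :
    r.output.length ≤ mconst g :=
  le_trans (Finset.le_sup (f := fun r => r.output.length) hr) (Nat.le_add_right _ 2)

/-- extract the nonterminal from a symbol, if any -/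
def symN {N : Type} : Symbol T N → Option N
  | Symbol.terminal _ => none
  | Symbol.nonterminal n => some n

variable [DecidableEq g.NT]

def allNT (g : ContextFreeGrammar.{0} T) [DecidableEq g.NT] : Finset g.NT :=
  insert g.initial (g.rules.biUnion fun r =>
    insert r.input (r.output.filterMap symN).toFinset)

lemma initial_mem_allNT : g.initial ∈ allNT g := Finset.mem_insert_self _ _

lemma output_mem_allNT {r : ContextFreeRule T g.NT} {B : g.NT} (hr : r ∈ g.rules)
    (hB : Symbol.nonterminal B ∈ r.output) : B ∈ allNT g := by
  simp only [allNT, Finset.mem_insert, Finset.mem_biUnion, List.mem_toFinset,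
    List.mem_filterMap]
  exact Or.inr ⟨r, hr, Or.inr ⟨Symbol.nonterminal B, hB, rfl⟩⟩

/-- linkage between spine elements -/
def Link (g : ContextFreeGrammar.{0} T) :
    (g.NT × List T × ℕ) → (g.NT × List T × ℕ) → Prop := fun p q =>
  ∃ u v a, 1 ≤ a ∧ a + q.2.2 ≤ p.2.2 ∧ p.2.1 = u ++ q.2.1 ++ v ∧
    DerivesIn g [Symbol.nonterminal p.1]
      (emb u ++ [Symbol.nonterminal q.1] ++ emb v) a

lemma link_trans : Transitive (Link g) := by
  rintro ⟨B₁, x₁, e₁⟩ ⟨B₂, x₂, e₂⟩ ⟨B₃, x₃, e₃⟩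
    ⟨u, v, a, ha, hae, hx, hD⟩ ⟨u', v', a', ha', hae', hx', hD'⟩
  refine ⟨u ++ u', v' ++ v, a + a', by omega, by simp at hae hae' ⊢; omega, ?_, ?_⟩
  · simp only at hx hx' ⊢
    rw [hx, hx']; simp
  · have step2 : DerivesIn g (emb u ++ [Symbol.nonterminal B₂] ++ emb v)
        (emb u ++ (emb u' ++ [Symbol.nonterminal B₃] ++ emb v') ++ emb v) a' :=
      ((hD'.append_left (emb u)).append_right (emb v)).of_eq rfl
    have := hD.trans step2
    simpa [emb, List.append_assoc] using this

/-- properties of a spine -/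
def GoodSpine (g : ContextFreeGrammar.{0} T) [DecidableEq g.NT]
    (S : List (g.NT × List T × ℕ)) : Prop :=
  S.Chain' (Link g) ∧
  (∀ p ∈ S, p.1 ∈ allNT g ∧ DerivesIn g [Symbol.nonterminal p.1] (emb p.2.1) p.2.2) ∧
  (∀ S₁ p S₂, S = S₁ ++ p :: S₂ → p.2.1.length ≤ mconst g ^ (S₂.length + 1))


set_option maxHeartbeats 1000000 in
lemma child (g : ContextFreeGrammar.{0} T) [DecidableEq g.NT] {K : ℕ}
    (IH : ∀ k' < K, ∀ A (w : List T), A ∈ allNT g →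
        DerivesIn g [Symbol.nonterminal A] (emb w) k' →
        ∃ S, S.head? = some (A, w, k') ∧ GoodSpine g S) :
    ∀ {ss : List (Symbol T g.NT)} {l : List (List T × ℕ)},
    List.Forall₂ (fun s p => DerivesIn g [s] (emb p.1) p.2) ss l →
    (∀ B, Symbol.nonterminal B ∈ ss → B ∈ allNT g) →
    (l.map Prod.snd).sum < K →
    ∃ L : ℕ,
      (∀ p ∈ l, p.1.length ≤ mconst g ^ L) ∧
      ((L = 0 ∧ ∀ s ∈ ss, ∀ B, s ≠ Symbol.nonterminal B) ∨
       ∃ B xw e ss₁ ss₂ l₁ l₂ S,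
         ss = ss₁ ++ Symbol.nonterminal B :: ss₂ ∧ l = l₁ ++ (xw, e) :: l₂ ∧
         List.Forall₂ (fun s p => DerivesIn g [s] (emb p.1) p.2) ss₁ l₁ ∧
         List.Forall₂ (fun s p => DerivesIn g [s] (emb p.1) p.2) ss₂ l₂ ∧
         S.head? = some (B, xw, e) ∧ S.length = L ∧ GoodSpine g S) := by
  intro ss l hf
  induction hf with
  | nil =>
    intro _ _
    exact ⟨0, by simp, Or.inl ⟨rfl, by simp⟩⟩
  | @cons s p ss' l' hd hf ih =>
    intro hNT hsum
    have hsum' : (l'.map Prod.snd).sum < K := by simp at hsum; omega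
    have hNT' : ∀ B, Symbol.nonterminal B ∈ ss' → B ∈ allNT g :=
      fun B hB => hNT B (List.mem_cons_of_mem _ hB)
    obtain ⟨L', hbound', hcase'⟩ := ih hNT' hsum'
    cases s with
    | terminal t =>
      obtain ⟨hp1, -⟩ := hd.terminal_eq
      have hplen : p.1.length ≤ mconst g ^ L' := by
        rw [hp1]; simpa using Nat.one_le_pow _ _ (lt_of_lt_of_le (by norm_num) one_le_mconst)
      refine ⟨L', ?_, ?_⟩
      · intro q hq
        rcases List.mem_cons.mp hq with rfl | hq
        · exact hplen
        · exact hbound' q hq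
      · rcases hcase' with ⟨hL0, hnoNT⟩ | ⟨B, xw, e, ss₁, ss₂, l₁, l₂, S, h1, h2, h3, h4, h5, h6, h7⟩
        · refine Or.inl ⟨hL0, ?_⟩
          intro s hs B
          rcases List.mem_cons.mp hs with rfl | hs
          · simp
          · exact hnoNT s hs B
        · refine Or.inr ⟨B, xw, e, Symbol.terminal t :: ss₁, ss₂, p :: l₁, l₂, S, ?_, ?_,
            List.Forall₂.cons hd h3, h4, h5, h6, h7⟩
          · rw [h1]; rfl
          · rw [h2]; rfl
    | nonterminal B =>
      have hB : B ∈ allNT g := hNT B List.mem_cons_self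
      have hpK : p.2 < K := by
        simp at hsum; omega
      obtain ⟨S, hShead, hSgood⟩ := IH p.2 hpK B p.1 hB hd
      obtain ⟨Shd, Stl, rfl⟩ : ∃ a t, S = a :: t := by
        cases S with
        | nil => simp at hShead
        | cons a t => exact ⟨a, t, rfl⟩
      have hShd : Shd = (B, p.1, p.2) := by simpa using hShead
      subst hShd
      have hself : p.1.length ≤ mconst g ^ (Stl.length + 1) :=
        hSgood.2.2 [] _ Stl rfl
      rcases le_or_gt L' (Stl.length + 1) with hle | hlt
      · -- choose this child
        refine ⟨Stl.length + 1, ?_, ?_⟩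
        · intro q hq
          rcases List.mem_cons.mp hq with rfl | hq
          · exact hself
          · exact le_trans (hbound' q hq) (Nat.pow_le_pow_right one_le_mconst hle)
        · refine Or.inr ⟨B, p.1, p.2, [], ss', [], l', _, by simp, by simp, .nil, hf,
            by simp, by simp, hSgood⟩
      · -- keep tail's choice
        rcases hcase' with ⟨hL0, -⟩ | ⟨B', xw, e, ss₁, ss₂, l₁, l₂, S', h1, h2, h3, h4, h5, h6, h7⟩
        · omega
        · refine ⟨L', ?_, Or.inr ⟨B', xw, e, Symbol.nonterminal B :: ss₁, ss₂, p :: l₁, l₂, S',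
            by rw [h1]; rfl, by rw [h2]; rfl, List.Forall₂.cons hd h3, h4, h5, h6, h7⟩⟩
          intro q hq
          rcases List.mem_cons.mp hq with rfl | hq
          · exact le_trans hself (Nat.pow_le_pow_right one_le_mconst (by omega))
          · exact hbound' q hq

set_option maxHeartbeats 1000000 in
lemma main (g : ContextFreeGrammar.{0} T) [DecidableEq g.NT] :
    ∀ K A (w : List T), A ∈ allNT g →
      DerivesIn g [Symbol.nonterminal A] (emb w) K →
      ∃ S, S.head? = some (A, w, K) ∧ GoodSpine g S := by
  intro K
  induction K using Nat.strong_induction_on with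
  | _ K IH =>
  intro A w hA hd
  obtain ⟨r, hr, k', hrA, hK, hout⟩ := hd.head_of_nonterminal
  obtain ⟨l, hf, hwl, hkl⟩ := derivesIn_list_split r.output hout
  have hNTs : ∀ B, Symbol.nonterminal B ∈ r.output → B ∈ allNT g :=
    fun B hB => output_mem_allNT hr hB
  have hsum : (l.map Prod.snd).sum < K := by omega
  obtain ⟨L, hbound, hcase⟩ := child g (fun k' hk' => IH k' hk') hf hNTs hsum
  -- the top yield bound
  have hllen : l.length ≤ mconst g := by
    rw [← hf.length_eq]
    exact output_le_mconst hr
  have hwlen : w.length ≤ mconst g ^ (L + 1) := by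
    have h1 : w.length = ((l.map Prod.fst).map List.length).sum := by
      rw [hwl, List.length_flatten, List.map_map]
    have h2 : ∀ x ∈ (l.map Prod.fst).map List.length, x ≤ mconst g ^ L := by
      intro x hx
      simp only [List.map_map, List.mem_map] at hx
      obtain ⟨q, hq, rfl⟩ := hx
      exact hbound q hq
    calc w.length ≤ ((l.map Prod.fst).map List.length).length • mconst g ^ L :=
          h1 ▸ List.sum_le_card_nsmul _ _ h2
      _ = l.length * mconst g ^ L := by simp [smul_eq_mul]
      _ ≤ mconst g * mconst g ^ L := Nat.mul_le_mul_right _ hllen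
      _ = mconst g ^ (L + 1) := by ring
  rcases hcase with ⟨hL0, -⟩ | ⟨B, xw, e, ss₁, ss₂, l₁, l₂, S, h1, h2, h3, h4, h5, h6, h7⟩
  · -- no nonterminal children: singleton spine
    refine ⟨[(A, w, K)], by simp, List.isChain_singleton _, ?_, ?_⟩
    · intro p hp; rcases List.mem_singleton.mp hp with rfl; exact ⟨hA, hd⟩
    · rintro S₁ p S₂ hS
      rcases S₁ with - | ⟨a, S₁'⟩
      · simp at hS
        obtain ⟨rfl, rfl⟩ := hS
        simpa [hL0] using hwlen
      · exfalso
        have := congrArg List.length hS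
        simp at this
  · -- spine through chosen child
    obtain ⟨Shd, Stl, rfl⟩ : ∃ a t, S = a :: t := by
      cases S with
      | nil => simp at h5
      | cons a t => exact ⟨a, t, rfl⟩
    have hShd : Shd = (B, xw, e) := by simpa using h5
    subst hShd
    -- build the link
    have hlink : Link g (A, w, K) (B, xw, e) := by
      refine ⟨(l₁.map Prod.fst).flatten, (l₂.map Prod.fst).flatten,
        (l₁.map Prod.snd).sum + (l₂.map Prod.snd).sum + 1, by omega, ?_, ?_, ?_⟩
      · simp only
        have : (l.map Prod.snd).sum
            = (l₁.map Prod.snd).sum + e + (l₂.map Prod.snd).sum := by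
          rw [h2]; simp [List.sum_append, add_assoc]
        omega
      · simp only
        rw [hwl, h2]; simp
      · have d₁ := derivesIn_of_forall₂ h3
        have d₂ := derivesIn_of_forall₂ h4
        have dmid := DerivesIn.refl (g := g) [Symbol.nonterminal B]
        have dall := d₁.append (dmid.append d₂)
        have step : g.Produces [Symbol.nonterminal A] r.output := by
          refine ⟨r, hr, ?_⟩
          rw [← hrA]
          exact ContextFreeRule.Rewrites.input_output
        have dall' : DerivesIn g r.output
            (emb (l₁.map Prod.fst).flatten ++ [Symbol.nonterminal B]
              ++ emb (l₂.map Prod.fst).flatten)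
            ((l₁.map Prod.snd).sum + (0 + (l₂.map Prod.snd).sum)) := by
          rw [h1]
          simpa [emb] using dall
        exact (DerivesIn.head step dall').of_eq (by omega)
    refine ⟨(A, w, K) :: (B, xw, e) :: Stl, by simp, ?_, ?_, ?_⟩
    · exact List.IsChain.cons_cons hlink h7.1
    · intro p hp
      rcases List.mem_cons.mp hp with rfl | hp
      · exact ⟨hA, hd⟩
      · exact h7.2.1 p hp
    · rintro S₁ p S₂ hS
      rcases S₁ with - | ⟨a, S₁'⟩
      · have h6' : Stl.length + 1 = L := by simpa using h6
        simp only [List.nil_append, List.cons.injEq] at hS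
        obtain ⟨rfl, rfl⟩ := hS
        simpa [h6'] using hwlen
      · have : (B, xw, e) :: Stl = S₁' ++ p :: S₂ := (by simpa using hS : _ ∧ _).2
        exact h7.2.2 S₁' p S₂ this

lemma DerivesIn.cast_str {x x' y y' : List (Symbol T g.NT)} {k : ℕ}
    (h : DerivesIn g x y k) (hx : x = x') (hy : y = y') : DerivesIn g x' y' k := by
  subst hx hy; exact h

set_option maxHeartbeats 1000000 in
theorem cfl_pumping {L : Language T} (hL : L.IsContextFree) :
    ∃ n, 0 < n ∧ ∀ w ∈ L, n < w.length →
      ∃ u v x y z : List T, w = u ++ v ++ x ++ y ++ z ∧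
        v.length + x.length + y.length ≤ n ∧ 1 ≤ v.length + y.length ∧
        u ++ v ++ v ++ x ++ y ++ y ++ z ∈ L := by
  classical
  obtain ⟨g, rfl⟩ := hL
  set c := (allNT g).card with hc
  refine ⟨mconst g ^ (c + 1), pow_pos (by have := two_le_mconst (g := g); omega) _, ?_⟩
  intro w hwL hwlen
  rw [ContextFreeGrammar.mem_language_iff] at hwL
  have hex : ∃ k, DerivesIn g [Symbol.nonterminal g.initial] (emb w) k :=
    Derives.derivesIn hwL
  set k₀ := Nat.find hex with hk₀
  obtain ⟨S, hShead, hCh, hpr, hb4⟩ :=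
    main g k₀ g.initial w initial_mem_allNT (Nat.find_spec hex)
  haveI : IsTrans _ (Link g) := ⟨fun a b c' hab hbc => link_trans (g := g) hab hbc⟩
  have hPW : S.Pairwise (Link g) := List.isChain_iff_pairwise.mp hCh
  obtain ⟨h₀, Stl, rfl⟩ : ∃ a t, S = a :: t := by
    cases S with
    | nil => simp at hShead
    | cons a t => exact ⟨a, t, rfl⟩
  have hh₀ : h₀ = (g.initial, w, k₀) := by simpa using hShead
  subst hh₀
  -- spine is long
  have hwS : w.length ≤ mconst g ^ (Stl.length + 1) := hb4 [] _ Stl rfl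
  have hSlong : c + 1 ≤ ((g.initial, w, k₀) :: Stl).length := by
    by_contra hcon
    push_neg at hcon
    have h1 : Stl.length + 1 ≤ c + 1 := by simp at hcon; omega
    have := le_trans hwS (Nat.pow_le_pow_right one_le_mconst h1)
    omega
  set d := ((g.initial, w, k₀) :: Stl).length - (c + 1) with hd
  set l := ((g.initial, w, k₀) :: Stl).drop d with hl
  have hllen : l.length = c + 1 := by
    rw [hl, List.length_drop]; omega
  have hlsub : l.Sublist ((g.initial, w, k₀) :: Stl) := List.drop_sublist _ _
  -- pigeonhole on labels
  have hnodup : ¬ (l.map (fun p => p.1)).Nodup := by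
    intro hnd
    have hsubNT : (l.map (fun p => p.1)).toFinset ⊆ allNT g := by
      intro x hx
      rw [List.mem_toFinset, List.mem_map] at hx
      obtain ⟨p, hp, rfl⟩ := hx
      exact (hpr p (hlsub.subset hp)).1
    have h1 : (l.map (fun p => p.1)).toFinset.card = (l.map (fun p => p.1)).length :=
      List.toFinset_card_of_nodup hnd
    have h2 := Finset.card_le_card hsubNT
    rw [h1, List.length_map, hllen, ← hc] at h2
    omega
  obtain ⟨b, hdup⟩ := List.exists_duplicate_iff_not_nodup.mpr hnodup
  have hbb : [b, b].Sublist (l.map (fun p => p.1)) := List.duplicate_iff_sublist.mp hdup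
  obtain ⟨l', hl'sub, hl'map⟩ := List.sublist_map_iff.mp hbb
  obtain ⟨p, q, rfl⟩ : ∃ p q, l' = [p, q] := by
    cases l' with
    | nil => simp at hl'map
    | cons p l'' =>
      cases l'' with
      | nil => simp at hl'map
      | cons q l''' =>
        cases l''' with
        | nil => exact ⟨p, q, rfl⟩
        | cons r l'''' => simp at hl'map
  have hq1 : q.1 = p.1 := by
    have hm : b = p.1 ∧ b = q.1 := by simpa using hl'map
    rw [← hm.1, ← hm.2]
  have hpqS : [p, q].Sublist ((g.initial, w, k₀) :: Stl) := hl'sub.trans hlsub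
  have hLpq : Link g p q := by
    have := hPW.sublist hpqS
    rw [List.pairwise_cons] at this
    exact this.1 q (by simp)
  -- bound on the window
  have hpl : p ∈ l := hl'sub.subset (by simp)
  have hwin : p.2.1.length ≤ mconst g ^ (c + 1) := by
    obtain ⟨l₁, l₂, hldec⟩ := List.append_of_mem hpl
    have hSdec : (g.initial, w, k₀) :: Stl
        = (((g.initial, w, k₀) :: Stl).take d ++ l₁) ++ p :: l₂ := by
      conv_lhs => rw [← List.take_append_drop d ((g.initial, w, k₀) :: Stl)]
      rw [← hl, hldec]
      simp
    have := hb4 _ p l₂ hSdec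
    have hlen2 : l₂.length + 1 ≤ c + 1 := by
      have := congrArg List.length hldec
      simp [hllen] at this
      omega
    exact le_trans this (Nat.pow_le_pow_right one_le_mconst hlen2)
  -- outer linkage from the root
  obtain ⟨B', xi, ei⟩ := p
  obtain ⟨B, xj, ej⟩ := q
  simp only at hq1
  subst hq1
  simp only at hwin
  have d₃ : DerivesIn g [Symbol.nonterminal B] (emb xj) ej :=
    (hpr (B, xj, ej) (hpqS.subset (by simp))).2
  obtain ⟨v, y, a₂, ha₂, haee, hxi, d₂⟩ := hLpq
  simp only at ha₂ haee hxi d₂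
  have houter : ∃ u z a₁, w = u ++ xi ++ z ∧ a₁ + ei ≤ k₀ ∧
      DerivesIn g [Symbol.nonterminal g.initial]
        (emb u ++ [Symbol.nonterminal B] ++ emb z) a₁ := by
    have hmem : (B, xi, ei) ∈ (g.initial, w, k₀) :: Stl := hpqS.subset (by simp)
    rcases List.mem_cons.mp hmem with heq | hmem'
    · have h3 : B = g.initial ∧ xi = w ∧ ei = k₀ := by simpa [Prod.ext_iff] using heq
      refine ⟨[], [], 0, by simp [h3.2.1], by omega, ?_⟩
      rw [h3.1]
      simpa using DerivesIn.refl (g := g) [Symbol.nonterminal g.initial]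
    · have hlk := (List.pairwise_cons.mp hPW).1 _ hmem'
      obtain ⟨u, z, a₁, -, hle, hweq, dd⟩ := hlk
      simp only at hle hweq dd
      exact ⟨u, z, a₁, hweq, hle, dd⟩
  obtain ⟨u, z, a₁, hw_eq, ha₁, d₁⟩ := houter
  have ctx : ∀ (pre post : List T) {M M' : List (Symbol T g.NT)} {k : ℕ},
      DerivesIn g M M' k →
      g.Derives (emb pre ++ M ++ emb post) (emb pre ++ M' ++ emb post) :=
    by
    intro pre post M M' k h
    exact (h.derives.append_left _).append_right _
  refine ⟨u, v, xj, y, z, ?_, ?_, ?_, ?_⟩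
  · rw [hw_eq, hxi]; simp
  · have := congrArg List.length hxi
    simp at this
    omega
  · by_contra hcon
    push_neg at hcon
    have hv0 : v = [] := List.length_eq_zero_iff.mp (by omega)
    have hy0 : y = [] := List.length_eq_zero_iff.mp (by omega)
    have dcut : DerivesIn g (emb u ++ [Symbol.nonterminal B] ++ emb z)
        (emb u ++ emb xj ++ emb z) ej :=
      (d₃.append_left (emb u)).append_right (emb z)
    have dfull := d₁.trans dcut
    have dfull' : DerivesIn g [Symbol.nonterminal g.initial] (emb w) (a₁ + ej) :=
      dfull.cast_str rfl (by simp [hw_eq, hxi, hv0, hy0, emb])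
    exact Nat.find_min hex (show a₁ + ej < k₀ by omega) dfull'
  · rw [ContextFreeGrammar.mem_language_iff]
    have step1 : g.Derives [Symbol.nonterminal g.initial]
        (emb u ++ [Symbol.nonterminal B] ++ emb z) := d₁.derives
    have step2 : g.Derives (emb u ++ [Symbol.nonterminal B] ++ emb z)
        (emb (u ++ v) ++ [Symbol.nonterminal B] ++ emb (y ++ z)) := by
      have := ctx u z d₂
      have he : emb (N := g.NT) u ++ (emb v ++ [Symbol.nonterminal B] ++ emb y) ++ emb z
          = emb (u ++ v) ++ [Symbol.nonterminal B] ++ emb (y ++ z) := by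
        simp [emb]
      rw [← he]
      exact this
    have step3 : g.Derives (emb (u ++ v) ++ [Symbol.nonterminal B] ++ emb (y ++ z))
        (emb (u ++ v ++ v) ++ [Symbol.nonterminal B] ++ emb (y ++ y ++ z)) := by
      have := ctx (u ++ v) (y ++ z) d₂
      have he : emb (N := g.NT) (u ++ v) ++ (emb v ++ [Symbol.nonterminal B] ++ emb y)
            ++ emb (y ++ z)
          = emb (u ++ v ++ v) ++ [Symbol.nonterminal B] ++ emb (y ++ y ++ z) := by
        simp [emb]
      rw [← he]
      exact this
    have step4 : g.Derives (emb (u ++ v ++ v) ++ [Symbol.nonterminal B] ++ emb (y ++ y ++ z))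
        (emb (u ++ v ++ v) ++ emb xj ++ emb (y ++ y ++ z)) :=
      ctx (u ++ v ++ v) (y ++ y ++ z) d₃
    have hall := ((step1.trans step2).trans step3).trans step4
    have he : emb (N := g.NT) (u ++ v ++ v) ++ emb xj ++ emb (y ++ y ++ z)
        = emb (u ++ v ++ v ++ xj ++ y ++ y ++ z) := by
      simp [emb]
    rw [he] at hall
    exact hall

end CFPump



/-- Start position (0-indexed) of segment `i` in the concatenation of the segments `Ps`. -/
def segStart {α : Type} (Ps : List (List α)) (i : ℕ) : ℕ :=
  ((Ps.take i).map List.length).sum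

/-- The set of (0-indexed) positions occupied by segment `i` of the factorization `Ps`. -/
def segRange {α : Type} (Ps : List (List α)) (i : ℕ) : Set ℕ :=
  Set.Ico (segStart Ps i) (segStart Ps i + (Ps.getD i []).length)

/-- The set of positions occupied by the substring `v ++ x ++ y` inside `u ++ v ++ x ++ y ++ z`. -/
def vxyRange {α : Type} (u v x y : List α) : Set ℕ :=
  Set.Ico u.length (u.length + (v.length + x.length + y.length))

/-- `L` has a pump-sensitive linkage `(P_i, P_j)` on the factorization `Ps = [P₁, …, P_k]`:
for every factorization `u v x y z` of the concatenated word with `|v| + |y| ≥ 1` such that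
the position range of `v x y` intersects the range of segment `i` and is disjoint from that of
segment `j`, or vice versa, the pumped word `u v v x y y z` is not in `L`. -/
def HasPumpSensitiveLinkage {α : Type} (L : Language α) (Ps : List (List α)) (i j : ℕ) : Prop :=
  ∀ u v x y z : List α,
    Ps.flatten = u ++ v ++ x ++ y ++ z →
    1 ≤ v.length + y.length →
    (((vxyRange u v x y ∩ segRange Ps i).Nonempty ∧
        Disjoint (vxyRange u v x y) (segRange Ps j)) ∨
     ((vxyRange u v x y ∩ segRange Ps j).Nonempty ∧
        Disjoint (vxyRange u v x y) (segRange Ps i))) →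
    u ++ v ++ v ++ x ++ y ++ y ++ z ∉ L

/-- Corollary: if `L₁, L₂` are context-free and for every `n` their intersection contains a word
`P₁P₂P₃P₄` with all segments of length at least `n`, where `L₁` has a pump-sensitive linkage
`(P₁, P₃)` and `L₂` has a pump-sensitive linkage `(P₂, P₄)` on this factorization,
then `L₁ ⊓ L₂` is not context-free. -/
theorem intersection_crossing_linkages_not_contextFree {α : Type} (L₁ L₂ : Language α)
    (hL₁ : L₁.IsContextFree) (hL₂ : L₂.IsContextFree)
    (h : ∀ n : ℕ, ∃ P₁ P₂ P₃ P₄ : List α,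
      P₁ ++ P₂ ++ P₃ ++ P₄ ∈ L₁ ⊓ L₂ ∧
      (n ≤ P₁.length ∧ n ≤ P₂.length ∧ n ≤ P₃.length ∧ n ≤ P₄.length) ∧
      HasPumpSensitiveLinkage L₁ [P₁, P₂, P₃, P₄] 0 2 ∧
      HasPumpSensitiveLinkage L₂ [P₁, P₂, P₃, P₄] 1 3) :
    ¬ (L₁ ⊓ L₂).IsContextFree := by
  intro hCF
  obtain ⟨n, hn0, hpump⟩ := CFPump.cfl_pumping hCF
  obtain ⟨P₁, P₂, P₃, P₄, hmem, ⟨hn1, hn2, hn3, hn4⟩, hlink1, hlink2⟩ := h n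
  have hwlen : n < (P₁ ++ P₂ ++ P₃ ++ P₄).length := by
    simp only [List.length_append]; omega
  obtain ⟨u, v, x, y, z, hw, hvxy, hvy, hpumped⟩ :=
    hpump (P₁ ++ P₂ ++ P₃ ++ P₄) hmem hwlen
  have hflat : ([P₁, P₂, P₃, P₄] : List (List α)).flatten = u ++ v ++ x ++ y ++ z := by
    have : ([P₁, P₂, P₃, P₄] : List (List α)).flatten = P₁ ++ P₂ ++ P₃ ++ P₄ := by simp
    rw [this, hw]
  have hlen_eq : P₁.length + P₂.length + P₃.length + P₄.length
      = u.length + v.length + x.length + y.length + z.length := by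
    have := congrArg List.length hw
    simp only [List.length_append] at this
    omega
  -- segment ranges
  have hs0 : segRange [P₁, P₂, P₃, P₄] 0 = Set.Ico 0 P₁.length := by
    simp [segRange, segStart]
  have hs1 : segRange [P₁, P₂, P₃, P₄] 1
      = Set.Ico P₁.length (P₁.length + P₂.length) := by
    simp [segRange, segStart]
  have hs2 : segRange [P₁, P₂, P₃, P₄] 2
      = Set.Ico (P₁.length + P₂.length) (P₁.length + P₂.length + P₃.length) := by
    simp [segRange, segStart]
  have hs3 : segRange [P₁, P₂, P₃, P₄] 3
      = Set.Ico (P₁.length + P₂.length + P₃.length)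
          (P₁.length + P₂.length + P₃.length + P₄.length) := by
    simp [segRange, segStart, add_assoc]
  have hvr : vxyRange u v x y
      = Set.Ico u.length (u.length + (v.length + x.length + y.length)) := rfl
  rcases lt_or_ge u.length P₁.length with hc1 | hc1
  · -- window meets segment 0, disjoint from segment 2
    refine hlink1 u v x y z hflat hvy (Or.inl ⟨⟨u.length, ?_, ?_⟩, ?_⟩) hpumped.1
    · rw [hvr]; simp only [Set.mem_Ico]; omega
    · rw [hs0]; simp only [Set.mem_Ico]; omega
    · rw [hvr, hs2]
      refine Set.disjoint_left.mpr fun t ht1 ht2 => ?_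
      simp only [Set.mem_Ico] at ht1 ht2
      omega
  rcases lt_or_ge u.length (P₁.length + P₂.length) with hc2 | hc2
  · refine hlink2 u v x y z hflat hvy (Or.inl ⟨⟨u.length, ?_, ?_⟩, ?_⟩) hpumped.2
    · rw [hvr]; simp only [Set.mem_Ico]; omega
    · rw [hs1]; simp only [Set.mem_Ico]; omega
    · rw [hvr, hs3]
      refine Set.disjoint_left.mpr fun t ht1 ht2 => ?_
      simp only [Set.mem_Ico] at ht1 ht2
      omega
  rcases lt_or_ge u.length (P₁.length + P₂.length + P₃.length) with hc3 | hc3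
  · refine hlink1 u v x y z hflat hvy (Or.inr ⟨⟨u.length, ?_, ?_⟩, ?_⟩) hpumped.1
    · rw [hvr]; simp only [Set.mem_Ico]; omega
    · rw [hs2]; simp only [Set.mem_Ico]; omega
    · rw [hvr, hs0]
      refine Set.disjoint_left.mpr fun t ht1 ht2 => ?_
      simp only [Set.mem_Ico] at ht1 ht2
      omega
  · refine hlink2 u v x y z hflat hvy (Or.inr ⟨⟨u.length, ?_, ?_⟩, ?_⟩) hpumped.2
    · rw [hvr]; simp only [Set.mem_Ico]; omega
    · rw [hs3]; simp only [Set.mem_Ico]; omega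
    · rw [hvr, hs1]
      refine Set.disjoint_left.mpr fun t ht1 ht2 => ?_
      simp only [Set.mem_Ico] at ht1 ht2
      omega
end

section
/- Let L₁ and L₂ be context-free languages over an alphabet Σ. Suppose that for every natural number n there exist strings P₁, P₂, P₃, P₄ such that (i) the concatenation w = P₁P₂P₃P₄ belongs to L₁ ∩ L₂, (ii) |P₂| ≥ 1, |P₃| ≥ 1, and max(|P₂|, |P₃|) ≥ n, (iii) L₁ has a pump-sensitive linkage (P₁, P₃) on this factorization, and (iv) L₂ has a pump-sensitive linkage (P₂, P₄) on this factorization. Then L₁ ∩ L₂ is not context-free. -/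
namespace CFPump

open ContextFreeGrammar

variable {T : Type}

/-- Derivation trees for a context-free grammar. -/
inductive PTree (g : ContextFreeGrammar.{0} T) : Type
  | leaf (t : T) : PTree g
  | node (A : g.NT) (ts : List (PTree g)) : PTree g

namespace PTree

variable {g : ContextFreeGrammar.{0} T}

/-- Root symbol of a derivation tree. -/
def rootSym : PTree g → Symbol T g.NT
  | leaf t => Symbol.terminal t
  | node A _ => Symbol.nonterminal A

/-- The terminal word spelled by the leaves. -/
def yield : PTree g → List T
  | leaf t => [t]
  | node _ ts => (ts.attach.map fun ⟨t, _⟩ => yield t).flatten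
  decreasing_by rename_i ts ht; have := List.sizeOf_lt_of_mem ht; simp at this ⊢; omega

/-- Number of nodes. -/
def size : PTree g → ℕ
  | leaf _ => 1
  | node _ ts => 1 + ((ts.attach.map fun ⟨t, _⟩ => size t).sum)
  decreasing_by rename_i ts ht; have := List.sizeOf_lt_of_mem ht; simp at this ⊢; omega

/-- Height: leaves have height 0. -/
def height : PTree g → ℕ
  | leaf _ => 0
  | node _ ts => 1 + ((ts.attach.map fun ⟨t, _⟩ => height t).foldr max 0)
  decreasing_by rename_i ts ht; have := List.sizeOf_lt_of_mem ht; simp at this ⊢; omega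

lemma yield_node (A : g.NT) (ts : List (PTree g)) :
    (node A ts).yield = (ts.map yield).flatten := by
  unfold yield; congr 1; simp [List.attach_map_val]

lemma size_node (A : g.NT) (ts : List (PTree g)) :
    (node A ts).size = 1 + (ts.map size).sum := by
  unfold size; congr 1; simp [List.attach_map_val]

lemma height_node (A : g.NT) (ts : List (PTree g)) :
    (node A ts).height = 1 + (ts.map height).foldr max 0 := by
  unfold height; congr 1; simp [List.attach_map_val]

lemma size_pos (t : PTree g) : 1 ≤ t.size := by
  cases t with
  | leaf t => simp [size]
  | node A ts => rw [size_node]; omega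

lemma lt_size_of_mem {c : PTree g} {A : g.NT} {ts : List (PTree g)} (hc : c ∈ ts) :
    c.size < (node A ts).size := by
  rw [size_node]
  have : c.size ≤ (ts.map size).sum := List.le_sum_of_mem (List.mem_map_of_mem (f := size) hc)
  omega

/-- Validity of a derivation tree w.r.t. the grammar. -/
inductive IsValid : PTree g → Prop
  | leaf (t : T) : IsValid (leaf t)
  | node (r : ContextFreeRule T g.NT) (hr : r ∈ g.rules) (ts : List (PTree g))
      (hout : ts.map rootSym = r.output) (hts : ∀ t ∈ ts, IsValid t) :
      IsValid (node r.input ts)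

end PTree

end CFPump

namespace CFPump
namespace PTree
variable {T : Type} {g : ContextFreeGrammar.{0} T}

lemma derives_flatten (l : List (PTree g))
    (h : ∀ c ∈ l, g.Derives [c.rootSym] (c.yield.map Symbol.terminal)) :
    g.Derives (l.map rootSym) ((l.map yield).flatten.map Symbol.terminal) := by
  induction l with
  | nil => simp; exact Relation.ReflTransGen.refl
  | cons c l ih =>
    simp only [List.map_cons, List.flatten_cons, List.map_append]
    have h1 : g.Derives (rootSym c :: List.map rootSym l)
        (List.map Symbol.terminal c.yield ++ List.map rootSym l) := by
      simpa using (h c (by simp)).append_right (l.map rootSym)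
    exact h1.trans ((ih (fun c hc => h c (by simp [hc]))).append_left _)

lemma derives_yield (t : PTree g) (ht : IsValid t) :
    g.Derives [t.rootSym] (t.yield.map Symbol.terminal) := by
  obtain ⟨n, hn⟩ : ∃ n, t.size = n := ⟨_, rfl⟩
  induction n using Nat.strong_induction_on generalizing t with
  | _ n IH =>
  subst hn
  cases ht with
  | leaf t => simp [rootSym, yield]; exact Relation.ReflTransGen.refl
  | node r hr ts hout hts =>
    have hstep : g.Produces [Symbol.nonterminal r.input] r.output :=
      ⟨r, hr, ContextFreeRule.Rewrites.input_output⟩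
    have hlist : g.Derives (ts.map rootSym) ((ts.map yield).flatten.map Symbol.terminal) :=
      derives_flatten ts (fun c hc =>
        IH c.size (lt_size_of_mem hc) c (hts c hc) rfl)
    rw [hout] at hlist
    simpa [rootSym, yield_node, hout] using hstep.trans_derives hlist

lemma trees_of_derives {s : List (Symbol T g.NT)} {w : List T}
    (h : g.Derives s (w.map Symbol.terminal)) :
    ∃ l : List (PTree g), (∀ t ∈ l, IsValid t) ∧ l.map rootSym = s ∧
      (l.map yield).flatten = w := by
  induction h using Relation.ReflTransGen.head_induction_on with
  | refl =>
    refine ⟨w.map PTree.leaf, ?_, ?_, ?_⟩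
    · intro t ht; obtain ⟨a, -, rfl⟩ := List.mem_map.mp ht; exact IsValid.leaf a
    · simp [List.map_map, rootSym]
    · simp [List.map_map]; induction w with
      | nil => simp
      | cons a w ihw => simpa [yield] using ihw
  | head hprod hder ih =>
    obtain ⟨r, hr, hrw⟩ := hprod
    obtain ⟨p, q, hs, hs'⟩ := hrw.exists_parts
    obtain ⟨l, hval, hroot, hyield⟩ := ih
    rw [hs'] at hroot
    obtain ⟨l', lq, rfl, hroot', hrootq⟩ := List.map_eq_append_iff.mp hroot
    obtain ⟨lp, lo, rfl, hrootp, hrooto⟩ := List.map_eq_append_iff.mp hroot'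
    refine ⟨lp ++ (node r.input lo) :: lq, ?_, ?_, ?_⟩
    · intro t ht
      rcases List.mem_append.mp ht with h1 | h2
      · exact hval t (by simp [h1])
      · rcases List.mem_cons.mp h2 with rfl | h3
        · exact IsValid.node r hr lo hrooto (fun c hc => hval c (by simp [hc]))
        · exact hval t (by simp [h3])
    · simp [rootSym, hrootp, hrootq, hs]
    · simp only [List.map_append, List.flatten_append, List.map_cons, List.flatten_cons] at hyield ⊢
      simpa [yield_node] using hyield

lemma tree_of_mem_language {w : List T} (hw : w ∈ g.language) :
    ∃ t : PTree g, IsValid t ∧ t.rootSym = Symbol.nonterminal g.initial ∧ t.yield = w := by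
  obtain ⟨l, hval, hroot, hyield⟩ := trees_of_derives ((ContextFreeGrammar.mem_language_iff g w).mp hw)
  have hlen : l.length = 1 := by have := congrArg List.length hroot; simpa using this
  obtain ⟨t, rfl⟩ : ∃ t, l = [t] := by
    cases l with
    | nil => simp at hlen
    | cons a l' => cases l' with
      | nil => exact ⟨a, rfl⟩
      | cons b l'' => simp at hlen
  exact ⟨t, hval t (by simp), by simpa using hroot, by simpa using hyield⟩

end PTree
end CFPump

namespace CFPump
namespace PTree
variable {T : Type} {g : ContextFreeGrammar.{0} T}

lemma valid_children {A : g.NT} {ts : List (PTree g)} (hv : IsValid (node A ts)) :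
    ∀ t ∈ ts, IsValid t := by
  cases hv with | node r hr ts hout hts => exact hts

/-- `t` has minimal size among valid trees with its root symbol and yield. -/
def IsMin (t : PTree g) : Prop :=
  ∀ t' : PTree g, IsValid t' → t'.rootSym = t.rootSym → t'.yield = t.yield → t.size ≤ t'.size

lemma exists_min (t0 : PTree g) (h : IsValid t0) :
    ∃ t : PTree g, IsValid t ∧ t.rootSym = t0.rootSym ∧ t.yield = t0.yield ∧ IsMin t := by
  classical
  have hex : ∃ n, ∃ t : PTree g, (IsValid t ∧ t.rootSym = t0.rootSym ∧ t.yield = t0.yield) ∧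
      t.size = n := ⟨t0.size, t0, ⟨h, rfl, rfl⟩, rfl⟩
  obtain ⟨t, ⟨hv, hr, hy⟩, hs⟩ := Nat.find_spec hex
  refine ⟨t, hv, hr, hy, fun t' hv' hr' hy' => ?_⟩
  rw [hs]
  exact Nat.find_min' hex ⟨t', ⟨hv', hr'.trans hr, hy'.trans hy⟩, rfl⟩

lemma IsMin.child {A : g.NT} {ts : List (PTree g)} (hv : IsValid (node A ts))
    (hm : IsMin (node A ts)) {c : PTree g} (hc : c ∈ ts) : IsMin c := by
  intro c' hvc' hroot hyield
  by_contra hlt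
  push_neg at hlt
  obtain ⟨l₁, l₂, rfl⟩ := List.append_of_mem hc
  cases hv with
  | node r hr ts hout hts =>
    have hv' : IsValid (node r.input (l₁ ++ c' :: l₂)) := by
      refine IsValid.node r hr _ ?_ ?_
      · simpa [hroot] using hout
      · intro t ht
        rcases List.mem_append.mp ht with h1 | h2
        · exact hts t (by simp [h1])
        · rcases List.mem_cons.mp h2 with rfl | h3
          · exact hvc'
          · exact hts t (by simp [h3])
    have := hm (node r.input (l₁ ++ c' :: l₂)) hv' (by simp [rootSym])
      (by simp [yield_node, hyield])
    simp [size_node] at this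
    omega

lemma node_context {A : g.NT} {ts : List (PTree g)} (hv : IsValid (node A ts))
    (lp lq : List (PTree g)) (c : PTree g) (hts : ts = lp ++ c :: lq) :
    g.Derives [Symbol.nonterminal A]
      ((lp.map yield).flatten.map Symbol.terminal ++ [c.rootSym] ++
        (lq.map yield).flatten.map Symbol.terminal) ∧
    (node A ts).yield = (lp.map yield).flatten ++ c.yield ++ (lq.map yield).flatten := by
  subst hts
  constructor
  · cases hv with
    | node r hr ts hout hts' =>
      have hstep : g.Produces [Symbol.nonterminal r.input] ((lp ++ c :: lq).map rootSym) := by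
        rw [hout]; exact ⟨r, hr, ContextFreeRule.Rewrites.input_output⟩
      have h1 : g.Derives (lp.map rootSym) ((lp.map yield).flatten.map Symbol.terminal) :=
        derives_flatten _ (fun t ht => derives_yield t (hts' t (by simp [ht])))
      have h2 : g.Derives (lq.map rootSym) ((lq.map yield).flatten.map Symbol.terminal) :=
        derives_flatten _ (fun t ht => derives_yield t (by exact hts' t (by simp [ht])))
      have d1 : g.Derives ((lp ++ c :: lq).map rootSym)
          ((lp.map yield).flatten.map Symbol.terminal ++ (c.rootSym :: lq.map rootSym)) := by
        simpa using h1.append_right (c.rootSym :: lq.map rootSym)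
      have d2 : g.Derives
          ((lp.map yield).flatten.map Symbol.terminal ++ (c.rootSym :: lq.map rootSym))
          ((lp.map yield).flatten.map Symbol.terminal ++
            (c.rootSym :: (lq.map yield).flatten.map Symbol.terminal)) := by
        have := (h2.append_left [c.rootSym]).append_left
          ((lp.map yield).flatten.map Symbol.terminal)
        simpa [List.append_assoc] using this
      have := (hstep.trans_derives (d1.trans d2))
      simpa [List.append_assoc] using this
  · simp [yield_node]

lemma foldr_max_le {l : List ℕ} {x : ℕ} (hx : x ∈ l) : x ≤ l.foldr max 0 := by
  induction l with
  | nil => simp at hx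
  | cons a l ih =>
    rcases List.mem_cons.mp hx with rfl | h
    · simp [le_max_iff]
    · simp only [List.foldr_cons, le_max_iff]; exact Or.inr (ih h)

lemma exists_eq_foldr_max {l : List ℕ} (h : 1 ≤ l.foldr max 0) : ∃ x ∈ l, x = l.foldr max 0 := by
  induction l with
  | nil => simp at h
  | cons a l ih =>
    simp only [List.foldr_cons]
    rcases le_total (l.foldr max 0) a with h1 | h1
    · exact ⟨a, by simp, (max_eq_left h1).symm⟩
    · rcases Nat.eq_zero_or_pos (l.foldr max 0) with h0 | h0
      · exact ⟨a, by simp, by omega⟩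
      · obtain ⟨x, hx, hx'⟩ := ih h0
        exact ⟨x, by simp [hx], by rw [hx']; omega⟩

lemma yield_length_le_pow {m : ℕ} (hm1 : 1 ≤ m) (hm : ∀ r ∈ g.rules, r.output.length ≤ m)
    (t : PTree g) (ht : IsValid t) : t.yield.length ≤ m ^ t.height := by
  obtain ⟨n, hn⟩ : ∃ n, t.size = n := ⟨_, rfl⟩
  induction n using Nat.strong_induction_on generalizing t with
  | _ n IH =>
  subst hn
  cases ht with
  | leaf t => simp [yield, height]
  | node r hr ts hout hts =>
    rw [yield_node, height_node]
    set M := (ts.map height).foldr max 0 with hM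
    have hlen : (ts.map (fun c => c.yield.length)).sum ≤ ts.length * m ^ M := by
      have h1 : (ts.map (fun c => c.yield.length)).sum ≤ (ts.map (fun _ => m ^ M)).sum :=
        List.sum_le_sum (fun c hc => by
          calc c.yield.length ≤ m ^ c.height :=
                IH c.size (lt_size_of_mem hc) c (hts c hc) rfl
            _ ≤ m ^ M := Nat.pow_le_pow_right hm1 (foldr_max_le (List.mem_map_of_mem (f := height) hc)))
      refine h1.trans ?_
      simp [List.map_const']
    have hts_len : ts.length ≤ m := by
      have := hm r hr
      rw [← hout] at this
      simpa using this
    calc ((ts.map yield).flatten).length = (ts.map (fun c => c.yield.length)).sum := by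
          simp [List.length_flatten, Function.comp_def]
      _ ≤ ts.length * m ^ M := hlen
      _ ≤ m * m ^ M := Nat.mul_le_mul_right _ hts_len
      _ = m ^ (1 + M) := by rw [pow_add, pow_one]

end PTree
end CFPump

namespace CFPump
namespace PTree
variable {T : Type} {g : ContextFreeGrammar.{0} T}

lemma height_pos_node {A : g.NT} {ts : List (PTree g)} : 1 ≤ (node A ts).height := by
  rw [height_node]; omega

lemma exists_tall_child {A : g.NT} {ts : List (PTree g)}
    (h : 2 ≤ (node A ts).height) :
    ∃ c ∈ ts, c.height + 1 = (node A ts).height := by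
  rw [height_node] at h ⊢
  obtain ⟨x, hx, hx'⟩ := exists_eq_foldr_max (l := ts.map height) (by omega)
  obtain ⟨c, hc, rfl⟩ := List.mem_map.mp hx
  exact ⟨c, hc, by omega⟩

lemma descend (n : ℕ) (hn : 1 ≤ n) (t : PTree g) (hv : IsValid t) (hm : IsMin t)
    (hh : n ≤ t.height) :
    ∃ (B : g.NT) (t' : PTree g) (u z : List T), IsValid t' ∧ IsMin t' ∧
      t'.rootSym = Symbol.nonterminal B ∧ t'.height = n ∧
      t.yield = u ++ t'.yield ++ z ∧
      g.Derives [t.rootSym]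
        (u.map Symbol.terminal ++ [Symbol.nonterminal B] ++ z.map Symbol.terminal) := by
  obtain ⟨N, hN⟩ : ∃ N, t.size = N := ⟨_, rfl⟩
  induction N using Nat.strong_induction_on generalizing t with
  | _ N IH =>
  subst hN
  cases t with
  | leaf a => simp [height] at hh; omega
  | node A ts =>
    rcases eq_or_lt_of_le hh with heq | hlt
    · refine ⟨A, node A ts, [], [], hv, hm, rfl, heq.symm, by simp, ?_⟩
      simpa [rootSym] using ContextFreeGrammar.Derives.refl [(node A ts).rootSym]
    · have h2h : 2 ≤ (node A ts).height := by omega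
      obtain ⟨c, hc, hch⟩ := exists_tall_child h2h
      obtain ⟨lp, lq, rfl⟩ := List.append_of_mem hc
      obtain ⟨hctx, hyld⟩ := node_context hv lp lq c rfl
      have hcv : IsValid c := valid_children hv c hc
      have hcm : IsMin c := hm.child hv hc
      obtain ⟨B, t', u', z', h1, h2, h3, h4, h5, h6⟩ :=
        IH c.size (lt_size_of_mem hc) c hcv hcm (by omega) rfl
      refine ⟨B, t', (lp.map yield).flatten ++ u', z' ++ (lq.map yield).flatten,
        h1, h2, h3, h4, ?_, ?_⟩
      · rw [hyld, h5]; simp [List.append_assoc]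
      · have hmid : g.Derives
            ((lp.map yield).flatten.map Symbol.terminal ++ [c.rootSym] ++
              (lq.map yield).flatten.map Symbol.terminal)
            ((lp.map yield).flatten.map Symbol.terminal ++
              (u'.map Symbol.terminal ++ [Symbol.nonterminal B] ++ z'.map Symbol.terminal) ++
              (lq.map yield).flatten.map Symbol.terminal) := by
          exact (h6.append_left _).append_right _
        have := hctx.trans hmid
        simpa [List.append_assoc, rootSym] using this

attribute [local instance] Classical.decEq

lemma walk (t : PTree g) (S : Finset g.NT) (hv : IsValid t) (hm : IsMin t)
    (hS : S ⊆ g.rules.image ContextFreeRule.input)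
    (hcard : (g.rules.image ContextFreeRule.input).card + 1 ≤ t.height + S.card) :
    (∃ A ∈ S, ∃ (v y : List T) (t' : PTree g), IsValid t' ∧
        t'.rootSym = Symbol.nonterminal A ∧ t'.size ≤ t.size ∧
        t.yield = v ++ t'.yield ++ y ∧
        g.Derives [t.rootSym]
          (v.map Symbol.terminal ++ [Symbol.nonterminal A] ++ y.map Symbol.terminal))
    ∨ (∃ (A : g.NT) (u v x y z : List T), t.yield = u ++ v ++ x ++ y ++ z ∧
        1 ≤ v.length + y.length ∧
        g.Derives [t.rootSym]
          (u.map Symbol.terminal ++ [Symbol.nonterminal A] ++ z.map Symbol.terminal) ∧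
        g.Derives [Symbol.nonterminal A]
          (v.map Symbol.terminal ++ [Symbol.nonterminal A] ++ y.map Symbol.terminal) ∧
        g.Derives [Symbol.nonterminal A] (x.map Symbol.terminal)) := by
  classical
  obtain ⟨N, hN⟩ : ∃ N, t.size = N := ⟨_, rfl⟩
  induction N using Nat.strong_induction_on generalizing t S with
  | _ N IH =>
  subst hN
  cases t with
  | leaf a =>
    exfalso
    have := Finset.card_le_card hS
    simp [height] at hcard
    omega
  | node A ts =>
    have hA : A ∈ g.rules.image ContextFreeRule.input := by
      cases hv with
      | node r hr ts hout hts => exact Finset.mem_image.mpr ⟨r, hr, rfl⟩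
    by_cases hAS : A ∈ S
    · left
      refine ⟨A, hAS, [], [], node A ts, hv, rfl, le_refl _, by simp, ?_⟩
      simpa [rootSym] using ContextFreeGrammar.Derives.refl [(node A ts).rootSym]
    · have hScard : S.card + 1 ≤ (g.rules.image ContextFreeRule.input).card :=
        Finset.card_lt_card (Finset.ssubset_iff_of_subset hS |>.mpr ⟨A, hA, hAS⟩)
      have hh2 : 2 ≤ (node A ts).height := by omega
      obtain ⟨c, hc, hch⟩ := exists_tall_child hh2
      obtain ⟨lp, lq, rfl⟩ := List.append_of_mem hc
      obtain ⟨hctx, hyld⟩ := node_context hv lp lq c rfl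
      have hcv : IsValid c := valid_children hv c hc
      have hcm : IsMin c := hm.child hv hc
      have hrec := IH c.size (lt_size_of_mem hc) c (insert A S) hcv hcm
        (Finset.insert_subset hA hS)
        (by rw [Finset.card_insert_of_notMem hAS]; omega) rfl
      rcases hrec with ⟨A', hA'mem, v, y, t', ht'v, ht'root, ht'size, hcyld, hcder⟩ | hright
      · -- the found nonterminal is A itself, or propagates
        have hDfull : g.Derives [Symbol.nonterminal A]
            (((lp.map yield).flatten ++ v).map Symbol.terminal ++ [Symbol.nonterminal A'] ++
              ((y ++ (lq.map yield).flatten)).map Symbol.terminal) := by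
          have hmid : g.Derives
              ((lp.map yield).flatten.map Symbol.terminal ++ [c.rootSym] ++
                (lq.map yield).flatten.map Symbol.terminal)
              ((lp.map yield).flatten.map Symbol.terminal ++
                (v.map Symbol.terminal ++ [Symbol.nonterminal A'] ++ y.map Symbol.terminal) ++
                (lq.map yield).flatten.map Symbol.terminal) :=
            (hcder.append_left _).append_right _
          have := hctx.trans hmid
          simpa [List.append_assoc] using this
        rcases Finset.mem_insert.mp hA'mem with rfl | hA'S
        · right
          refine ⟨A', [], (lp.map yield).flatten ++ v, t'.yield, y ++ (lq.map yield).flatten, [],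
            ?_, ?_, ?_, ?_, ?_⟩
          · rw [hyld, hcyld]; simp [List.append_assoc]
          · -- strictness from minimality
            by_contra hzero
            push_neg at hzero
            simp only [List.length_append, Nat.lt_one_iff, Nat.add_eq_zero,
              List.length_eq_zero_iff] at hzero
            obtain ⟨⟨e1, e2⟩, e3, e4⟩ := hzero
            have hyeq : t'.yield = (node A' (lp ++ c :: lq)).yield := by
              rw [hyld, hcyld, e1, e2, e3, e4]; simp
            have hge := hm t' ht'v (by rw [ht'root]; rfl) hyeq
            have hlt2 := lt_of_le_of_lt ht'size (lt_size_of_mem (A := A') hc)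
            omega
          · simpa [rootSym] using ContextFreeGrammar.Derives.refl [(node A' (lp ++ c :: lq)).rootSym]
          · exact hDfull
          · have := derives_yield t' ht'v
            rwa [ht'root] at this
        · left
          refine ⟨A', hA'S, (lp.map yield).flatten ++ v, y ++ (lq.map yield).flatten, t',
            ht'v, ht'root, le_of_lt (lt_of_le_of_lt ht'size (lt_size_of_mem hc)), ?_, hDfull⟩
          rw [hyld, hcyld]; simp [List.append_assoc]
      · right
        obtain ⟨A', u, v, x, y, z, hy1, hy2, hd0, hd1, hd2⟩ := hright
        refine ⟨A', (lp.map yield).flatten ++ u, v, x, y, z ++ (lq.map yield).flatten,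
          ?_, hy2, ?_, hd1, hd2⟩
        · rw [hyld, hy1]; simp [List.append_assoc]
        · have hmid : g.Derives
              ((lp.map yield).flatten.map Symbol.terminal ++ [c.rootSym] ++
                (lq.map yield).flatten.map Symbol.terminal)
              ((lp.map yield).flatten.map Symbol.terminal ++
                (u.map Symbol.terminal ++ [Symbol.nonterminal A'] ++ z.map Symbol.terminal) ++
                (lq.map yield).flatten.map Symbol.terminal) :=
            (hd0.append_left _).append_right _
          have := hctx.trans hmid
          simpa [List.append_assoc, rootSym] using this

end PTree
end CFPump

namespace CFPump

open PTree

variable {T : Type}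

lemma derives_ctx {g : ContextFreeGrammar.{0} T} (pre post : List (Symbol T g.NT))
    {a b : List (Symbol T g.NT)} (h : g.Derives a b) :
    g.Derives (pre ++ a ++ post) (pre ++ b ++ post) :=
  (h.append_left pre).append_right post

attribute [local instance] Classical.decEq

theorem cfl_pump {L : Language T} (hL : L.IsContextFree) :
    ∃ p : ℕ, 1 ≤ p ∧ ∀ w ∈ L, p ≤ w.length →
      ∃ u v x y z : List T, w = u ++ v ++ x ++ y ++ z ∧ 1 ≤ v.length + y.length ∧
        v.length + x.length + y.length ≤ p ∧ u ++ v ++ v ++ x ++ y ++ y ++ z ∈ L := by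
  obtain ⟨g, rfl⟩ := hL
  set m : ℕ := (g.rules.sup fun r => r.output.length) + 1 with hm_def
  set K : ℕ := (g.rules.image ContextFreeRule.input).card with hK_def
  have hm1 : 1 ≤ m := by omega
  have hmr : ∀ r ∈ g.rules, r.output.length ≤ m := fun r hr =>
    le_trans (Finset.le_sup (f := fun r => r.output.length) hr) (by omega)
  refine ⟨m ^ (K + 1) + 1, by omega, fun w hw hlen => ?_⟩
  obtain ⟨t0, hv0, hr0, hy0⟩ := tree_of_mem_language hw
  obtain ⟨t, hv, hr, hy, hmn⟩ := exists_min t0 hv0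
  rw [hr0] at hr
  rw [hy0] at hy
  have hyb := yield_length_le_pow hm1 hmr t hv
  have hht : K + 1 ≤ t.height := by
    by_contra hlt
    push_neg at hlt
    have h1 : m ^ t.height ≤ m ^ K := Nat.pow_le_pow_right hm1 (by omega)
    have h2 : m ^ K ≤ m ^ (K + 1) := Nat.pow_le_pow_right hm1 (by omega)
    rw [hy] at hyb
    omega
  obtain ⟨B, t', u₀, z₀, hv', hmn', hroot', hh', hyd, hctx⟩ :=
    descend (K + 1) (by omega) t hv hmn hht
  have hyb' : t'.yield.length ≤ m ^ (K + 1) := by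
    have := yield_length_le_pow hm1 hmr t' hv'
    rwa [hh'] at this
  have hwalk := walk t' ∅ hv' hmn' (by simp) (by rw [hh']; simp; exact le_of_eq (by rw [hK_def]))
  rcases hwalk with ⟨A, hA, -⟩ | ⟨A, u₁, v, x, y, z₁, hy1, hstrict, d0, d1, d2⟩
  · simp at hA
  · rw [hroot'] at d0
    rw [hr] at hctx
    refine ⟨u₀ ++ u₁, v, x, y, z₁ ++ z₀, ?_, hstrict, ?_, ?_⟩
    · rw [← hy, hyd, hy1]; simp [List.append_assoc]
    · have := congrArg List.length hy1
      simp only [List.length_append] at this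
      omega
    · rw [ContextFreeGrammar.mem_language_iff]
      have step1 := derives_ctx (u₀.map Symbol.terminal) (z₀.map Symbol.terminal) d0
      have step2 := derives_ctx (u₀.map Symbol.terminal ++ u₁.map Symbol.terminal)
        (z₁.map Symbol.terminal ++ z₀.map Symbol.terminal) d1
      have step3 := derives_ctx
        (u₀.map Symbol.terminal ++ u₁.map Symbol.terminal ++ v.map Symbol.terminal)
        (y.map Symbol.terminal ++ z₁.map Symbol.terminal ++ z₀.map Symbol.terminal) d1
      have step4 := derives_ctx
        (u₀.map Symbol.terminal ++ u₁.map Symbol.terminal ++ v.map Symbol.terminal ++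
          v.map Symbol.terminal)
        (y.map Symbol.terminal ++ y.map Symbol.terminal ++ z₁.map Symbol.terminal ++
          z₀.map Symbol.terminal) d2
      simp only [List.append_assoc] at step1 step2 step3 step4 hctx ⊢
      have hfin := ((((hctx.trans step1).trans step2).trans step3).trans step4)
      simpa [List.map_append, List.append_assoc] using hfin

end CFPump


/-- Corollary of the strengthened crossing linkage theorem for intersections: if `L₁, L₂` are
context-free and for every `n` their intersection contains a word `P₁P₂P₃P₄` with
`|P₂| ≥ 1`, `|P₃| ≥ 1`, `max(|P₂|, |P₃|) ≥ n`, where `L₁` has a pump-sensitive linkage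
`(P₁, P₃)` and `L₂` has a pump-sensitive linkage `(P₂, P₄)`, then `L₁ ⊓ L₂` is not
context-free. -/
theorem strengthened_intersection_not_contextFree {α : Type} (L₁ L₂ : Language α)
    (hL₁ : L₁.IsContextFree) (hL₂ : L₂.IsContextFree)
    (h : ∀ n : ℕ, ∃ P₁ P₂ P₃ P₄ : List α,
      P₁ ++ P₂ ++ P₃ ++ P₄ ∈ L₁ ⊓ L₂ ∧
      (1 ≤ P₂.length ∧ 1 ≤ P₃.length ∧ n ≤ max P₂.length P₃.length) ∧
      HasPumpSensitiveLinkage L₁ [P₁, P₂, P₃, P₄] 0 2 ∧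
      HasPumpSensitiveLinkage L₂ [P₁, P₂, P₃, P₄] 1 3) :
    ¬ (L₁ ⊓ L₂).IsContextFree := by
  intro hCF
  obtain ⟨p, hp1, hpl⟩ := CFPump.cfl_pump hCF
  obtain ⟨P₁, P₂, P₃, P₄, hmem, ⟨h2, h3, hmax⟩, hk1, hk2⟩ := h p
  have hPmax : p ≤ P₂.length ∨ p ≤ P₃.length := by
    rcases max_cases P₂.length P₃.length with ⟨he, -⟩ | ⟨he, -⟩ <;> omega
  have hlenw : p ≤ (P₁ ++ P₂ ++ P₃ ++ P₄).length := by
    simp only [List.length_append]; omega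
  obtain ⟨u, v, x, y, z, hw5, hstrict, hbound, hpmem⟩ := hpl _ hmem hlenw
  have hflat : ([P₁, P₂, P₃, P₄] : List (List α)).flatten = u ++ v ++ x ++ y ++ z := by
    simpa [List.append_assoc] using hw5
  have hsum : u.length + (v.length + x.length + y.length) + z.length =
      P₁.length + P₂.length + P₃.length + P₄.length := by
    have := congrArg List.length hw5
    simp only [List.length_append] at this
    omega
  have key :
      ((∃ k, u.length ≤ k ∧ k < u.length + (v.length + x.length + y.length) ∧ k < P₁.length) ∧
        (u.length + (v.length + x.length + y.length) ≤ P₁.length + P₂.length ∨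
          P₁.length + P₂.length + P₃.length ≤ u.length)) ∨
      ((∃ k, u.length ≤ k ∧ k < u.length + (v.length + x.length + y.length) ∧
          P₁.length + P₂.length ≤ k ∧ k < P₁.length + P₂.length + P₃.length) ∧
        P₁.length ≤ u.length) ∨
      ((∃ k, u.length ≤ k ∧ k < u.length + (v.length + x.length + y.length) ∧
          P₁.length ≤ k ∧ k < P₁.length + P₂.length) ∧
        (u.length + (v.length + x.length + y.length) ≤ P₁.length + P₂.length + P₃.length ∨
          P₁.length + P₂.length + P₃.length + P₄.length ≤ u.length)) ∨
      ((∃ k, u.length ≤ k ∧ k < u.length + (v.length + x.length + y.length) ∧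
          P₁.length + P₂.length + P₃.length ≤ k ∧
          k < P₁.length + P₂.length + P₃.length + P₄.length) ∧
        (u.length + (v.length + x.length + y.length) ≤ P₁.length ∨
          P₁.length + P₂.length ≤ u.length)) := by
    rcases hPmax with hP | hP
    · by_cases hA0 : u.length < P₁.length
      · exact Or.inl ⟨⟨u.length, le_refl _, by omega, by omega⟩, by omega⟩
      · by_cases hmid : P₁.length + P₂.length < u.length + (v.length + x.length + y.length) ∧
            u.length < P₁.length + P₂.length + P₃.length
        · exact Or.inr (Or.inl ⟨⟨max u.length (P₁.length + P₂.length),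
            by omega, by omega, by omega, by omega⟩, by omega⟩)
        · by_cases hb2 : u.length + (v.length + x.length + y.length) ≤ P₁.length + P₂.length
          · exact Or.inr (Or.inr (Or.inl ⟨⟨u.length, le_refl _, by omega, by omega, by omega⟩,
              by omega⟩))
          · exact Or.inr (Or.inr (Or.inr ⟨⟨u.length, le_refl _, by omega, by omega, by omega⟩,
              by omega⟩))
    · by_cases hmid : u.length < P₁.length + P₂.length ∧
          P₁.length < u.length + (v.length + x.length + y.length)
      · exact Or.inr (Or.inr (Or.inl ⟨⟨max u.length P₁.length,
          by omega, by omega, by omega, by omega⟩, by omega⟩))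
      · by_cases hb1 : u.length + (v.length + x.length + y.length) ≤ P₁.length
        · exact Or.inl ⟨⟨u.length, le_refl _, by omega, by omega⟩, by omega⟩
        · by_cases hb3 : u.length + (v.length + x.length + y.length) ≤
              P₁.length + P₂.length + P₃.length
          · exact Or.inr (Or.inl ⟨⟨u.length, le_refl _, by omega, by omega, by omega⟩, by omega⟩)
          · exact Or.inr (Or.inr (Or.inr ⟨⟨max u.length
              (P₁.length + P₂.length + P₃.length), by omega, by omega, by omega, by omega⟩,
              by omega⟩))
  rcases key with ⟨⟨k, hk⟩, hd⟩ | ⟨⟨k, hk⟩, hd⟩ | ⟨⟨k, hk⟩, hd⟩ | ⟨⟨k, hk⟩, hd⟩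
  · refine absurd hpmem.1 (hk1 u v x y z hflat hstrict (Or.inl ⟨⟨k, ?_, ?_⟩,
      Set.disjoint_left.mpr fun j hj hj' => ?_⟩))
    · simp only [vxyRange, Set.mem_Ico]; omega
    · simp [segRange, segStart, Set.mem_Ico]; omega
    · simp only [vxyRange, Set.mem_Ico] at hj
      simp [segRange, segStart, Set.mem_Ico] at hj'
      omega
  · refine absurd hpmem.1 (hk1 u v x y z hflat hstrict (Or.inr ⟨⟨k, ?_, ?_⟩,
      Set.disjoint_left.mpr fun j hj hj' => ?_⟩))
    · simp only [vxyRange, Set.mem_Ico]; omega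
    · simp [segRange, segStart, Set.mem_Ico]; omega
    · simp only [vxyRange, Set.mem_Ico] at hj
      simp [segRange, segStart, Set.mem_Ico] at hj'
      omega
  · refine absurd hpmem.2 (hk2 u v x y z hflat hstrict (Or.inl ⟨⟨k, ?_, ?_⟩,
      Set.disjoint_left.mpr fun j hj hj' => ?_⟩))
    · simp only [vxyRange, Set.mem_Ico]; omega
    · simp [segRange, segStart, Set.mem_Ico]; omega
    · simp only [vxyRange, Set.mem_Ico] at hj
      simp [segRange, segStart, Set.mem_Ico] at hj'
      omega
  · refine absurd hpmem.2 (hk2 u v x y z hflat hstrict (Or.inr ⟨⟨k, ?_, ?_⟩,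
      Set.disjoint_left.mpr fun j hj hj' => ?_⟩))
    · simp only [vxyRange, Set.mem_Ico]; omega
    · simp [segRange, segStart, Set.mem_Ico]; omega
    · simp only [vxyRange, Set.mem_Ico] at hj
      simp [segRange, segStart, Set.mem_Ico] at hj'
      omega
end

section
/- Fix a natural number k, a type α, and pairwise disjoint, finite, nonempty sub-alphabets σ₁, …, σ_k ⊆ α. Let C₁ and C₂ be arc sets on {1, …, k} that are well-nested matchings and are jointly well-nested. Then the intersection L(C₁) ∩ L(C₂) of the corresponding block-counting languages is context-free. -/
/-- Two arcs cross: `i < i' < j < j'` or `i' < i < j' < j`. -/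
def ArcsCross {k : ℕ} (e₁ e₂ : Fin k × Fin k) : Prop :=
  (e₁.1 < e₂.1 ∧ e₂.1 < e₁.2 ∧ e₁.2 < e₂.2) ∨
  (e₂.1 < e₁.1 ∧ e₁.1 < e₂.2 ∧ e₂.2 < e₁.2)

/-- An arc set on `{1, …, k}`: every arc `(i, j)` satisfies `i < j`. -/
def IsArcSet {k : ℕ} (C : Set (Fin k × Fin k)) : Prop :=
  ∀ e ∈ C, e.1 < e.2

/-- An arc set is well-nested if no two of its arcs cross. -/
def WellNested {k : ℕ} (C : Set (Fin k × Fin k)) : Prop :=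
  ∀ e₁ ∈ C, ∀ e₂ ∈ C, ¬ ArcsCross e₁ e₂

/-- An arc set is a matching if no two distinct arcs share an endpoint. -/
def IsMatching {k : ℕ} (C : Set (Fin k × Fin k)) : Prop :=
  ∀ e₁ ∈ C, ∀ e₂ ∈ C, e₁ ≠ e₂ →
    ({e₁.1, e₁.2} : Set (Fin k)) ∩ {e₂.1, e₂.2} = ∅

/-- Joint well-nestedness of two arc sets: each is well-nested, no arc of one crosses an arc of
the other, and no two *distinct* arcs (one from each set) share an endpoint. -/
def JointlyWellNested {k : ℕ} (C₁ C₂ : Set (Fin k × Fin k)) : Prop :=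
  WellNested C₁ ∧ WellNested C₂ ∧
  (∀ e₁ ∈ C₁, ∀ e₂ ∈ C₂, ¬ ArcsCross e₁ e₂) ∧
  (∀ e₁ ∈ C₁, ∀ e₂ ∈ C₂, e₁ ≠ e₂ →
    ({e₁.1, e₁.2} : Set (Fin k)) ∩ {e₂.1, e₂.2} = ∅)

/-- The block-counting language over the sub-alphabets `σ 0, …, σ (k-1)` with arc set `C`:
all words that decompose as `B₁B₂⋯B_k` with each block `B_i` over `σ i` and with
`|B_i| = |B_j|` for every arc `(i, j) ∈ C`. -/
def blockLang {α : Type} {k : ℕ} (σ : Fin k → Set α) (C : Set (Fin k × Fin k)) : Language α :=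
  { w | ∃ B : Fin k → List α,
      w = (List.ofFn B).flatten ∧
      (∀ i : Fin k, ∀ x ∈ B i, x ∈ σ i) ∧
      (∀ e ∈ C, (B e.1).length = (B e.2).length) }

namespace CFAux
open ContextFreeGrammar
section Grammar
variable {T : Type} {N M : Type}

open ContextFreeGrammar

variable {T : Type} {N M : Type}

/-- Map nonterminals of a symbol. -/
def mapSym (f : N → M) : Symbol T N → Symbol T M
  | .terminal t => .terminal t
  | .nonterminal n => .nonterminal (f n)

lemma mapSym_injective {f : N → M} (hf : Function.Injective f) :
    Function.Injective (mapSym (T := T) f) := by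
  intro a b hab
  cases a <;> cases b <;> simp [mapSym] at hab
  · simp [hab]
  · simp [hf hab]

@[simp] lemma map_mapSym_terminal (f : N → M) (w : List T) :
    (w.map Symbol.terminal).map (mapSym f) = w.map Symbol.terminal := by
  induction w with
  | nil => rfl
  | cons a w ih => simp [mapSym, ih]

/-- Map nonterminals of a rule. -/
def mapRule (f : N → M) (r : ContextFreeRule T N) : ContextFreeRule T M :=
  ⟨f r.input, r.output.map (mapSym f)⟩

lemma mapRule_injective {f : N → M} (hf : Function.Injective f) :
    Function.Injective (mapRule (T := T) f) := by
  intro r s hrs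
  rw [ContextFreeRule.ext_iff] at hrs ⊢
  obtain ⟨h1, h2⟩ := hrs
  exact ⟨hf h1, (List.map_injective_iff.2 (mapSym_injective hf)) h2⟩

lemma Rewrites.mapRule {f : N → M} {r : ContextFreeRule T N} {u v : List (Symbol T N)}
    (h : r.Rewrites u v) :
    (mapRule f r).Rewrites (u.map (mapSym f)) (v.map (mapSym f)) := by
  induction h with
  | head s => simpa [mapSym, CFAux.mapRule] using ContextFreeRule.Rewrites.head _
  | cons x _ ih => exact ContextFreeRule.Rewrites.cons _ ih

/-- A rewrite never applies to an all-terminal string. -/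
lemma not_rewrites_terminal {r : ContextFreeRule T N} {w : List T} {v : List (Symbol T N)}
    (h : r.Rewrites (w.map Symbol.terminal) v) : False := by
  obtain ⟨p, q, hu, -⟩ := h.exists_parts
  have : (Symbol.nonterminal r.input : Symbol T N) ∈ w.map Symbol.terminal := by
    rw [hu]; simp
  simp at this

lemma rewrites_singleton {r : ContextFreeRule T N} {n : N} {v : List (Symbol T N)} :
    r.Rewrites [Symbol.nonterminal n] v ↔ r.input = n ∧ v = r.output := by
  constructor
  · intro h
    obtain ⟨p, q, hu, hv⟩ := h.exists_parts
    have hp : p = [] ∧ [Symbol.nonterminal r.input] ++ q = [Symbol.nonterminal n] := by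
      cases p with
      | nil => simpa using hu.symm
      | cons a p =>
        exfalso
        have := congrArg List.length hu
        simp at this
    obtain ⟨rfl, h2⟩ := hp
    simp at h2
    obtain ⟨h2, rfl⟩ := h2
    cases h2
    simpa using hv
  · rintro ⟨rfl, rfl⟩
    exact ContextFreeRule.Rewrites.input_output

/-- A rewrite of a concatenation happens in one of the two parts. -/
lemma rewrites_append {r : ContextFreeRule T N} {x y v : List (Symbol T N)}
    (h : r.Rewrites (x ++ y) v) :
    (∃ x', r.Rewrites x x' ∧ v = x' ++ y) ∨ (∃ y', r.Rewrites y y' ∧ v = x ++ y') := by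
  obtain ⟨p, q, hu, hv⟩ := h.exists_parts
  rw [List.append_assoc] at hu
  rcases List.append_eq_append_iff.mp hu.symm with ⟨a, hx, ha⟩ | ⟨c, hp, hy⟩
  · -- p = x ++ a? careful: x ++ y = p ++ ([nt] ++ q) gives cases
    cases a with
    | nil =>
      right
      refine ⟨r.output ++ q, ?_, ?_⟩
      · have hy : y = Symbol.nonterminal r.input :: q := by simpa using ha.symm
        rw [hy]
        simpa using ContextFreeRule.rewrites_of_exists_parts r [] q
      · simp at hx; rw [hv, hx]; simp
    | cons s a =>
      left
      have hs : s = Symbol.nonterminal r.input ∧ q = a ++ y := by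
        have := ha.symm
        simp at this
        exact ⟨this.1, this.2.symm⟩
      obtain ⟨rfl, rfl⟩ := hs
      refine ⟨p ++ r.output ++ a, ?_, ?_⟩
      · rw [hx]
        have := ContextFreeRule.rewrites_of_exists_parts r p a
        simpa using this
      · rw [hv]; simp
  · right
    refine ⟨c ++ r.output ++ q, ?_, ?_⟩
    · rw [hy]
      have := ContextFreeRule.rewrites_of_exists_parts r c q
      simpa using this
    · rw [hv, hp]; simp

open ContextFreeGrammar
variable {T : Type} {N M : Type}

lemma input_mem_of_rewrites {r : ContextFreeRule T N} {u v : List (Symbol T N)}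
    (h : r.Rewrites u v) : Symbol.nonterminal r.input ∈ u := by
  obtain ⟨p, q, rfl, -⟩ := h.exists_parts
  simp

/-- If a rewrite applies to an embedded string, its input nonterminal is in the image. -/
lemma input_in_image {f : N → M} {R : ContextFreeRule T M} {u : List (Symbol T N)}
    {v : List (Symbol T M)} (h : R.Rewrites (u.map (mapSym f)) v) :
    ∃ n : N, Symbol.nonterminal n ∈ u ∧ f n = R.input := by
  have := input_mem_of_rewrites h
  rw [List.mem_map] at this
  obtain ⟨s, hs, hmap⟩ := this
  cases s with
  | terminal t => simp [mapSym] at hmap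
  | nonterminal n => exact ⟨n, hs, by simpa [mapSym] using hmap⟩

/-- Inversion of a rewrite by an embedded rule on an embedded string. -/
lemma rewrites_map_inv {f : N → M} (hf : Function.Injective f) {r : ContextFreeRule T N}
    {u : List (Symbol T N)} {v : List (Symbol T M)}
    (h : (mapRule f r).Rewrites (u.map (mapSym f)) v) :
    ∃ v₀, v = v₀.map (mapSym f) ∧ r.Rewrites u v₀ := by
  obtain ⟨p, q, hu, hv⟩ := h.exists_parts
  rw [List.append_assoc] at hu
  rw [List.map_eq_append_iff] at hu
  obtain ⟨u₁, u₂₃, rfl, hp, h23⟩ := hu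
  rw [List.map_eq_append_iff] at h23
  obtain ⟨u₂, u₃, rfl, hmid, hq⟩ := h23
  -- u₂ maps to the singleton [nonterminal (mapRule f r).input]
  cases u₂ with
  | nil => exact absurd (congrArg List.length hmid) (by simp)
  | cons s u₂' =>
    cases u₂' with
    | cons s' u₂'' => exact absurd (congrArg List.length hmid) (by simp)
    | nil =>
      simp at hmid
      cases s with
      | terminal t => simp [mapSym, mapRule] at hmid
      | nonterminal n =>
        have hn : n = r.input := hf (by simpa [mapSym, mapRule] using hmid)
        subst hn
        refine ⟨u₁ ++ r.output ++ u₃, ?_, ?_⟩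
        · rw [hv, ← hp, ← hq]; simp [mapRule]
        · simpa using ContextFreeRule.rewrites_of_exists_parts r u₁ u₃

open ContextFreeGrammar
variable {T : Type} {N M : Type}

lemma derives_invariant {g : ContextFreeGrammar T} (I : List (Symbol T g.NT) → Prop)
    (hstep : ∀ u v, I u → g.Produces u v → I v) {u v : List (Symbol T g.NT)}
    (h : g.Derives u v) (hu : I u) : I v := by
  induction h with
  | refl => exact hu
  | tail _ hp ih => exact hstep _ _ ih hp

/-- Grammar for `{[]}`. -/
@[reducible] def epsGrammar (T : Type) : ContextFreeGrammar T := ⟨Unit, (), {⟨(), []⟩}⟩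

lemma epsGrammar_language : (epsGrammar T).language = 1 := by
  ext w
  rw [mem_language_iff, Language.mem_one]
  constructor
  · intro h
    have := derives_invariant
      (g := epsGrammar T)
      (fun v => v = [Symbol.nonterminal ()] ∨ v = []) ?_ h (Or.inl rfl)
    · rcases this with h1 | h1
      · cases w <;> simp_all
      · simpa using congrArg List.length h1
    · rintro u v (rfl | rfl) ⟨r, hr, hrw⟩
      · rw [rewrites_singleton] at hrw
        simp [epsGrammar] at hr
        subst hr
        exact Or.inr hrw.2
      · exact absurd (input_mem_of_rewrites hrw) (by simp)
  · rintro rfl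
    apply Produces.single
    exact ⟨⟨(), []⟩, by simp [epsGrammar], by simpa using rewrites_singleton.mpr ⟨rfl, rfl⟩⟩

/-- Grammar for all words over a finite alphabet `S`. -/
@[reducible] noncomputable def starGrammar (S : Finset T) : ContextFreeGrammar T :=
  letI := Classical.decEq (ContextFreeRule T Unit)
  ⟨Unit, (), insert ⟨(), []⟩
    (S.image fun a => ⟨(), [Symbol.terminal a, Symbol.nonterminal ()]⟩)⟩

lemma starGrammar_derives (S : Finset T) (w : List T) (hw : ∀ x ∈ w, x ∈ S) :
    (starGrammar S).Derives [Symbol.nonterminal ()]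
      (w.map Symbol.terminal ++ [Symbol.nonterminal ()]) := by
  induction w with
  | nil =>
    simp only [List.map_nil, List.nil_append]
    exact Derives.refl _
  | cons a w ih =>
    have hrw : (⟨(), [Symbol.terminal a, Symbol.nonterminal ()]⟩ :
        ContextFreeRule T Unit).Rewrites
        [Symbol.nonterminal ()] [Symbol.terminal a, Symbol.nonterminal ()] :=
      rewrites_singleton.mpr ⟨rfl, rfl⟩
    have h1 : (starGrammar S).Produces [Symbol.nonterminal ()]
        [Symbol.terminal a, Symbol.nonterminal ()] :=
      ⟨⟨(), [Symbol.terminal a, Symbol.nonterminal ()]⟩,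
        by simp [starGrammar]; exact hw a (by simp), hrw⟩
    refine h1.trans_derives ?_
    have := (ih (fun x hx => hw x (by simp [hx]))).append_left [Symbol.terminal a]
    simpa using this

lemma starGrammar_language (S : Finset T) :
    (starGrammar S).language = {w : List T | ∀ x ∈ w, x ∈ S} := by
  ext w
  rw [mem_language_iff]
  constructor
  · intro h
    have := derives_invariant
      (g := starGrammar S)
      (fun v => (∃ u : List T, v = u.map Symbol.terminal ++ [Symbol.nonterminal ()] ∧ ∀ x ∈ u, x ∈ S)
        ∨ (∃ u : List T, v = u.map Symbol.terminal ∧ ∀ x ∈ u, x ∈ S)) ?_ h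
      (Or.inl ⟨[], by simp [starGrammar], by simp⟩)
    · rcases this with ⟨u, hu, hus⟩ | ⟨u, hu, hus⟩
      · exfalso
        have : (Symbol.nonterminal () : Symbol T Unit) ∈ w.map Symbol.terminal := by
          rw [hu]; simp
        simp at this
      · have : w = u := by
          have := List.map_injective_iff.mpr
            (fun a b h => by injection h : Function.Injective (Symbol.terminal : T → Symbol T Unit)) hu
          exact this
        exact this ▸ hus
    · rintro u v (⟨x, rfl, hx⟩ | ⟨x, rfl, hx⟩) ⟨r, hr, hrw⟩
      · rcases rewrites_append hrw with ⟨x', hx', rfl⟩ | ⟨y', hy', rfl⟩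
        · exact absurd hx' not_rewrites_terminal
        · rw [rewrites_singleton] at hy'
          obtain ⟨hin, rfl⟩ := hy'
          simp [starGrammar] at hr
          rcases hr with rfl | ⟨a, ha, rfl⟩
          · exact Or.inr ⟨x, by simp, hx⟩
          · refine Or.inl ⟨x ++ [a], by simp, ?_⟩
            intro y hy
            rcases List.mem_append.mp hy with h | h
            · exact hx y h
            · simp at h; subst h; exact ha
      · exact absurd hrw not_rewrites_terminal
  · intro hw
    refine (starGrammar_derives S w hw).trans ?_
    have h0 : (starGrammar S).Produces [Symbol.nonterminal ()] [] :=
      ⟨⟨(), []⟩, by simp [starGrammar], by simpa using rewrites_singleton.mpr ⟨rfl, rfl⟩⟩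
    have h1 := h0.append_left (w.map Symbol.terminal)
    simpa using h1.single

open ContextFreeGrammar
variable {T : Type} {N M : Type}

lemma derives_lift {g G : ContextFreeGrammar T} (f : g.NT → G.NT)
    (hf : ∀ r ∈ g.rules, mapRule f r ∈ G.rules) {u v : List (Symbol T g.NT)}
    (h : g.Derives u v) : G.Derives (u.map (mapSym f)) (v.map (mapSym f)) := by
  induction h with
  | refl => exact Derives.refl _
  | tail _ hp ih =>
    obtain ⟨r, hr, hrw⟩ := hp
    exact ih.trans_produces ⟨mapRule f r, hf r hr, Rewrites.mapRule hrw⟩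

lemma map_mapSym_eq_terminal {f : N → M} {x : List (Symbol T N)} {w : List T}
    (h : x.map (mapSym f) = w.map Symbol.terminal) : x = w.map Symbol.terminal := by
  induction x generalizing w with
  | nil => cases w <;> simp_all
  | cons s x ih =>
    cases w with
    | nil => simp at h
    | cons a w =>
      simp at h ⊢
      obtain ⟨h1, h2⟩ := h
      cases s with
      | terminal t => exact ⟨by simpa [mapSym] using h1, ih h2⟩
      | nonterminal n => simp [mapSym] at h1

/-- Grammar for the concatenation of two context-free languages. -/
@[reducible] noncomputable def concatGrammar (g₁ g₂ : ContextFreeGrammar T) : ContextFreeGrammar T :=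
  letI := Classical.decEq (ContextFreeRule T (Option (g₁.NT ⊕ g₂.NT)))
  ⟨Option (g₁.NT ⊕ g₂.NT), none,
    insert ⟨none, [Symbol.nonterminal (some (Sum.inl g₁.initial)),
                   Symbol.nonterminal (some (Sum.inr g₂.initial))]⟩
      ((g₁.rules.image (mapRule (fun n => some (Sum.inl n)))) ∪
       (g₂.rules.image (mapRule (fun n => some (Sum.inr n)))))⟩

lemma concatGrammar_language (g₁ g₂ : ContextFreeGrammar T) :
    (concatGrammar g₁ g₂).language = g₁.language * g₂.language := by
  classical
  set f₁ : g₁.NT → Option (g₁.NT ⊕ g₂.NT) := fun n => some (Sum.inl n) with hf₁def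
  set f₂ : g₂.NT → Option (g₁.NT ⊕ g₂.NT) := fun n => some (Sum.inr n) with hf₂def
  have hinj₁ : Function.Injective f₁ := fun a b h => by simpa [hf₁def] using h
  have hinj₂ : Function.Injective f₂ := fun a b h => by simpa [hf₂def] using h
  have hmem₁ : ∀ r ∈ g₁.rules, mapRule f₁ r ∈ (concatGrammar g₁ g₂).rules := by
    intro r hr
    simp [concatGrammar]
    exact Or.inr (Or.inl ⟨r, hr, rfl⟩)
  have hmem₂ : ∀ r ∈ g₂.rules, mapRule f₂ r ∈ (concatGrammar g₁ g₂).rules := by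
    intro r hr
    simp [concatGrammar]
    exact Or.inr (Or.inr ⟨r, hr, rfl⟩)
  ext w
  rw [mem_language_iff, Language.mem_mul]
  constructor
  · intro h
    have key := derives_invariant
      (g := concatGrammar g₁ g₂)
      (fun v => v = [Symbol.nonterminal none] ∨
        ∃ (x : List (Symbol T g₁.NT)) (y : List (Symbol T g₂.NT)),
          v = x.map (mapSym f₁) ++ y.map (mapSym f₂) ∧
          g₁.Derives [Symbol.nonterminal g₁.initial] x ∧
          g₂.Derives [Symbol.nonterminal g₂.initial] y) ?_ h (Or.inl rfl)
    · rcases key with h1 | ⟨x, y, heq, hx, hy⟩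
      · exfalso
        have : (Symbol.nonterminal none : Symbol T (concatGrammar g₁ g₂).NT)
            ∈ w.map Symbol.terminal := by rw [h1]; simp
        simp at this
      · rw [List.map_eq_append_iff] at heq
        obtain ⟨w₁, w₂, rfl, hw₁, hw₂⟩ := heq
        have hx' : x = w₁.map Symbol.terminal := map_mapSym_eq_terminal hw₁.symm
        have hy' : y = w₂.map Symbol.terminal := map_mapSym_eq_terminal hw₂.symm
        exact ⟨w₁, by rw [mem_language_iff, ← hx']; exact hx,
               w₂, by rw [mem_language_iff, ← hy']; exact hy, rfl⟩
    · rintro u v (rfl | ⟨x, y, rfl, hx, hy⟩) ⟨r, hr, hrw⟩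
      · rw [rewrites_singleton] at hrw
        obtain ⟨hin, rfl⟩ := hrw
        have hr' : r ∈ _ := hr
        simp [concatGrammar] at hr'
        rcases hr' with rfl | ⟨r₀, hr₀, rfl⟩ | ⟨r₀, hr₀, rfl⟩
        · refine Or.inr ⟨[Symbol.nonterminal g₁.initial], [Symbol.nonterminal g₂.initial],
            by simp [mapSym, hf₁def, hf₂def], Derives.refl _, Derives.refl _⟩
        · simp [mapRule, hf₁def] at hin
        · simp [mapRule, hf₂def] at hin
      · have hr' : r ∈ _ := hr
        simp [concatGrammar] at hr'
        rcases rewrites_append hrw with ⟨x', hxr, rfl⟩ | ⟨y', hyr, rfl⟩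
        · obtain ⟨n, hn, hfn⟩ := input_in_image hxr
          rcases hr' with rfl | ⟨r₀, hr₀, rfl⟩ | ⟨r₀, hr₀, rfl⟩
          · simp [hf₁def] at hfn
          · obtain ⟨x₀, rfl, hrw₀⟩ := rewrites_map_inv hinj₁ hxr
            exact Or.inr ⟨x₀, y, rfl, hx.trans_produces ⟨r₀, hr₀, hrw₀⟩, hy⟩
          · exact absurd hfn (by intro hh; injection hh with hh; exact Sum.inl_ne_inr hh)
        · obtain ⟨n, hn, hfn⟩ := input_in_image hyr
          rcases hr' with rfl | ⟨r₀, hr₀, rfl⟩ | ⟨r₀, hr₀, rfl⟩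
          · simp [hf₂def] at hfn
          · exact absurd hfn (by intro hh; injection hh with hh; exact Sum.inr_ne_inl hh)
          · obtain ⟨y₀, rfl, hrw₀⟩ := rewrites_map_inv hinj₂ hyr
            exact Or.inr ⟨x, y₀, rfl, hx, hy.trans_produces ⟨r₀, hr₀, hrw₀⟩⟩
  · rintro ⟨w₁, hw₁, w₂, hw₂, rfl⟩
    rw [mem_language_iff] at hw₁ hw₂
    have step1 : (concatGrammar g₁ g₂).Produces [Symbol.nonterminal none]
        [Symbol.nonterminal (f₁ g₁.initial), Symbol.nonterminal (f₂ g₂.initial)] :=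
      ⟨⟨none, [Symbol.nonterminal (f₁ g₁.initial), Symbol.nonterminal (f₂ g₂.initial)]⟩,
        by simp [concatGrammar, hf₁def, hf₂def],
        rewrites_singleton.mpr ⟨rfl, rfl⟩⟩
    have d₁ := derives_lift (G := concatGrammar g₁ g₂) f₁ hmem₁ hw₁
    have d₂ := derives_lift (G := concatGrammar g₁ g₂) f₂ hmem₂ hw₂
    rw [map_mapSym_terminal] at d₁ d₂
    have d₁' := d₁.append_right [Symbol.nonterminal (f₂ g₂.initial)]
    have d₂' := d₂.append_left (w₁.map Symbol.terminal)
    refine step1.trans_derives ?_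
    have : (concatGrammar g₁ g₂).Derives
        [Symbol.nonterminal (f₁ g₁.initial), Symbol.nonterminal (f₂ g₂.initial)]
        (w₁.map Symbol.terminal ++ [Symbol.nonterminal (f₂ g₂.initial)]) := by
      simpa [mapSym] using d₁'
    refine this.trans ?_
    simpa [mapSym] using d₂'
/-- `wrapLang S T L`: words `u ++ x ++ v` with `|u| = |v|`, `u` over `S`, `v` over `T`, `x ∈ L`. -/
def wrapLang (S Tt : Set T) (L : Language T) : Language T :=
  {w | ∃ (u : List T) (x : List T) (v : List T), w = u ++ x ++ v ∧ u.length = v.length ∧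
    (∀ a ∈ u, a ∈ S) ∧ (∀ b ∈ v, b ∈ Tt) ∧ x ∈ L}

/-- Grammar for `wrapLang`. -/
@[reducible] noncomputable def wrapGrammar (S Tt : Finset T) (g : ContextFreeGrammar T) :
    ContextFreeGrammar T :=
  letI := Classical.decEq (ContextFreeRule T (Option g.NT))
  ⟨Option g.NT, none,
    insert ⟨none, [Symbol.nonterminal (some g.initial)]⟩
      (((S ×ˢ Tt).image fun p =>
          ⟨none, [Symbol.terminal p.1, Symbol.nonterminal none, Symbol.terminal p.2]⟩) ∪
        g.rules.image (mapRule some))⟩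

lemma wrapGrammar_derives (S Tt : Finset T) (g : ContextFreeGrammar T)
    (u v : List T) (hlen : u.length = v.length)
    (hu : ∀ a ∈ u, a ∈ S) (hv : ∀ b ∈ v, b ∈ Tt) :
    (wrapGrammar S Tt g).Derives [Symbol.nonterminal none]
      (u.map Symbol.terminal ++ [Symbol.nonterminal none] ++ v.map Symbol.terminal) := by
  induction u generalizing v with
  | nil =>
    have : v = [] := List.length_eq_zero_iff.mp (by simp at hlen; omega)
    subst this
    simpa using Derives.refl _
  | cons a u ih =>
    rcases List.eq_nil_or_concat v with rfl | ⟨v', b, rfl⟩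
    · simp at hlen
    · have hrw : (⟨none, [Symbol.terminal a, Symbol.nonterminal none, Symbol.terminal b]⟩ :
          ContextFreeRule T (Option g.NT)).Rewrites
          [Symbol.nonterminal none]
          [Symbol.terminal a, Symbol.nonterminal none, Symbol.terminal b] :=
        rewrites_singleton.mpr ⟨rfl, rfl⟩
      have h1 : (wrapGrammar S Tt g).Produces [Symbol.nonterminal none]
          [Symbol.terminal a, Symbol.nonterminal none, Symbol.terminal b] :=
        ⟨_, by
          simp [wrapGrammar]
          exact Or.inl ⟨hu a (by simp), hv b (by simp)⟩, hrw⟩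
      refine h1.trans_derives ?_
      have hlen' : u.length = v'.length := by simp at hlen; omega
      have := ((ih v' hlen' (fun x hx => hu x (by simp [hx]))
        (fun x hx => hv x (by simp [hx]))).append_left
          [Symbol.terminal a]).append_right [Symbol.terminal b]
      simpa using this

lemma wrapGrammar_language (S Tt : Finset T) (g : ContextFreeGrammar T) :
    (wrapGrammar S Tt g).language = wrapLang ↑S ↑Tt g.language := by
  classical
  have hmem : ∀ r ∈ g.rules, mapRule some r ∈ (wrapGrammar S Tt g).rules := by
    intro r hr
    simp [wrapGrammar]
    exact Or.inr (Or.inr ⟨r, hr, rfl⟩)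
  have hinj : Function.Injective (some : g.NT → Option g.NT) := fun a b h => by simpa using h
  ext w
  rw [mem_language_iff]
  constructor
  · intro h
    have key := derives_invariant
      (g := wrapGrammar S Tt g)
      (fun z => (∃ u v : List T, z = u.map Symbol.terminal ++ [Symbol.nonterminal none]
          ++ v.map Symbol.terminal ∧ u.length = v.length ∧
          (∀ a ∈ u, a ∈ S) ∧ (∀ b ∈ v, b ∈ Tt)) ∨
        (∃ (u v : List T) (x : List (Symbol T g.NT)),
          z = u.map Symbol.terminal ++ x.map (mapSym some) ++ v.map Symbol.terminal ∧
          u.length = v.length ∧ (∀ a ∈ u, a ∈ S) ∧ (∀ b ∈ v, b ∈ Tt) ∧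
          g.Derives [Symbol.nonterminal g.initial] x)) ?_ h
      (Or.inl ⟨[], [], by simp [wrapGrammar], by simp, by simp, by simp⟩)
    · rcases key with ⟨u, v, heq, -, -, -⟩ | ⟨u, v, x, heq, hlen, hus, hvs, hx⟩
      · exfalso
        have : (Symbol.nonterminal none : Symbol T (Option g.NT)) ∈ w.map Symbol.terminal := by
          rw [heq]; simp
        simp at this
      · rw [List.append_assoc, List.map_eq_append_iff] at heq
        obtain ⟨w₁, w₂₃, rfl, hw₁, h23⟩ := heq
        rw [List.map_eq_append_iff] at h23
        obtain ⟨w₂, w₃, rfl, hw₂, hw₃⟩ := h23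
        have hterm : Function.Injective (Symbol.terminal : T → Symbol T (Option g.NT)) :=
          fun a b h => by injection h
        have hw₁' : w₁ = u := List.map_injective_iff.mpr hterm hw₁
        have hw₃' : w₃ = v := List.map_injective_iff.mpr hterm hw₃
        have hx' : x = w₂.map Symbol.terminal := map_mapSym_eq_terminal hw₂.symm
        refine ⟨w₁, w₂, w₃, by simp, by rw [hw₁', hw₃']; exact hlen, ?_, ?_, ?_⟩
        · intro a ha; rw [hw₁'] at ha; exact hus a ha
        · intro b hb; rw [hw₃'] at hb; exact hvs b hb
        · rw [mem_language_iff, ← hx']; exact hx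
    · rintro z z' (⟨u, v, rfl, hlen, hus, hvs⟩ | ⟨u, v, x, rfl, hlen, hus, hvs, hx⟩) ⟨r, hr, hrw⟩
      · rw [List.append_assoc] at hrw
        rcases rewrites_append hrw with ⟨x', hxr, rfl⟩ | ⟨y', hyr, rfl⟩
        · exact absurd hxr not_rewrites_terminal
        · rcases rewrites_append hyr with ⟨m', hmr, rfl⟩ | ⟨t', htr, rfl⟩
          swap
          · exact absurd htr not_rewrites_terminal
          · rw [rewrites_singleton] at hmr
            obtain ⟨hin, rfl⟩ := hmr
            have hr' : r ∈ _ := hr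
            simp [wrapGrammar] at hr'
            rcases hr' with rfl | ⟨a, b, ⟨haS, hbT⟩, rfl⟩ | ⟨r₀, hr₀, rfl⟩
            · refine Or.inr ⟨u, v, [Symbol.nonterminal g.initial],
                by simp [mapSym], hlen, hus, hvs, Derives.refl _⟩
            · refine Or.inl ⟨u ++ [a], b :: v, by simp, by simp; omega, ?_, ?_⟩
              · intro z hz
                rcases List.mem_append.mp hz with h' | h'
                · exact hus z h'
                · simp at h'; subst h'; exact haS
              · intro z hz
                rcases List.mem_cons.mp hz with h' | h'
                · subst h'; exact hbT
                · exact hvs z h'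
            · exact absurd hin (by simp [mapRule])
      · rw [List.append_assoc] at hrw
        rcases rewrites_append hrw with ⟨x', hxr, rfl⟩ | ⟨y', hyr, rfl⟩
        · exact absurd hxr not_rewrites_terminal
        · rcases rewrites_append hyr with ⟨m', hmr, rfl⟩ | ⟨t', htr, rfl⟩
          swap
          · exact absurd htr not_rewrites_terminal
          · obtain ⟨n, hn, hfn⟩ := input_in_image hmr
            have hr' : r ∈ _ := hr
            simp [wrapGrammar] at hr'
            rcases hr' with rfl | ⟨a, b, ⟨haS, hbT⟩, rfl⟩ | ⟨r₀, hr₀, rfl⟩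
            · simp at hfn
            · simp at hfn
            · obtain ⟨x₀, rfl, hrw₀⟩ := rewrites_map_inv hinj hmr
              exact Or.inr ⟨u, v, x₀, by simp, hlen, hus, hvs,
                hx.trans_produces ⟨r₀, hr₀, hrw₀⟩⟩
  · rintro ⟨u, x, v, rfl, hlen, hus, hvs, hxL⟩
    rw [mem_language_iff] at hxL
    have d1 := wrapGrammar_derives S Tt g u v hlen hus hvs
    have hinit : (wrapGrammar S Tt g).Produces [Symbol.nonterminal none]
        [Symbol.nonterminal (some g.initial)] :=
      ⟨⟨none, [Symbol.nonterminal (some g.initial)]⟩, by simp [wrapGrammar],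
        rewrites_singleton.mpr ⟨rfl, rfl⟩⟩
    have d2 := derives_lift (G := wrapGrammar S Tt g) some hmem hxL
    rw [map_mapSym_terminal] at d2
    have d2' : (wrapGrammar S Tt g).Derives [Symbol.nonterminal none]
        (x.map Symbol.terminal) := by
      refine hinit.trans_derives ?_
      simpa [mapSym] using d2
    refine d1.trans ?_
    have := ((d2'.append_left (u.map Symbol.terminal)).append_right (v.map Symbol.terminal))
    simpa using this

/-- Context-free: empty word language. -/
lemma cf_one : (1 : Language T).IsContextFree := ⟨epsGrammar T, epsGrammar_language⟩

/-- All words over an alphabet, as a language. -/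
def starL (S : Set T) : Language T := {w | ∀ x ∈ w, x ∈ S}

/-- Context-free: all words over a finite alphabet. -/
lemma cf_star {S : Set T} (hS : S.Finite) : (starL S).IsContextFree := by
  refine ⟨starGrammar hS.toFinset, ?_⟩
  rw [starGrammar_language]
  ext w
  simp [starL]

/-- Context-free languages are closed under concatenation. -/
lemma cf_mul {L₁ L₂ : Language T} (h₁ : L₁.IsContextFree) (h₂ : L₂.IsContextFree) :
    (L₁ * L₂).IsContextFree := by
  obtain ⟨g₁, rfl⟩ := h₁
  obtain ⟨g₂, rfl⟩ := h₂
  exact ⟨concatGrammar g₁ g₂, concatGrammar_language g₁ g₂⟩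

/-- Context-free languages are closed under wrapping with equal-length flanks. -/
lemma cf_wrap {S Tt : Set T} (hS : S.Finite) (hT : Tt.Finite) {L : Language T}
    (hL : L.IsContextFree) : (wrapLang S Tt L).IsContextFree := by
  obtain ⟨g, rfl⟩ := hL
  refine ⟨wrapGrammar hS.toFinset hT.toFinset g, ?_⟩
  rw [wrapGrammar_language]
  ext w
  simp [wrapLang]

end Grammar

section Comb
variable {α : Type} {k : ℕ}

/-- Block language restricted to a list of block indices. -/
def BL (σ : Fin k → Set α) (C : Set (Fin k × Fin k)) (l : List (Fin k)) : Language α :=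
  { w | ∃ B : Fin k → List α, w = (l.map B).flatten ∧ (∀ i ∈ l, ∀ x ∈ B i, x ∈ σ i) ∧
      ∀ e ∈ C, e.1 ∈ l → e.2 ∈ l → (B e.1).length = (B e.2).length }

variable {σ : Fin k → Set α} {C : Set (Fin k × Fin k)}

lemma BL_nil : BL σ C [] = 1 := by
  ext w
  simp only [BL, Language.mem_one, Set.mem_setOf_eq]
  constructor
  · rintro ⟨B, rfl, -, -⟩; simp
  · rintro rfl; exact ⟨fun _ => [], by simp, by simp, by simp⟩

lemma BL_cons_unmatched (hC : IsArcSet C) {i : Fin k} {l : List (Fin k)}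
    (hsort : (i :: l).Pairwise (· < ·))
    (hun : ∀ j ∈ l, (i, j) ∉ C) :
    BL σ C (i :: l) = starL (σ i) * BL σ C l := by
  classical
  rw [List.pairwise_cons] at hsort
  obtain ⟨hil, hsort'⟩ := hsort
  have hinot : i ∉ l := fun h => lt_irrefl i (hil i h)
  ext w
  rw [Language.mem_mul]
  constructor
  · rintro ⟨B, rfl, hσ, harcs⟩
    exact ⟨B i, fun x hx => hσ i (by simp) x hx, (l.map B).flatten,
      ⟨B, rfl, fun t ht => hσ t (by simp [ht]),
        fun e he h1 h2 => harcs e he (by simp [h1]) (by simp [h2])⟩, by simp⟩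
  · rintro ⟨u, hu, y, ⟨B, rfl, hσ, harcs⟩, rfl⟩
    set B' : Fin k → List α := fun t => if t = i then u else B t with hB'
    have hBi : B' i = u := by simp [hB']
    have hBl : ∀ t ∈ l, B' t = B t := by
      intro t ht
      simp only [hB']
      rw [if_neg (by rintro rfl; exact hinot ht)]
    refine ⟨B', ?_, ?_, ?_⟩
    · simp [List.map_congr_left hBl, hBi]
    · intro t ht x hx
      rcases List.mem_cons.mp ht with rfl | ht'
      · rw [hBi] at hx; exact hu x hx
      · rw [hBl t ht'] at hx
        exact hσ t ht' x hx
    · intro e he h1 h2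
      rcases List.mem_cons.mp h1 with he1 | he1
      · rcases List.mem_cons.mp h2 with he2 | he2
        · exfalso
          have := hC e he
          rw [he1, he2] at this
          exact lt_irrefl i this
        · exfalso
          refine hun e.2 he2 ?_
          rw [← he1]
          simpa using he
      · rcases List.mem_cons.mp h2 with he2 | he2
        · exfalso
          have := hC e he
          rw [he2] at this
          exact absurd this (not_lt.mpr (le_of_lt (hil e.1 he1)))
        · rw [hBl _ he1, hBl _ he2]
          exact harcs e he he1 he2

lemma BL_cons_matched (hC : IsArcSet C) (hwn : WellNested C) (hm : IsMatching C)
    {i j : Fin k} {m r : List (Fin k)}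
    (hsort : (i :: (m ++ j :: r)).Pairwise (· < ·)) (hij : (i, j) ∈ C) :
    BL σ C (i :: (m ++ j :: r)) = wrapLang (σ i) (σ j) (BL σ C m) * BL σ C r := by
  classical
  rw [List.pairwise_cons] at hsort
  obtain ⟨hi, hsort'⟩ := hsort
  rw [List.pairwise_append] at hsort'
  obtain ⟨hsm, hsjr, hmjr⟩ := hsort'
  rw [List.pairwise_cons] at hsjr
  obtain ⟨hjrlt, hsr⟩ := hsjr
  have him : ∀ t ∈ m, i < t := fun t ht => hi t (by simp [ht])
  have hmj : ∀ t ∈ m, t < j := fun t ht => hmjr t ht j (by simp)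
  have hilj : i < j := hi j (by simp)
  have hinm : i ∉ m := fun h => lt_irrefl i (him i h)
  have hinr : i ∉ r := fun h => lt_irrefl i (hilj.trans (hjrlt i h))
  have hjnm : j ∉ m := fun h => lt_irrefl j (hmj j h)
  have hjnr : j ∉ r := fun h => lt_irrefl j (hjrlt j h)
  have hrnm : ∀ t ∈ r, t ∉ m := fun t ht hm' => lt_irrefl t ((hmj t hm').trans (hjrlt t ht))
  have hshare : ∀ e ∈ C, (e.1 = i ∨ e.1 = j ∨ e.2 = i ∨ e.2 = j) → e = (i, j) := by
    intro e he hcase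
    by_contra hne
    have hdisj := hm e he (i, j) hij hne
    rw [Set.eq_empty_iff_forall_notMem] at hdisj
    rcases hcase with h | h | h | h
    · exact hdisj e.1 ⟨by simp, by simp [h]⟩
    · exact hdisj e.1 ⟨by simp, by simp [h]⟩
    · exact hdisj e.2 ⟨by simp, by simp [h]⟩
    · exact hdisj e.2 ⟨by simp, by simp [h]⟩
  ext w
  rw [Language.mem_mul]
  constructor
  · rintro ⟨B, rfl, hσ, harcs⟩
    refine ⟨B i ++ (m.map B).flatten ++ B j,
      ⟨B i, (m.map B).flatten, B j, rfl,
        harcs (i, j) hij (by simp) (by simp),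
        fun x hx => hσ i (by simp) x hx, fun x hx => hσ j (by simp) x hx,
        ⟨B, rfl, fun t ht => hσ t (by simp [ht]),
          fun e he h1 h2 => harcs e he (by simp [h1]) (by simp [h2])⟩⟩,
      (r.map B).flatten,
      ⟨B, rfl, fun t ht => hσ t (by simp [ht]),
        fun e he h1 h2 => harcs e he (by simp [h1]) (by simp [h2])⟩,
      by simp⟩
  · rintro ⟨w₁, ⟨u, x, v, rfl, hlen, huσ, hvσ, ⟨B₁, rfl, hσ₁, harcs₁⟩⟩,
      w₂, ⟨B₂, rfl, hσ₂, harcs₂⟩, rfl⟩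
    set B' : Fin k → List α :=
      fun t => if t = i then u else if t = j then v else if t ∈ m then B₁ t else B₂ t with hB'
    have hBi : B' i = u := by simp [hB']
    have hBj : B' j = v := by
      simp only [hB']
      rw [if_neg (show j ≠ i from ne_of_gt hilj)]
      simp
    have hBm : ∀ t ∈ m, B' t = B₁ t := by
      intro t ht
      simp only [hB']
      rw [if_neg (ne_of_gt (him t ht)), if_neg (ne_of_lt (hmj t ht))]
      simp [ht]
    have hBr : ∀ t ∈ r, B' t = B₂ t := by
      intro t ht
      simp only [hB']
      rw [if_neg (ne_of_gt (hilj.trans (hjrlt t ht))), if_neg (ne_of_gt (hjrlt t ht)),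
        if_neg (hrnm t ht)]
    refine ⟨B', ?_, ?_, ?_⟩
    · simp [List.map_congr_left hBm, List.map_congr_left hBr, hBi, hBj]
    · intro t ht x hx
      rcases List.mem_cons.mp ht with rfl | ht'
      · rw [hBi] at hx; exact huσ x hx
      rcases List.mem_append.mp ht' with htm | htjr
      · rw [hBm t htm] at hx; exact hσ₁ t htm x hx
      rcases List.mem_cons.mp htjr with rfl | htr
      · rw [hBj] at hx; exact hvσ x hx
      · rw [hBr t htr] at hx; exact hσ₂ t htr x hx
    · intro e he h1 h2
      by_cases heij : e = (i, j)
      · subst heij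
        simp only [hBi, hBj]
        exact hlen
      have hne1i : e.1 ≠ i := fun h => heij (hshare e he (Or.inl h))
      have hne1j : e.1 ≠ j := fun h => heij (hshare e he (Or.inr (Or.inl h)))
      have hne2i : e.2 ≠ i := fun h => heij (hshare e he (Or.inr (Or.inr (Or.inl h))))
      have hne2j : e.2 ≠ j := fun h => heij (hshare e he (Or.inr (Or.inr (Or.inr h))))
      have h1' : e.1 ∈ m ∨ e.1 ∈ r := by
        rcases List.mem_cons.mp h1 with h | h
        · exact absurd h hne1i
        rcases List.mem_append.mp h with h | h
        · exact Or.inl h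
        rcases List.mem_cons.mp h with h | h
        · exact absurd h hne1j
        · exact Or.inr h
      have h2' : e.2 ∈ m ∨ e.2 ∈ r := by
        rcases List.mem_cons.mp h2 with h | h
        · exact absurd h hne2i
        rcases List.mem_append.mp h with h | h
        · exact Or.inl h
        rcases List.mem_cons.mp h with h | h
        · exact absurd h hne2j
        · exact Or.inr h
      rcases h1' with h1m | h1r
      · rcases h2' with h2m | h2r
        · rw [hBm _ h1m, hBm _ h2m]
          exact harcs₁ e he h1m h2m
        · exfalso
          exact hwn (i, j) hij e he
            (Or.inl ⟨him e.1 h1m, hmj e.1 h1m, hjrlt e.2 h2r⟩)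
      · rcases h2' with h2m | h2r
        · exfalso
          exact absurd (hC e he)
            (not_lt.mpr (le_of_lt ((hmj e.2 h2m).trans (hjrlt e.1 h1r))))
        · rw [hBr _ h1r, hBr _ h2r]
          exact harcs₂ e he h1r h2r

lemma BL_contextFree (hfin : ∀ i : Fin k, (σ i).Finite)
    (hC : IsArcSet C) (hwn : WellNested C) (hm : IsMatching C) :
    ∀ (n : ℕ) (l : List (Fin k)), l.length ≤ n → l.Pairwise (· < ·) →
      (BL σ C l).IsContextFree := by
  intro n
  induction n with
  | zero =>
    intro l hlen _
    have : l = [] := List.length_eq_zero_iff.mp (by omega)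
    subst this
    rw [BL_nil]
    exact cf_one
  | succ n ih =>
    intro l hlen hsort
    match l with
    | [] => rw [BL_nil]; exact cf_one
    | i :: l' =>
      rw [List.pairwise_cons] at hsort
      obtain ⟨hil, hsort'⟩ := hsort
      by_cases hmatch : ∃ j ∈ l', (i, j) ∈ C
      · obtain ⟨j, hj, hij⟩ := hmatch
        obtain ⟨m, r, rfl⟩ := List.append_of_mem hj
        have hm' : List.Pairwise (· < ·) m ∧ List.Pairwise (· < ·) r := by
          rw [List.pairwise_append] at hsort'
          exact ⟨hsort'.1, (List.pairwise_cons.mp hsort'.2.1).2⟩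
        rw [BL_cons_matched hC hwn hm (by rw [List.pairwise_cons]; exact ⟨hil, hsort'⟩) hij]
        have hlm : m.length ≤ n := by simp at hlen; omega
        have hlr : r.length ≤ n := by simp at hlen; omega
        exact cf_mul (cf_wrap (hfin i) (hfin j) (ih m hlm hm'.1)) (ih r hlr hm'.2)
      · push_neg at hmatch
        rw [BL_cons_unmatched hC (by rw [List.pairwise_cons]; exact ⟨hil, hsort'⟩) hmatch]
        have hll : l'.length ≤ n := by simp at hlen; omega
        exact cf_mul (cf_star (hfin i)) (ih l' hll hsort')

end Comb
end CFAux

section Glue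
open CFAux
variable {α : Type} {k : ℕ}

lemma blockLang_eq_BL (σ : Fin k → Set α) (C : Set (Fin k × Fin k)) :
    blockLang σ C = BL σ C (List.finRange k) := by
  ext w
  simp only [blockLang, BL, Set.mem_setOf_eq, List.ofFn_eq_map]
  constructor
  · rintro ⟨B, rfl, h1, h2⟩
    exact ⟨B, rfl, fun i _ => h1 i, fun e he _ _ => h2 e he⟩
  · rintro ⟨B, rfl, h1, h2⟩
    exact ⟨B, rfl, fun i => h1 i (List.mem_finRange i),
      fun e he => h2 e he (List.mem_finRange _) (List.mem_finRange _)⟩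

lemma blockLang_contextFree (σ : Fin k → Set α) (hfin : ∀ i : Fin k, (σ i).Finite)
    (C : Set (Fin k × Fin k)) (hC : IsArcSet C) (hwn : WellNested C) (hm : IsMatching C) :
    (blockLang σ C).IsContextFree := by
  rw [blockLang_eq_BL]
  exact BL_contextFree hfin hC hwn hm (List.finRange k).length (List.finRange k) le_rfl
    (List.pairwise_lt_finRange k)

lemma flatten_ofFn_single {α : Type} : ∀ {k : ℕ} (g : Fin k → List α) (i : Fin k),
    (∀ j, j ≠ i → g j = []) → (List.ofFn g).flatten = g i := by
  intro k
  induction k with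
  | zero => intro g i; exact i.elim0
  | succ n ih =>
    intro g i hg
    rw [List.ofFn_succ]
    cases i using Fin.cases with
    | zero =>
      have htail : (List.ofFn fun j : Fin n => g j.succ).flatten = [] :=
        List.flatten_eq_nil_iff.mpr (by
          intro l hl
          rw [List.mem_ofFn] at hl
          obtain ⟨j, rfl⟩ := hl
          exact hg j.succ (Fin.succ_ne_zero j))
      simp [htail]
    | succ i' =>
      have h0 : g 0 = [] := hg 0 (Ne.symm (Fin.succ_ne_zero i'))
      have := ih (fun j => g j.succ) i' (fun j hj => hg j.succ (by
        intro hcon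
        exact hj (by simpa using hcon)))
      simp [h0, this]

/-- Uniqueness of the block decomposition for pairwise disjoint alphabets. -/
lemma block_decomp_unique (σ : Fin k → Set α)
    (hdisj : ∀ i j : Fin k, i ≠ j → Disjoint (σ i) (σ j))
    {B B' : Fin k → List α}
    (hB : ∀ i : Fin k, ∀ x ∈ B i, x ∈ σ i) (hB' : ∀ i : Fin k, ∀ x ∈ B' i, x ∈ σ i)
    (h : (List.ofFn B).flatten = (List.ofFn B').flatten) : ∀ i, B i = B' i := by
  classical
  intro i
  have key : ∀ (D : Fin k → List α), (∀ t : Fin k, ∀ x ∈ D t, x ∈ σ t) →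
      (List.ofFn D).flatten.filter (fun x => decide (x ∈ σ i)) = D i := by
    intro D hD
    rw [List.filter_flatten, List.map_ofFn]
    rw [flatten_ofFn_single (List.filter (fun x => decide (x ∈ σ i)) ∘ D) i ?_]
    · exact List.filter_eq_self.mpr (fun x hx => by simpa using hD i x hx)
    · intro j hj
      apply List.filter_eq_nil_iff.mpr
      intro x hx
      simp only [decide_eq_true_eq]
      exact fun hxi => Set.disjoint_left.mp (hdisj j i hj) (hD j x hx) hxi
  rw [← key B hB, ← key B' hB', h]

lemma blockLang_inter (σ : Fin k → Set α)
    (hdisj : ∀ i j : Fin k, i ≠ j → Disjoint (σ i) (σ j))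
    (C₁ C₂ : Set (Fin k × Fin k)) :
    blockLang σ C₁ ⊓ blockLang σ C₂ = blockLang σ (C₁ ∪ C₂) := by
  ext w
  constructor
  · rintro ⟨⟨B, rfl, h1, h2⟩, ⟨B', heq, h1', h2'⟩⟩
    have huniq := block_decomp_unique σ hdisj h1 h1' heq
    refine ⟨B, rfl, h1, ?_⟩
    rintro e (he | he)
    · exact h2 e he
    · rw [huniq e.1, huniq e.2]; exact h2' e he
  · rintro ⟨B, rfl, h1, h2⟩
    exact ⟨⟨B, rfl, h1, fun e he => h2 e (Or.inl he)⟩,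
           ⟨B, rfl, h1, fun e he => h2 e (Or.inr he)⟩⟩

lemma arcsCross_symm {e₁ e₂ : Fin k × Fin k} (h : ArcsCross e₁ e₂) : ArcsCross e₂ e₁ := by
  rcases h with h | h
  · exact Or.inr h
  · exact Or.inl h

end Glue

/-- If `C₁, C₂` are well-nested matchings that are jointly well-nested, then the intersection
of the corresponding block-counting languages is context-free. -/
theorem blockLang_inter_contextFree_of_jointlyWellNested {α : Type} {k : ℕ}
    (σ : Fin k → Set α)
    (hdisj : ∀ i j : Fin k, i ≠ j → Disjoint (σ i) (σ j))
    (hfin : ∀ i : Fin k, (σ i).Finite) (hne : ∀ i : Fin k, (σ i).Nonempty)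
    (C₁ C₂ : Set (Fin k × Fin k))
    (hC₁ : IsArcSet C₁) (hC₂ : IsArcSet C₂)
    (hwn₁ : WellNested C₁) (hwn₂ : WellNested C₂)
    (hm₁ : IsMatching C₁) (hm₂ : IsMatching C₂)
    (hjwn : JointlyWellNested C₁ C₂) :
    (blockLang σ C₁ ⊓ blockLang σ C₂).IsContextFree := by
  rw [blockLang_inter σ hdisj C₁ C₂]
  obtain ⟨hw1, hw2, hcross, hshare⟩ := hjwn
  apply blockLang_contextFree σ hfin
  · rintro e (he | he)
    · exact hC₁ e he
    · exact hC₂ e he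
  · rintro e₁ (h1 | h1) e₂ (h2 | h2)
    · exact hwn₁ e₁ h1 e₂ h2
    · exact hcross e₁ h1 e₂ h2
    · intro hc; exact hcross e₂ h2 e₁ h1 (arcsCross_symm hc)
    · exact hwn₂ e₁ h1 e₂ h2
  · rintro e₁ (h1 | h1) e₂ (h2 | h2) hne
    · exact hm₁ e₁ h1 e₂ h2 hne
    · exact hshare e₁ h1 e₂ h2 hne
    · rw [Set.inter_comm]; exact hshare e₂ h2 e₁ h1 (Ne.symm hne)
    · exact hm₂ e₁ h1 e₂ h2 hne
end

section
/- Fix a natural number k, a type α, and pairwise disjoint, finite, nonempty sub-alphabets σ₁, …, σ_k ⊆ α. Let C₁ and C₂ be arc sets on {1, …, k} that are well-nested matchings. If there exist arcs (i, j) ∈ C₁ and (i', j') ∈ C₂ that cross, i.e., with i < i' < j < j' or i' < i < j' < j, then the intersection L(C₁) ∩ L(C₂) of the corresponding block-counting languages is not context-free. -/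
namespace CFPump


variable {T : Type} {N : Type}

/-- Forests of parse trees: `consN n cs f` is a node labeled `n` with children
forest `cs`, followed by the rest of the forest `f`. -/
inductive PTF (T : Type) (N : Type) : Type
  | nil : PTF T N
  | consT : T → PTF T N → PTF T N
  | consN : N → PTF T N → PTF T N → PTF T N

namespace PTF

def yield : PTF T N → List T
  | .nil => []
  | .consT t f => t :: f.yield
  | .consN _ cs f => cs.yield ++ f.yield

def syms : PTF T N → List (Symbol T N)
  | .nil => []
  | .consT t f => Symbol.terminal t :: f.syms
  | .consN n _ f => Symbol.nonterminal n :: f.syms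

def size : PTF T N → ℕ
  | .nil => 0
  | .consT _ f => f.size + 1
  | .consN _ cs f => cs.size + 1 + f.size

def height : PTF T N → ℕ
  | .nil => 0
  | .consT _ f => max 1 f.height
  | .consN _ cs f => max (cs.height + 1) f.height

def append : PTF T N → PTF T N → PTF T N
  | .nil, f₂ => f₂
  | .consT t f, f₂ => .consT t (f.append f₂)
  | .consN n cs f, f₂ => .consN n cs (f.append f₂)

@[simp] lemma append_nil (f : PTF T N) : f.append .nil = f := by
  induction f with
  | nil => rfl
  | consT t f ih => simp [append, ih]
  | consN n cs f ihcs ihf => simp [append, ihf]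

@[simp] lemma syms_append (f₁ f₂ : PTF T N) :
    (f₁.append f₂).syms = f₁.syms ++ f₂.syms := by
  induction f₁ with
  | nil => rfl
  | consT t f ih => simp [append, syms, ih]
  | consN n cs f ihcs ihf => simp [append, syms, ihf]

@[simp] lemma yield_append (f₁ f₂ : PTF T N) :
    (f₁.append f₂).yield = f₁.yield ++ f₂.yield := by
  induction f₁ with
  | nil => rfl
  | consT t f ih => simp [append, yield, ih]
  | consN n cs f ihcs ihf => simp [append, yield, ihf]

@[simp] lemma size_append (f₁ f₂ : PTF T N) :
    (f₁.append f₂).size = f₁.size + f₂.size := by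
  induction f₁ with
  | nil => simp [append, size]
  | consT t f ih => simp [append, size, ih]; omega
  | consN n cs f ihcs ihf => simp [append, size, ihf]; omega

@[simp] lemma height_append (f₁ f₂ : PTF T N) :
    (f₁.append f₂).height = max f₁.height f₂.height := by
  induction f₁ with
  | nil => simp [append, height]
  | consT t f ih => simp [append, height, ih]
  | consN n cs f ihcs ihf => simp [append, height, ihf]

end PTF

/-- Well-formedness of a forest w.r.t. a grammar. -/
inductive WfF (g : ContextFreeGrammar.{0} T) : PTF T g.NT → Prop
  | nil : WfF g .nil
  | consT {t : T} {f : PTF T g.NT} : WfF g f → WfF g (.consT t f)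
  | consN {n : g.NT} {cs f : PTF T g.NT} (r : ContextFreeRule T g.NT)
      (hr : r ∈ g.rules) (hin : r.input = n) (hout : r.output = cs.syms)
      (hcs : WfF g cs) (hf : WfF g f) : WfF g (.consN n cs f)

variable {g : ContextFreeGrammar.{0} T}

lemma WfF.append {f₁ f₂ : PTF T g.NT} (h₁ : WfF g f₁) (h₂ : WfF g f₂) :
    WfF g (f₁.append f₂) := by
  induction h₁ with
  | nil => exact h₂
  | consT _ ih => exact WfF.consT ih
  | consN r hr hin hout hcs _ ihcs ihf => exact WfF.consN r hr hin hout hcs ihf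

lemma WfF.of_append {f₁ f₂ : PTF T g.NT} (h : WfF g (f₁.append f₂)) :
    WfF g f₁ ∧ WfF g f₂ := by
  induction f₁ with
  | nil => exact ⟨WfF.nil, h⟩
  | consT t f ih =>
    cases h with
    | consT h => exact ⟨WfF.consT (ih h).1, (ih h).2⟩
  | consN n cs f ihcs ihf =>
    cases h with
    | consN r hr hin hout hcs hf =>
      exact ⟨WfF.consN r hr hin hout hcs (ihf hf).1, (ihf hf).2⟩

open ContextFreeGrammar
variable {T : Type} {g : ContextFreeGrammar.{0} T}

/-- A well-formed forest's symbols derive its yield. -/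
lemma WfF.derives {f : PTF T g.NT} (h : WfF g f) :
    g.Derives f.syms (f.yield.map Symbol.terminal) := by
  induction h with
  | nil => exact Derives.refl _
  | consT hf ih =>
    rename_i t f
    show g.Derives ([Symbol.terminal t] ++ f.syms)
      ([Symbol.terminal t] ++ f.yield.map Symbol.terminal)
    exact ih.append_left _
  | consN r hr hin hout hcs hf ihcs ihf =>
    rename_i n cs f
    have goal_eq : (PTF.consN n cs f).syms = [Symbol.nonterminal n] ++ f.syms := rfl
    rw [goal_eq, show (PTF.consN n cs f).yield.map Symbol.terminal
      = cs.yield.map Symbol.terminal ++ f.yield.map Symbol.terminal by simp [PTF.yield]]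
    have h1 : g.Produces ([Symbol.nonterminal n] ++ f.syms) (cs.syms ++ f.syms) := by
      refine ⟨r, hr, ?_⟩
      rw [← hin, ← hout]
      exact (ContextFreeRule.Rewrites.input_output).append_right _
    exact h1.trans_derives ((ihcs.append_right _).trans (ihf.append_left _))

lemma WfF.derives_node {n : g.NT} {cs : PTF T g.NT}
    (h : WfF g (.consN n cs .nil)) :
    g.Derives [Symbol.nonterminal n] (cs.yield.map Symbol.terminal) := by
  have := h.derives
  simpa [PTF.syms, PTF.yield] using this

/-- Forest of a pure list of terminals. -/
def PTF.ofWord {N' : Type} : List T → PTF T N'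
  | [] => .nil
  | t :: w => .consT t (ofWord w)

lemma PTF.ofWord_spec (w : List T) :
    (PTF.ofWord (N' := g.NT) w).syms = w.map Symbol.terminal ∧
    (PTF.ofWord (N' := g.NT) w).yield = w ∧ WfF g (PTF.ofWord w) := by
  induction w with
  | nil => exact ⟨rfl, rfl, WfF.nil⟩
  | cons t w ih => exact ⟨by simp [ofWord, syms, ih.1], by simp [ofWord, yield, ih.2.1],
      WfF.consT ih.2.2⟩

/-- Split a forest along a split of its symbol string. -/
lemma PTF.split {N' : Type} {x : List (Symbol T N')} :
    ∀ {f : PTF T N'} {y : List (Symbol T N')}, f.syms = x ++ y →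
    ∃ (f₁ f₂ : PTF T N'), f = f₁.append f₂ ∧ f₁.syms = x ∧ f₂.syms = y := by
  induction x with
  | nil => exact fun {f y} h => ⟨.nil, f, rfl, rfl, h⟩
  | cons s x ih =>
    intro f y h
    cases f with
    | nil => simp [syms] at h
    | consT t f =>
      simp only [syms, List.cons_append, List.cons.injEq] at h
      obtain ⟨f₁, f₂, rfl, h1, h2⟩ := ih h.2
      exact ⟨.consT t f₁, f₂, rfl, by simp [syms, h1, ← h.1], h2⟩
    | consN n cs f =>
      simp only [syms, List.cons_append, List.cons.injEq] at h
      obtain ⟨f₁, f₂, rfl, h1, h2⟩ := ih h.2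
      exact ⟨.consN n cs f₁, f₂, rfl, by simp [syms, h1, ← h.1], h2⟩

/-- From a derivation to a terminal word, get a well-formed forest. -/
lemma forest_of_derives {s : List (Symbol T g.NT)} {w : List T}
    (h : g.Derives s (w.map Symbol.terminal)) :
    ∃ f : PTF T g.NT, WfF g f ∧ f.syms = s ∧ f.yield = w := by
  induction h using Relation.ReflTransGen.head_induction_on with
  | refl =>
    obtain ⟨h1, h2, h3⟩ := PTF.ofWord_spec (g := g) w
    exact ⟨_, h3, h1, h2⟩
  | head hp _ ih =>
    obtain ⟨f', hwf, hsyms, hyield⟩ := ih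
    obtain ⟨r, hr, hrw⟩ := hp
    obtain ⟨p, q, hu, hv⟩ := hrw.exists_parts
    subst hu hv
    obtain ⟨f₁, frest, rfl, hs1, hs2⟩ := PTF.split (x := p) (y := r.output ++ q) (by rw [hsyms, List.append_assoc])
    obtain ⟨fm, f₂, rfl, hsm, hsq⟩ := PTF.split (x := r.output) (y := q) hs2
    obtain ⟨hw1, hwrest⟩ := hwf.of_append
    obtain ⟨hwm, hw2⟩ := hwrest.of_append
    refine ⟨f₁.append (.consN r.input fm f₂), ?_, ?_, ?_⟩
    · exact hw1.append (WfF.consN r hr rfl hsm.symm hwm hw2)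
    · simp [PTF.syms, hs1, hsq, List.append_assoc]
    · simp only [PTF.yield_append] at hyield ⊢
      simpa [PTF.yield] using hyield

/-- From a word in the language, get a well-formed parse tree (node with the initial
nonterminal). -/
lemma tree_of_mem_language {w : List T} (h : w ∈ g.language) :
    ∃ cs : PTF T g.NT, WfF g (.consN g.initial cs .nil) ∧ cs.yield = w := by
  obtain ⟨f, hwf, hsyms, hyield⟩ := forest_of_derives h
  cases f with
  | nil => simp [PTF.syms] at hsyms
  | consT t f => simp [PTF.syms] at hsyms
  | consN n cs f =>
    simp only [PTF.syms, List.cons.injEq] at hsyms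
    obtain ⟨hn, hf⟩ := hsyms
    cases f with
    | nil =>
      cases hwf with
      | consN r hr hin hout hcs hfw =>
        have hn' : n = g.initial := by
          injection hn
        subst hn'
        exact ⟨cs, WfF.consN r hr hin hout hcs WfF.nil, by simpa [PTF.yield] using hyield⟩
    | consT t f => simp [PTF.syms] at hf
    | consN n' cs' f => simp [PTF.syms] at hf

section Pumping
open ContextFreeGrammar
variable {T : Type} {g : ContextFreeGrammar.{0} T}

/-- Max rule output length (at least 1). -/
noncomputable def m0 (g : ContextFreeGrammar.{0} T) : ℕ :=
  max (g.rules.sup fun r => r.output.length) 1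

lemma one_le_m0 : 1 ≤ m0 g := le_max_right _ _

/-- The set of nonterminals appearing as rule inputs. -/
noncomputable def ntS (g : ContextFreeGrammar.{0} T) : Finset g.NT :=
  letI := Classical.decEq g.NT
  g.rules.image (fun r => r.input)

/-- The pumping constant. -/
noncomputable def Pc (g : ContextFreeGrammar.{0} T) : ℕ := m0 g ^ ((ntS g).card + 2)

lemma one_le_Pc : 1 ≤ Pc g := Nat.one_le_pow _ _ (lt_of_lt_of_le one_pos one_le_m0)

lemma output_length_le_m0 {r : ContextFreeRule T g.NT} (hr : r ∈ g.rules) :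
    r.output.length ≤ m0 g := by
  have h1 : r.output.length ≤ g.rules.sup fun r => r.output.length :=
    Finset.le_sup (f := fun r => r.output.length) hr
  exact le_trans h1 (le_max_left _ _)

lemma WfF.yield_length_le {f : PTF T g.NT} (h : WfF g f) :
    f.yield.length ≤ f.syms.length * m0 g ^ f.height := by
  induction h with
  | nil => simp [PTF.yield, PTF.syms]
  | consT hf ih =>
    rename_i t f
    show (t :: f.yield).length ≤ (Symbol.terminal t :: f.syms).length * m0 g ^ (max 1 f.height)
    have h1 : (1 : ℕ) ≤ m0 g ^ (max 1 f.height) :=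
      Nat.one_le_pow _ _ (lt_of_lt_of_le one_pos one_le_m0)
    have h2 : m0 g ^ f.height ≤ m0 g ^ (max 1 f.height) :=
      Nat.pow_le_pow_right (lt_of_lt_of_le one_pos one_le_m0) (le_max_right _ _)
    simp only [List.length_cons]
    calc f.yield.length + 1 ≤ f.syms.length * m0 g ^ f.height + 1 := by omega
    _ ≤ f.syms.length * m0 g ^ (max 1 f.height) + m0 g ^ (max 1 f.height) := by
        have := Nat.mul_le_mul_left f.syms.length h2; omega
    _ = (f.syms.length + 1) * m0 g ^ (max 1 f.height) := by ring
  | consN r hr hin hout hcs hf ihcs ihf =>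
    rename_i n cs f
    show (cs.yield ++ f.yield).length ≤
      (Symbol.nonterminal n :: f.syms).length * m0 g ^ (max (cs.height + 1) f.height)
    have hm : 0 < m0 g := lt_of_lt_of_le one_pos one_le_m0
    have hcs_len : cs.syms.length ≤ m0 g := by
      rw [← hout]; exact output_length_le_m0 hr
    have h1 : cs.yield.length ≤ m0 g ^ (cs.height + 1) := by
      calc cs.yield.length ≤ cs.syms.length * m0 g ^ cs.height := ihcs
      _ ≤ m0 g * m0 g ^ cs.height := Nat.mul_le_mul_right _ hcs_len
      _ = m0 g ^ (cs.height + 1) := by ring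
    have h2 : m0 g ^ (cs.height + 1) ≤ m0 g ^ (max (cs.height + 1) f.height) :=
      Nat.pow_le_pow_right hm (le_max_left _ _)
    have h3 : m0 g ^ f.height ≤ m0 g ^ (max (cs.height + 1) f.height) :=
      Nat.pow_le_pow_right hm (le_max_right _ _)
    simp only [List.length_append, List.length_cons]
    calc cs.yield.length + f.yield.length
        ≤ m0 g ^ (max (cs.height + 1) f.height) + f.syms.length * m0 g ^ f.height := by omega
    _ ≤ m0 g ^ (max (cs.height + 1) f.height)
        + f.syms.length * m0 g ^ (max (cs.height + 1) f.height) := by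
        have := Nat.mul_le_mul_left f.syms.length h3; omega
    _ = (f.syms.length + 1) * m0 g ^ (max (cs.height + 1) f.height) := by ring

/-! ### Trees as (label, children-forest) pairs, and contexts (layers) -/

/-- A parse tree: label and children forest. -/
abbrev Tr (T : Type) (N : Type) := N × PTF T N

def Tr.Wf (g : ContextFreeGrammar.{0} T) (q : Tr T g.NT) : Prop :=
  WfF g (.consN q.1 q.2 .nil)

def Tr.yield {N : Type} (q : Tr T N) : List T := q.2.yield
def Tr.size {N : Type} (q : Tr T N) : ℕ := q.2.size + 1
def Tr.height {N : Type} (q : Tr T N) : ℕ := q.2.height + 1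

lemma Tr.Wf.forest {q : Tr T g.NT} (h : q.Wf g) : WfF g q.2 := by
  cases h with | consN r hr hin hout hcs hf => exact hcs

lemma Tr.Wf.derives {q : Tr T g.NT} (h : q.Wf g) :
    g.Derives [Symbol.nonterminal q.1] (q.yield.map Symbol.terminal) :=
  WfF.derives_node h

lemma Tr.Wf.root_mem_ntS {q : Tr T g.NT} (h : q.Wf g) : q.1 ∈ ntS g := by
  letI := Classical.decEq g.NT
  cases h with
  | consN r hr hin hout hcs hf =>
    rw [ntS]
    rw [← hin]
    exact Finset.mem_image_of_mem (fun r => r.input) hr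

/-- Yield bound for trees. -/
lemma Tr.Wf.yield_length_le {q : Tr T g.NT} (h : q.Wf g) :
    q.yield.length ≤ m0 g ^ q.height := by
  cases h with
  | consN r hr hin hout hcs hf =>
    have h1 := hcs.yield_length_le
    have h2 : q.2.syms.length ≤ m0 g := by rw [← hout]; exact output_length_le_m0 hr
    calc q.yield.length ≤ q.2.syms.length * m0 g ^ q.2.height := h1
    _ ≤ m0 g * m0 g ^ q.2.height := Nat.mul_le_mul_right _ h2
    _ = m0 g ^ q.height := by rw [Tr.height]; ring

/-- A layer of context: node label, left sibling forest, right sibling forest. -/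
abbrev Layer (T : Type) (N : Type) := N × PTF T N × PTF T N

def plug {N : Type} : List (Layer T N) → Tr T N → Tr T N
  | [], q => q
  | (n, f₁, f₂) :: L, q =>
      (n, f₁.append (.consN (plug L q).1 (plug L q).2 f₂))

def preL {N : Type} : List (Layer T N) → List T
  | [] => []
  | (_, f₁, _) :: L => f₁.yield ++ preL L

def postL {N : Type} : List (Layer T N) → List T
  | [] => []
  | (_, _, f₂) :: L => postL L ++ f₂.yield

def lsize {N : Type} : List (Layer T N) → ℕ
  | [] => 0
  | (_, f₁, f₂) :: L => f₁.size + f₂.size + 1 + lsize L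

def LayersOK (g : ContextFreeGrammar.{0} T) : List (Layer T g.NT) → g.NT → g.NT → Prop
  | [], A, B => A = B
  | (nn, f₁, f₂) :: L, A, B => nn = A ∧ WfF g f₁ ∧ WfF g f₂ ∧
      ∃ C, LayersOK g L C B ∧
        ∃ r ∈ g.rules, r.input = A ∧
          r.output = f₁.syms ++ [Symbol.nonterminal C] ++ f₂.syms

lemma plug_fst {L : List (Layer T g.NT)} {A B : g.NT} (h : LayersOK g L A B)
    {q : Tr T g.NT} (hq : q.1 = B) : (plug L q).1 = A := by
  cases L with
  | nil => rw [plug]; rw [hq]; exact h.symm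
  | cons l L =>
    obtain ⟨nn, f₁, f₂⟩ := l
    exact h.1

lemma plug_yield {q : Tr T g.NT} :
    ∀ {L : List (Layer T g.NT)}, (plug L q).yield = preL L ++ q.yield ++ postL L := by
  intro L
  induction L with
  | nil => simp [plug, preL, postL, Tr.yield]
  | cons l L ih =>
    obtain ⟨nn, f₁, f₂⟩ := l
    show (f₁.append (.consN (plug L q).1 (plug L q).2 f₂)).yield = _
    rw [PTF.yield_append]
    show f₁.yield ++ ((plug L q).2.yield ++ f₂.yield) = _
    have : (plug L q).2.yield = preL L ++ q.yield ++ postL L := ih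
    rw [this, preL, postL]
    simp [List.append_assoc]

lemma plug_size {q : Tr T g.NT} :
    ∀ {L : List (Layer T g.NT)}, (plug L q).size = lsize L + q.size := by
  intro L
  induction L with
  | nil => simp [plug, lsize]
  | cons l L ih =>
    obtain ⟨nn, f₁, f₂⟩ := l
    show (f₁.append (.consN (plug L q).1 (plug L q).2 f₂)).size + 1 = _
    rw [PTF.size_append]
    show f₁.size + ((plug L q).2.size + 1 + f₂.size) + 1 = _
    have : (plug L q).2.size + 1 = lsize L + q.size := ih
    rw [lsize]
    omega

lemma plug_height {q : Tr T g.NT} :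
    ∀ {L : List (Layer T g.NT)}, q.height + L.length ≤ (plug L q).height := by
  intro L
  induction L with
  | nil => simp [plug]
  | cons l L ih =>
    obtain ⟨nn, f₁, f₂⟩ := l
    show q.height + (L.length + 1) ≤
      (f₁.append (.consN (plug L q).1 (plug L q).2 f₂)).height + 1
    rw [PTF.height_append]
    show _ ≤ max f₁.height (max ((plug L q).2.height + 1) f₂.height) + 1
    have : q.height + L.length ≤ (plug L q).2.height + 1 := ih
    omega

lemma plug_wf {L : List (Layer T g.NT)} {A B : g.NT} (h : LayersOK g L A B)
    {q : Tr T g.NT} (hq : q.1 = B) (hwq : q.Wf g) : (plug L q).Wf g := by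
  induction L generalizing A with
  | nil => exact hwq
  | cons l L ih =>
    obtain ⟨nn, f₁, f₂⟩ := l
    obtain ⟨rfl, hw₁, hw₂, C, hok, r, hr, hin, hout⟩ := h
    have hplug := ih hok
    have hfst : (plug L q).1 = C := plug_fst hok hq
    have hforest : WfF g (plug L q).2 := hplug.forest
    show WfF g (.consN nn (f₁.append (.consN (plug L q).1 (plug L q).2 f₂)) .nil)
    have hinner : WfF g (.consN (plug L q).1 (plug L q).2 f₂) := by
      cases hplug with
      | consN r' hr' hin' hout' hcs' hf' => exact WfF.consN r' hr' hin' hout' hcs' hw₂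
    refine WfF.consN r hr hin ?_ (hw₁.append hinner) WfF.nil
    rw [hout, PTF.syms_append, hfst]
    simp [PTF.syms]

lemma LayersOK.append {L₁ L₂ : List (Layer T g.NT)} {A B C : g.NT}
    (h₁ : LayersOK g L₁ A B) (h₂ : LayersOK g L₂ B C) :
    LayersOK g (L₁ ++ L₂) A C := by
  induction L₁ generalizing A with
  | nil => rw [LayersOK] at h₁; subst h₁; exact h₂
  | cons l L ih =>
    obtain ⟨nn, f₁, f₂⟩ := l
    obtain ⟨rfl, hw₁, hw₂, C', hok, hr⟩ := h₁
    exact ⟨rfl, hw₁, hw₂, C', ih hok, hr⟩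

lemma plug_append {L₁ L₂ : List (Layer T g.NT)} {q : Tr T g.NT} :
    plug (L₁ ++ L₂) q = plug L₁ (plug L₂ q) := by
  induction L₁ with
  | nil => rfl
  | cons l L ih =>
    obtain ⟨nn, f₁, f₂⟩ := l
    show (nn, f₁.append (.consN (plug (L ++ L₂) q).1 (plug (L ++ L₂) q).2 f₂)) = _
    rw [ih]
    rfl

lemma preL_append {L₁ L₂ : List (Layer T g.NT)} :
    preL (L₁ ++ L₂) = preL L₁ ++ preL L₂ := by
  induction L₁ with
  | nil => simp [preL]
  | cons l L ih => obtain ⟨nn, f₁, f₂⟩ := l; simp [preL, ih]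

lemma postL_append {L₁ L₂ : List (Layer T g.NT)} :
    postL (L₁ ++ L₂) = postL L₂ ++ postL L₁ := by
  induction L₁ with
  | nil => simp [postL]
  | cons l L ih => obtain ⟨nn, f₁, f₂⟩ := l; simp [postL, ih]

end Pumping

section Pumping2
open ContextFreeGrammar
variable {T : Type} {g : ContextFreeGrammar.{0} T}

lemma derives_subst {p q u v : List (Symbol T g.NT)} (h : g.Derives u v) :
    g.Derives (p ++ u ++ q) (p ++ v ++ q) :=
  (h.append_left p).append_right q

lemma layers_derives {L : List (Layer T g.NT)} {A B : g.NT} (h : LayersOK g L A B) :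
    g.Derives [Symbol.nonterminal A]
      ((preL L).map Symbol.terminal ++ [Symbol.nonterminal B]
        ++ (postL L).map Symbol.terminal) := by
  induction L generalizing A with
  | nil =>
    rw [LayersOK] at h; subst h; simp only [preL, postL, List.map_nil,
      List.nil_append, List.append_nil]
    exact Derives.refl _
  | cons l L ih =>
    obtain ⟨nn, f₁, f₂⟩ := l
    obtain ⟨rfl, hw₁, hw₂, C, hok, r, hr, hin, hout⟩ := h
    have h1 : g.Produces [Symbol.nonterminal nn]
        (f₁.syms ++ [Symbol.nonterminal C] ++ f₂.syms) := by
      refine ⟨r, hr, ?_⟩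
      rw [← hin, ← hout]
      exact ContextFreeRule.Rewrites.input_output
    have h2 : g.Derives (f₁.syms ++ [Symbol.nonterminal C] ++ f₂.syms)
        (f₁.yield.map Symbol.terminal ++ [Symbol.nonterminal C] ++ f₂.syms) :=
      (hw₁.derives.append_right _).append_right _
    have h3 : g.Derives
        (f₁.yield.map Symbol.terminal ++ [Symbol.nonterminal C] ++ f₂.syms)
        (f₁.yield.map Symbol.terminal ++ [Symbol.nonterminal C]
          ++ f₂.yield.map Symbol.terminal) :=
      hw₂.derives.append_left _
    have h4 : g.Derives
        (f₁.yield.map Symbol.terminal ++ [Symbol.nonterminal C]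
          ++ f₂.yield.map Symbol.terminal)
        (f₁.yield.map Symbol.terminal
          ++ ((preL L).map Symbol.terminal ++ [Symbol.nonterminal B]
              ++ (postL L).map Symbol.terminal)
          ++ f₂.yield.map Symbol.terminal) := derives_subst (ih hok)
    have heq : (f₁.yield.map Symbol.terminal
          ++ ((preL L).map Symbol.terminal ++ [Symbol.nonterminal B]
              ++ (postL L).map Symbol.terminal)
          ++ f₂.yield.map Symbol.terminal)
        = ((preL ((nn, f₁, f₂) :: L)).map Symbol.terminal ++ [Symbol.nonterminal B]
            ++ (postL ((nn, f₁, f₂) :: L)).map Symbol.terminal) := by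
      simp [preL, postL, List.map_append, List.append_assoc]
    rw [← heq]
    exact h1.trans_derives ((h2.trans h3).trans h4)

lemma exists_max_child {N : Type} {f : PTF T N} (h : 2 ≤ f.height) :
    ∃ (f₁ : PTF T N) (n : N) (cs f₂ : PTF T N),
      f = f₁.append (.consN n cs f₂) ∧ cs.height + 1 = f.height := by
  induction f with
  | nil => simp [PTF.height] at h
  | consT t f ih =>
    have hf : 2 ≤ f.height := by
      have : f.height < 2 → max 1 f.height < 2 := by omega
      by_contra hc
      push_neg at hc
      have := this hc
      rw [PTF.height] at h
      omega
    obtain ⟨f₁, n, cs, f₂, rfl, hh⟩ := ih hf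
    refine ⟨.consT t f₁, n, cs, f₂, rfl, ?_⟩
    rw [PTF.height, PTF.height_append] at *
    omega
  | consN n cs f ihcs ihf =>
    by_cases hc : f.height ≤ cs.height + 1
    · refine ⟨.nil, n, cs, f, rfl, ?_⟩
      show cs.height + 1 = max (cs.height + 1) f.height
      omega
    · push_neg at hc
      have hf : 2 ≤ f.height := by
        rw [PTF.height] at h; omega
      obtain ⟨f₁, n', cs', f₂, rfl, hh⟩ := ihf hf
      refine ⟨.consN n cs f₁, n', cs', f₂, rfl, ?_⟩
      show cs'.height + 1 = max (cs.height + 1) (f₁.append (.consN n' cs' f₂)).height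
      omega

/-- Extract child data from a well-formed tree whose forest splits. -/
lemma child_data {q : Tr T g.NT} (hw : q.Wf g) {f₁ : PTF T g.NT} {n' : g.NT}
    {cs' f₂ : PTF T g.NT} (hfe : q.2 = f₁.append (.consN n' cs' f₂)) :
    (Tr.Wf g (n', cs')) ∧ WfF g f₁ ∧ WfF g f₂ ∧
      ∃ r ∈ g.rules, r.input = q.1 ∧
        r.output = f₁.syms ++ [Symbol.nonterminal n'] ++ f₂.syms := by
  cases hw with
  | consN r hr hin hout hcs hf =>
    rw [hfe] at hcs
    obtain ⟨hw₁, hrest⟩ := hcs.of_append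
    have hchild : Tr.Wf g (n', cs') ∧ WfF g f₂ := by
      cases hrest with
      | consN r' hr' hin' hout' hcs' hf' =>
        exact ⟨WfF.consN r' hr' hin' hout' hcs' WfF.nil, hf'⟩
    refine ⟨hchild.1, hw₁, hchild.2, r, hr, hin, ?_⟩
    rw [hout, hfe, PTF.syms_append]
    simp [PTF.syms]

/-- Rebuild: a tree whose forest splits equals plugging the child into one layer. -/
lemma plug_one {q : Tr T g.NT} {f₁ : PTF T g.NT} {n' : g.NT} {cs' f₂ : PTF T g.NT}
    (hfe : q.2 = f₁.append (.consN n' cs' f₂)) {L' : List (Layer T g.NT)}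
    {q' : Tr T g.NT} (hplug : ((n', cs') : Tr T g.NT) = plug L' q') :
    q = plug ((q.1, f₁, f₂) :: L') q' := by
  show q = (q.1, f₁.append (.consN (plug L' q').1 (plug L' q').2 f₂))
  rw [← hplug]
  exact Prod.ext rfl hfe

lemma layersOK_cons {q : Tr T g.NT} (hw : q.Wf g) {f₁ : PTF T g.NT} {n' : g.NT}
    {cs' f₂ : PTF T g.NT} (hfe : q.2 = f₁.append (.consN n' cs' f₂))
    {L' : List (Layer T g.NT)} {B : g.NT} (hok : LayersOK g L' n' B) :
    LayersOK g ((q.1, f₁, f₂) :: L') q.1 B := by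
  obtain ⟨_, hw₁, hw₂, hrule⟩ := child_data hw hfe
  exact ⟨rfl, hw₁, hw₂, n', hok, hrule⟩

lemma descent (q : Tr T g.NT) (hw : q.Wf g) (hh : (ntS g).card + 2 ≤ q.height) :
    ∃ (L : List (Layer T g.NT)) (q' : Tr T g.NT),
      q = plug L q' ∧ LayersOK g L q.1 q'.1 ∧ q'.Wf g ∧
      q'.height = (ntS g).card + 2 := by
  by_cases heq : q.height = (ntS g).card + 2
  · exact ⟨[], q, rfl, rfl, hw, heq⟩
  · have h2 : 2 ≤ q.2.height := by
      have : q.height = q.2.height + 1 := rfl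
      omega
    obtain ⟨f₁, n', cs', f₂, hfe, hht⟩ := exists_max_child h2
    obtain ⟨hwc, hw₁, hw₂, hrule⟩ := child_data hw hfe
    have hhc : (ntS g).card + 2 ≤ (Tr.height ((n', cs') : Tr T g.NT)) := by
      show (ntS g).card + 2 ≤ cs'.height + 1
      have h3 : q.height = q.2.height + 1 := rfl
      omega
    have hsz : (Tr.size ((n', cs') : Tr T g.NT)) < q.size := by
      show cs'.size + 1 < q.2.size + 1
      rw [hfe, PTF.size_append]
      show _ < f₁.size + (cs'.size + 1 + f₂.size) + 1
      omega
    obtain ⟨L', q', hplug, hok, hwq', hhq'⟩ := descent ((n', cs') : Tr T g.NT) hwc hhc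
    exact ⟨(q.1, f₁, f₂) :: L', q', plug_one hfe hplug,
      layersOK_cons hw hfe hok, hwq', hhq'⟩
  termination_by q.size

lemma pump_find [DecidableEq g.NT] (q : Tr T g.NT) (seen : Finset g.NT) (hw : q.Wf g)
    (hh : (ntS g \ seen).card + 2 ≤ q.height) :
    ∃ (L : List (Layer T g.NT)) (q' : Tr T g.NT),
      q = plug L q' ∧ LayersOK g L q.1 q'.1 ∧ q'.Wf g ∧
      (q'.1 ∈ seen ∨ ∃ (L₂ : List (Layer T g.NT)) (q₂ : Tr T g.NT),
        L₂ ≠ [] ∧ q' = plug L₂ q₂ ∧ LayersOK g L₂ q'.1 q₂.1 ∧ q₂.Wf g ∧ q₂.1 = q'.1) := by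
  classical
  by_cases hmem : q.1 ∈ seen
  · exact ⟨[], q, rfl, rfl, hw, Or.inl hmem⟩
  · have hroot : q.1 ∈ ntS g \ seen := Finset.mem_sdiff.mpr ⟨hw.root_mem_ntS, hmem⟩
    have hcard1 : 1 ≤ (ntS g \ seen).card := Finset.card_pos.mpr ⟨q.1, hroot⟩
    have h2 : 2 ≤ q.2.height := by
      have : q.height = q.2.height + 1 := rfl
      omega
    obtain ⟨f₁, n', cs', f₂, hfe, hht⟩ := exists_max_child h2
    obtain ⟨hwc, hw₁, hw₂, hrule⟩ := child_data hw hfe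
    have hss : ntS g \ insert q.1 seen ⊂ ntS g \ seen := by
      constructor
      · exact Finset.sdiff_subset_sdiff (le_refl _) (Finset.subset_insert _ _)
      · intro hsub
        have h1 := hsub hroot
        rw [Finset.mem_sdiff] at h1
        exact h1.2 (Finset.mem_insert_self _ _)
    have hcard : (ntS g \ insert q.1 seen).card < (ntS g \ seen).card :=
      Finset.card_lt_card hss
    have hhc : (ntS g \ insert q.1 seen).card + 2 ≤ (Tr.height ((n', cs') : Tr T g.NT)) := by
      show _ ≤ cs'.height + 1
      have h3 : q.height = q.2.height + 1 := rfl
      omega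
    have hsz : (Tr.size ((n', cs') : Tr T g.NT)) < q.size := by
      show cs'.size + 1 < q.2.size + 1
      rw [hfe, PTF.size_append]
      show _ < f₁.size + (cs'.size + 1 + f₂.size) + 1
      omega
    obtain ⟨L', q', hplug, hok, hwq', hdisj⟩ :=
      pump_find ((n', cs') : Tr T g.NT) (insert q.1 seen) hwc hhc
    rcases hdisj with hseen' | hrep
    · rcases Finset.mem_insert.mp hseen' with heq | hseen
      · -- repeat with q itself
        refine ⟨[], q, rfl, rfl, hw, Or.inr ⟨(q.1, f₁, f₂) :: L', q', by simp,
          plug_one hfe hplug, layersOK_cons hw hfe hok, hwq', heq⟩⟩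
      · exact ⟨(q.1, f₁, f₂) :: L', q', plug_one hfe hplug,
          layersOK_cons hw hfe hok, hwq', Or.inl hseen⟩
    · exact ⟨(q.1, f₁, f₂) :: L', q', plug_one hfe hplug,
        layersOK_cons hw hfe hok, hwq', Or.inr hrep⟩
  termination_by q.size

lemma lsize_pos {L : List (Layer T g.NT)} (h : L ≠ []) : 1 ≤ lsize L := by
  cases L with
  | nil => simp at h
  | cons l L => obtain ⟨nn, f₁, f₂⟩ := l; rw [lsize]; omega

/-- The main pumping decomposition at the tree level. -/
lemma main_pump (q : Tr T g.NT) (hw : q.Wf g) (hlen : Pc g + 1 ≤ q.yield.length) :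
    ∃ x u y v w : List T, q.yield = x ++ u ++ y ++ v ++ w ∧ u ++ v ≠ [] ∧
      (u ++ y ++ v).length ≤ Pc g ∧
      ∃ B : g.NT,
        g.Derives [Symbol.nonterminal q.1]
          (x.map Symbol.terminal ++ [Symbol.nonterminal B] ++ w.map Symbol.terminal) ∧
        g.Derives [Symbol.nonterminal B]
          (u.map Symbol.terminal ++ [Symbol.nonterminal B] ++ v.map Symbol.terminal) ∧
        g.Derives [Symbol.nonterminal B] (y.map Symbol.terminal) := by
  classical
  have hm : 0 < m0 g := lt_of_lt_of_le one_pos one_le_m0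
  have hht : (ntS g).card + 2 ≤ q.height := by
    by_contra hc
    push_neg at hc
    have h1 : q.yield.length ≤ m0 g ^ q.height := hw.yield_length_le
    have h2 : m0 g ^ q.height ≤ m0 g ^ ((ntS g).card + 2) :=
      Nat.pow_le_pow_right hm (by omega)
    rw [show m0 g ^ ((ntS g).card + 2) = Pc g from rfl] at h2
    omega
  obtain ⟨L₀, q1, hplug0, hok0, hwq1, hhq1⟩ := descent q hw hht
  have hh1 : (ntS g \ (∅ : Finset g.NT)).card + 2 ≤ q1.height := by
    rw [Finset.sdiff_empty, hhq1]
  obtain ⟨L, q', hplug1, hok1, hwq', hdisj⟩ := pump_find q1 ∅ hwq1 hh1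
  rcases hdisj with hseen | ⟨L₂, q₂, hL₂ne, hplug2, hok2, hwq₂, hroot2⟩
  · exact absurd hseen (Finset.notMem_empty _)
  have hyq : q.yield = (preL L₀ ++ preL L) ++ preL L₂ ++ q₂.yield ++ postL L₂
      ++ (postL L ++ postL L₀) := by
    rw [hplug0, plug_yield, hplug1, plug_yield, hplug2, plug_yield]
    simp [List.append_assoc]
  have hq'bound : q'.yield.length ≤ Pc g := by
    have h1 : q'.height + L.length ≤ q1.height := by
      rw [hplug1]; exact plug_height
    have h2 : q'.yield.length ≤ m0 g ^ q'.height := hwq'.yield_length_le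
    have h3 : m0 g ^ q'.height ≤ m0 g ^ ((ntS g).card + 2) :=
      Nat.pow_le_pow_right hm (by omega)
    rw [show m0 g ^ ((ntS g).card + 2) = Pc g from rfl] at h3
    omega
  have hyq' : q'.yield = preL L₂ ++ q₂.yield ++ postL L₂ := by
    rw [hplug2, plug_yield]
  by_cases hne : preL L₂ ++ postL L₂ = []
  · -- degenerate: replace q' by q₂ and recurse on a smaller tree
    obtain ⟨hu, hv⟩ := List.append_eq_nil_iff.mp hne
    have hclaim : q = plug (L₀ ++ L) q' := by
      rw [plug_append, ← hplug1, ← hplug0]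
    have hokall : LayersOK g (L₀ ++ L) q.1 q'.1 := by
      have := hok0
      rw [show q1.1 = (plug L q').1 from by rw [← hplug1]] at this
      rw [plug_fst hok1 rfl] at this
      exact LayersOK.append this hok1
    set qn : Tr T g.NT := plug (L₀ ++ L) q₂ with hqn
    have hwn : qn.Wf g := plug_wf hokall hroot2 hwq₂
    have hyn : qn.yield = q.yield := by
      rw [hqn, plug_yield, hclaim, plug_yield, hyq', hu, hv]
      simp
    have hfstn : qn.1 = q.1 := by
      rw [hqn, plug_fst hokall hroot2, hclaim, plug_fst hokall rfl]
    have hszn : qn.size < q.size := by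
      rw [hqn, plug_size, hclaim, plug_size]
      have h1 : q'.size = lsize L₂ + q₂.size := by rw [hplug2, plug_size]
      have h2 := lsize_pos hL₂ne
      omega
    obtain ⟨x, u, y, v, w, h1, h2, h3, B, h4, h5, h6⟩ :=
      main_pump qn hwn (by rw [hyn]; exact hlen)
    exact ⟨x, u, y, v, w, by rw [← hyn]; exact h1, h2, h3, B,
      by rw [← hfstn]; exact h4, h5, h6⟩
  · -- the interesting case
    refine ⟨preL L₀ ++ preL L, preL L₂, q₂.yield, postL L₂, postL L ++ postL L₀,
      hyq, hne, ?_, q'.1, ?_, ?_, ?_⟩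
    · rw [show preL L₂ ++ q₂.yield ++ postL L₂ = q'.yield from hyq'.symm]
      exact hq'bound
    · have hokall : LayersOK g (L₀ ++ L) q.1 q'.1 := by
        have := hok0
        rw [show q1.1 = (plug L q').1 from by rw [← hplug1]] at this
        rw [plug_fst hok1 rfl] at this
        exact LayersOK.append this hok1
      have := layers_derives hokall
      rw [preL_append, postL_append] at this
      simpa [List.map_append, List.append_assoc] using this
    · have := layers_derives hok2
      rw [hroot2] at this
      exact this
    · have := hwq₂.derives
      rw [hroot2] at this
      exact this
  termination_by q.size

/-- The pumping lemma, specialised to pumping exponent 2. -/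
theorem cfg_pump {w : List T} (hwL : w ∈ g.language) (hlen : Pc g + 1 ≤ w.length) :
    ∃ x u y v z : List T, w = x ++ u ++ y ++ v ++ z ∧ u ++ v ≠ [] ∧
      (u ++ y ++ v).length ≤ Pc g ∧
      (x ++ (u ++ u) ++ y ++ (v ++ v) ++ z) ∈ g.language := by
  obtain ⟨cs, hwf, hyield⟩ := tree_of_mem_language hwL
  set q : Tr T g.NT := (g.initial, cs) with hq
  have hwq : q.Wf g := hwf
  have hyq : q.yield = w := hyield
  obtain ⟨x, u, y, v, z, h1, h2, h3, B, h4, h5, h6⟩ :=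
    main_pump q hwq (by rw [hyq]; exact hlen)
  refine ⟨x, u, y, v, z, by rw [← hyq]; exact h1, h2, h3, ?_⟩
  rw [ContextFreeGrammar.mem_language_iff]
  have d1 : g.Derives [Symbol.nonterminal g.initial]
      (x.map Symbol.terminal ++ [Symbol.nonterminal B] ++ z.map Symbol.terminal) := h4
  have d2 : g.Derives
      (x.map Symbol.terminal ++ [Symbol.nonterminal B] ++ z.map Symbol.terminal)
      (x.map Symbol.terminal
        ++ (u.map Symbol.terminal ++ [Symbol.nonterminal B] ++ v.map Symbol.terminal)
        ++ z.map Symbol.terminal) := derives_subst h5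
  have d3 : g.Derives
      (x.map Symbol.terminal
        ++ (u.map Symbol.terminal ++ [Symbol.nonterminal B] ++ v.map Symbol.terminal)
        ++ z.map Symbol.terminal)
      (x.map Symbol.terminal
        ++ (u.map Symbol.terminal
            ++ (u.map Symbol.terminal ++ [Symbol.nonterminal B] ++ v.map Symbol.terminal)
            ++ v.map Symbol.terminal)
        ++ z.map Symbol.terminal) := derives_subst (derives_subst h5)
  have d4 : g.Derives
      (x.map Symbol.terminal
        ++ (u.map Symbol.terminal
            ++ (u.map Symbol.terminal ++ [Symbol.nonterminal B] ++ v.map Symbol.terminal)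
            ++ v.map Symbol.terminal)
        ++ z.map Symbol.terminal)
      (x.map Symbol.terminal
        ++ (u.map Symbol.terminal
            ++ (u.map Symbol.terminal ++ y.map Symbol.terminal ++ v.map Symbol.terminal)
            ++ v.map Symbol.terminal)
        ++ z.map Symbol.terminal) := derives_subst (derives_subst (derives_subst h6))
  have heq : ((x ++ (u ++ u) ++ y ++ (v ++ v) ++ z).map Symbol.terminal
        : List (Symbol T g.NT))
      = (x.map Symbol.terminal
        ++ (u.map Symbol.terminal
            ++ (u.map Symbol.terminal ++ y.map Symbol.terminal ++ v.map Symbol.terminal)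
            ++ v.map Symbol.terminal)
        ++ z.map Symbol.terminal) := by
    simp [List.map_append, List.append_assoc]
  rw [heq]
  exact ((d1.trans d2).trans d3).trans d4

end Pumping2

section App
variable {α : Type} {k : ℕ} [DecidableEq α]

open List

lemma count_sum_eq_length (a : Fin k → α) (hinj : Function.Injective a)
    (l : List α) (hl : ∀ x ∈ l, ∃ r, x = a r) :
    ∑ r : Fin k, l.count (a r) = l.length := by
  induction l with
  | nil => simp
  | cons x l ih =>
    obtain ⟨r₀, rfl⟩ := hl x List.mem_cons_self
    have hl' : ∀ x ∈ l, ∃ r, x = a r := fun x hx => hl x (List.mem_cons_of_mem _ hx)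
    have hcnt : ∀ r : Fin k, (a r₀ :: l).count (a r)
        = l.count (a r) + if r = r₀ then 1 else 0 := by
      intro r
      by_cases h : r = r₀
      · subst h; simp [List.count_cons]
      · have hne : a r₀ ≠ a r := fun hc => h (hinj hc).symm
        simp [List.count_cons, hne, h]
    calc ∑ r : Fin k, (a r₀ :: l).count (a r)
        = ∑ r : Fin k, (l.count (a r) + if r = r₀ then 1 else 0) := by
          exact Finset.sum_congr rfl fun r _ => hcnt r
      _ = (∑ r : Fin k, l.count (a r)) + ∑ r : Fin k, (if r = r₀ then 1 else 0) :=
          Finset.sum_add_distrib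
      _ = l.length + 1 := by rw [ih hl', Finset.sum_ite_eq' Finset.univ r₀]; simp
      _ = (a r₀ :: l).length := by simp

lemma count_blockLang {σ : Fin k → Set α}
    (hdisj : ∀ i j : Fin k, i ≠ j → Disjoint (σ i) (σ j))
    (a : Fin k → α) (ha : ∀ r, a r ∈ σ r) (hinj : Function.Injective a)
    {C : Set (Fin k × Fin k)} {w : List α} (hw : w ∈ blockLang σ C)
    (hl : ∀ x ∈ w, ∃ r, x = a r) :
    ∀ e ∈ C, w.count (a e.1) = w.count (a e.2) := by
  obtain ⟨B, rfl, hB, hC⟩ := hw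
  have hcount : ∀ t : Fin k, ((List.ofFn B).flatten).count (a t) = (B t).count (a t) := by
    intro t
    rw [List.count_flatten, List.map_ofFn, List.sum_ofFn]
    refine Finset.sum_eq_single t ?_ ?_
    · intro s _ hst
      show (B s).count (a t) = 0
      rw [List.count_eq_zero]
      intro hmem
      have h1 : a t ∈ σ s := hB s _ hmem
      exact Set.disjoint_left.mp (hdisj s t (fun h => hst h)) h1 (ha t)
    · intro h; exact absurd (Finset.mem_univ t) h
  have hle : ∀ t : Fin k, ((List.ofFn B).flatten).count (a t) ≤ (B t).length := by
    intro t; rw [hcount]; exact List.count_le_length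
  have hsum1 : ∑ t : Fin k, ((List.ofFn B).flatten).count (a t)
      = ((List.ofFn B).flatten).length := count_sum_eq_length a hinj _ hl
  have hsum2 : ((List.ofFn B).flatten).length = ∑ t : Fin k, (B t).length := by
    rw [List.length_flatten, List.map_ofFn, List.sum_ofFn]
    rfl
  have heq : ∀ t ∈ Finset.univ, ((List.ofFn B).flatten).count (a t) = (B t).length := by
    rw [← Finset.sum_eq_sum_iff_of_le (fun t _ => hle t)]
    rw [hsum1, hsum2]
  intro e he
  rw [heq e.1 (Finset.mem_univ _), heq e.2 (Finset.mem_univ _)]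
  exact hC e he

/-- Segment lemma: a contiguous segment of the canonical word containing letters from
blocks on both sides of block `r` must contain all of block `r` plus two more letters. -/
lemma seg_lemma (a : Fin k → α) (hinj : Function.Injective a) (NN : Fin k → ℕ)
    {x s w' : List α}
    (hz : (List.ofFn fun r => List.replicate (NN r) (a r)).flatten = x ++ s ++ w')
    {t r t' : Fin k} (htr : t < r) (hrt' : r < t')
    (hct : 1 ≤ s.count (a t)) (hct' : 1 ≤ s.count (a t')) :
    NN r + 2 ≤ s.length := by
  set l : List (List α) := List.ofFn fun r => List.replicate (NN r) (a r) with hl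
  have hrlen : (r : ℕ) < l.length := by simp [hl, r.isLt]
  have hlr : l[(r : ℕ)] = List.replicate (NN r) (a r) := by
    simp [hl]
  set A : List α := (l.take r).flatten with hA
  set M : List α := List.replicate (NN r) (a r) with hM
  set Bx : List α := (l.drop (r + 1)).flatten with hBx
  have hsplit : l.flatten = A ++ (M ++ Bx) := by
    conv_lhs => rw [← List.take_append_drop (r : ℕ) l]
    rw [List.drop_eq_getElem_cons hrlen, hlr]
    simp [hA, hM, hBx, List.flatten_append]
  -- counts
  have hAcount : A.count (a t') = 0 := by
    rw [List.count_eq_zero]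
    intro hmem
    rw [List.mem_flatten] at hmem
    obtain ⟨l', hl', hmem⟩ := hmem
    rw [List.mem_iff_getElem] at hl'
    obtain ⟨idx, hidx, rfl⟩ := hl'
    have hidx' : idx < (r : ℕ) := by
      have := hidx; simp [hl] at this; omega
    have hidxk : idx < k := by
      have : (r : ℕ) < k := r.isLt; omega
    have : (l.take (r : ℕ))[idx] = List.replicate (NN ⟨idx, hidxk⟩) (a ⟨idx, hidxk⟩) := by
      rw [List.getElem_take]
      simp [hl]
    rw [this] at hmem
    have := List.eq_of_mem_replicate hmem
    have heq := hinj this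
    have : (t' : ℕ) = idx := by rw [heq]
    omega
  have hMcount_t : M.count (a t) = 0 := by
    rw [hM, List.count_replicate]
    have : a r ≠ a t := fun hc => (by omega : (r:ℕ) ≠ (t:ℕ)) (by rw [hinj hc])
    simp [this]
  have hMcount_t' : M.count (a t') = 0 := by
    rw [hM, List.count_replicate]
    have : a r ≠ a t' := fun hc => (by omega : (r:ℕ) ≠ (t':ℕ)) (by rw [hinj hc])
    simp [this]
  have hBcount : Bx.count (a t) = 0 := by
    rw [List.count_eq_zero]
    intro hmem
    rw [List.mem_flatten] at hmem
    obtain ⟨l', hl', hmem⟩ := hmem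
    rw [List.mem_iff_getElem] at hl'
    obtain ⟨idx, hidx, rfl⟩ := hl'
    have hidxk : (r : ℕ) + 1 + idx < k := by
      have := hidx
      simp [hl] at this
      omega
    have : (l.drop ((r : ℕ) + 1))[idx] = List.replicate (NN ⟨(r:ℕ)+1+idx, hidxk⟩)
        (a ⟨(r:ℕ)+1+idx, hidxk⟩) := by
      rw [List.getElem_drop]
      simp [hl]
    rw [this] at hmem
    have := List.eq_of_mem_replicate hmem
    have heq := hinj this
    have : (t : ℕ) = (r:ℕ)+1+idx := by rw [heq]
    omega
  have hMlen : M.length = NN r := List.length_replicate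
  -- main case analysis
  have hx : x ++ (s ++ w') = A ++ (M ++ Bx) := by
    rw [← List.append_assoc, ← hz, hsplit]
  rcases List.append_eq_append_iff.mp hx with ⟨a', hA', hrest⟩ | ⟨c, hxc, hrest⟩
  · -- A = x ++ a', s ++ w' = a' ++ (M ++ Bx)
    have ha'count : a'.count (a t') = 0 := by
      have : A.count (a t') = x.count (a t') + a'.count (a t') := by
        rw [hA', List.count_append]
      omega
    rw [← List.append_assoc] at hrest
    rcases List.append_eq_append_iff.mp hrest with ⟨b, hb1, hb2⟩ | ⟨b, hb1, hb2⟩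
    · -- a' ++ M = s ++ b : s is a prefix of a' ++ M
      exfalso
      have : s.count (a t') ≤ (a' ++ M).count (a t') := by
        have : (a' ++ M).count (a t') = s.count (a t') + b.count (a t') := by
          rw [hb1, List.count_append]
        omega
      rw [List.count_append, ha'count, hMcount_t'] at this
      omega
    · -- s = (a' ++ M) ++ b, b ++ w' = Bx
      have hbne : b ≠ [] := by
        intro hbnil
        rw [hbnil, List.append_nil] at hb1
        have : s.count (a t') = a'.count (a t') + M.count (a t') := by
          rw [hb1, List.count_append]
        rw [ha'count, hMcount_t'] at this
        omega
      have ha'ne : a' ≠ [] := by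
        intro hanil
        rw [hanil, List.nil_append] at hb1
        have hbcount : b.count (a t) = 0 := by
          have : Bx.count (a t) = b.count (a t) + w'.count (a t) := by
            rw [hb2, List.count_append]
          omega
        have : s.count (a t) = M.count (a t) + b.count (a t) := by
          rw [hb1, List.count_append]
        rw [hMcount_t, hbcount] at this
        omega
      have h1 : 1 ≤ a'.length := by
        cases a' with
        | nil => exact absurd rfl ha'ne
        | cons _ _ => simp
      have h2 : 1 ≤ b.length := by
        cases b with
        | nil => exact absurd rfl hbne
        | cons _ _ => simp
      have : s.length = a'.length + M.length + b.length := by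
        rw [hb1]; simp; omega
      omega
  · -- x = A ++ c, c ++ (s ++ w') = M ++ Bx : s is an infix of M ++ Bx
    exfalso
    have hinfix : s <:+: M ++ Bx := ⟨c, w', by rw [List.append_assoc]; exact hrest.symm⟩
    have := hinfix.count_le (a t)
    rw [List.count_append, hMcount_t, hBcount] at this
    omega

end App

section Core
open List
variable {α : Type} {k : ℕ}

lemma core_not_cf (σ : Fin k → Set α)
    (hdisj : ∀ i j : Fin k, i ≠ j → Disjoint (σ i) (σ j))
    (hne : ∀ i : Fin k, (σ i).Nonempty)
    (C₁ C₂ : Set (Fin k × Fin k))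
    {e₁ e₂ : Fin k × Fin k} (he₁ : e₁ ∈ C₁) (he₂ : e₂ ∈ C₂)
    (h1 : e₁.1 < e₂.1) (h2 : e₂.1 < e₁.2) (h3 : e₁.2 < e₂.2) :
    ¬ (blockLang σ C₁ ⊓ blockLang σ C₂).IsContextFree := by
  classical
  rintro ⟨g, hg⟩
  obtain ⟨i, j⟩ := e₁
  obtain ⟨i', j'⟩ := e₂
  simp only at h1 h2 h3
  -- letters
  set a : Fin k → α := fun r => (hne r).some with hadef
  have ha : ∀ r : Fin k, a r ∈ σ r := fun r => (hne r).some_mem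
  have hinj : Function.Injective a := by
    intro r s hrs
    by_contra hne'
    exact Set.disjoint_left.mp (hdisj r s hne') (ha r) (hrs ▸ ha s)
  -- connectivity
  set Rel : Fin k → Fin k → Prop :=
    fun r s => (r, s) ∈ C₁ ∪ C₂ ∨ (s, r) ∈ C₁ ∪ C₂ with hRel
  set D : Set (Fin k) :=
    {r | Relation.ReflTransGen Rel i r ∨ Relation.ReflTransGen Rel i' r} with hD
  have hDrel : ∀ r s, r ∈ D → Rel r s → s ∈ D := by
    intro r s hr hrel
    rcases hr with h | h
    · exact Or.inl (h.tail hrel)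
    · exact Or.inr (h.tail hrel)
  have hDi : i ∈ D := Or.inl Relation.ReflTransGen.refl
  have hDi' : i' ∈ D := Or.inr Relation.ReflTransGen.refl
  have hRelij : Rel i j := Or.inl (Or.inl he₁)
  have hRelij' : Rel i' j' := Or.inl (Or.inr he₂)
  have hDj : j ∈ D := hDrel i j hDi hRelij
  have hDj' : j' ∈ D := hDrel i' j' hDi' hRelij'
  -- the witness word
  set NN : Fin k → ℕ := fun r => if r ∈ D then Pc g else 0 with hNN
  set B : Fin k → List α := fun r => List.replicate (NN r) (a r) with hB
  set z : List α := (List.ofFn B).flatten with hzdef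
  have harcNN : ∀ e ∈ C₁ ∪ C₂, NN e.1 = NN e.2 := by
    intro e he
    have hcl : e.1 ∈ D ↔ e.2 ∈ D := by
      constructor
      · intro h
        refine hDrel _ _ h (Or.inl ?_)
        show (e.1, e.2) ∈ C₁ ∪ C₂
        simpa using he
      · intro h
        refine hDrel _ _ h (Or.inr ?_)
        show (e.1, e.2) ∈ C₁ ∪ C₂
        simpa using he
    show (if e.1 ∈ D then Pc g else 0) = (if e.2 ∈ D then Pc g else 0)
    by_cases h : e.1 ∈ D
    · rw [if_pos h, if_pos (hcl.mp h)]
    · rw [if_neg h, if_neg (fun hc => h (hcl.mpr hc))]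
  have hmem1 : z ∈ blockLang σ C₁ := by
    refine ⟨B, rfl, fun r x hx => ?_, fun e he => ?_⟩
    · rw [List.eq_of_mem_replicate hx]; exact ha r
    · show (List.replicate (NN e.1) (a e.1)).length = (List.replicate (NN e.2) (a e.2)).length
      rw [List.length_replicate, List.length_replicate, harcNN e (Or.inl he)]
  have hmem2 : z ∈ blockLang σ C₂ := by
    refine ⟨B, rfl, fun r x hx => ?_, fun e he => ?_⟩
    · rw [List.eq_of_mem_replicate hx]; exact ha r
    · show (List.replicate (NN e.1) (a e.1)).length = (List.replicate (NN e.2) (a e.2)).length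
      rw [List.length_replicate, List.length_replicate, harcNN e (Or.inr he)]
  have hmemg : z ∈ g.language := by rw [hg]; exact ⟨hmem1, hmem2⟩
  -- length bound
  have hzlen : z.length = ∑ r : Fin k, NN r := by
    rw [hzdef, List.length_flatten, List.map_ofFn, List.sum_ofFn]
    refine Finset.sum_congr rfl fun r _ => ?_
    show (List.replicate (NN r) (a r)).length = NN r
    exact List.length_replicate
  have hii' : i ≠ i' := Fin.ne_of_lt h1
  have hlen : Pc g + 1 ≤ z.length := by
    have hsub : ({i, i'} : Finset (Fin k)) ⊆ Finset.univ := Finset.subset_univ _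
    have hle : ∑ r ∈ ({i, i'} : Finset (Fin k)), NN r ≤ ∑ r : Fin k, NN r :=
      Finset.sum_le_sum_of_subset hsub
    rw [Finset.sum_pair hii'] at hle
    have hNNi : NN i = Pc g := if_pos hDi
    have hNNi' : NN i' = Pc g := if_pos hDi'
    have := one_le_Pc (g := g)
    omega
  -- pump
  obtain ⟨x, u, y, v, w', hzdec, hne', hbound, hpump⟩ := cfg_pump hmemg hlen
  rw [hg] at hpump
  -- letters of z and parts
  have hletz : ∀ c ∈ z, ∃ r, c = a r := by
    intro c hc
    rw [hzdef, List.mem_flatten] at hc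
    obtain ⟨l', hl', hc⟩ := hc
    rw [List.mem_ofFn] at hl'
    obtain ⟨r, rfl⟩ := hl'
    exact ⟨r, List.eq_of_mem_replicate hc⟩
  have hsubu : ∀ c ∈ u, c ∈ z := by intro c hc; rw [hzdec]; simp [hc]
  have hsubv : ∀ c ∈ v, c ∈ z := by intro c hc; rw [hzdec]; simp [hc]
  have hletz₂ : ∀ c ∈ x ++ (u ++ u) ++ y ++ (v ++ v) ++ w', ∃ r, c = a r := by
    intro c hc
    simp only [List.mem_append] at hc
    apply hletz
    rw [hzdec]
    simp only [List.mem_append]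
    tauto
  -- the pumping increment
  set γ : Fin k → ℕ := fun r => u.count (a r) + v.count (a r) with hγ
  have hz₂count : ∀ c : α, (x ++ (u ++ u) ++ y ++ (v ++ v) ++ w').count c
      = z.count c + (u.count c + v.count c) := by
    intro c
    rw [hzdec]
    simp only [List.count_append]
    ring
  have harcγ : ∀ e ∈ C₁ ∪ C₂, γ e.1 = γ e.2 := by
    intro e he
    have hc1 : z.count (a e.1) = z.count (a e.2) := by
      rcases he with he | he
      · exact count_blockLang hdisj a ha hinj hmem1 hletz e he
      · exact count_blockLang hdisj a ha hinj hmem2 hletz e he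
    have hc2 : (x ++ (u ++ u) ++ y ++ (v ++ v) ++ w').count (a e.1)
        = (x ++ (u ++ u) ++ y ++ (v ++ v) ++ w').count (a e.2) := by
      rcases he with he | he
      · exact count_blockLang hdisj a ha hinj hpump.1 hletz₂ e he
      · exact count_blockLang hdisj a ha hinj hpump.2 hletz₂ e he
    rw [hz₂count, hz₂count] at hc2
    show u.count (a e.1) + v.count (a e.1) = u.count (a e.2) + v.count (a e.2)
    omega
  have hcountz : ∀ r, z.count (a r) = NN r := by
    intro r
    rw [hzdef, List.count_flatten, List.map_ofFn, List.sum_ofFn]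
    have : ∀ s : Fin k, (List.count (a r) ∘ B) s
        = if s = r then NN r else 0 := by
      intro s
      show (List.replicate (NN s) (a s)).count (a r) = _
      rw [List.count_replicate]
      by_cases h : s = r
      · subst h; simp
      · have : a s ≠ a r := fun hc => h (hinj hc)
        simp [this, h]
    rw [Finset.sum_congr rfl fun s _ => this s]
    simp
  have hsupγ : ∀ r, γ r ≠ 0 → r ∈ D := by
    intro r hr
    have hcz : γ r ≤ z.count (a r) := by
      rw [hzdec]
      simp only [List.count_append]
      show u.count (a r) + v.count (a r) ≤ _
      omega
    rw [hcountz r] at hcz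
    by_contra hrD
    rw [show NN r = if r ∈ D then Pc g else 0 from rfl, if_neg hrD] at hcz
    omega
  have hwindow : ∀ t t' r : Fin k, γ t ≠ 0 → γ t' ≠ 0 → t < r → r < t' → r ∈ D → False := by
    intro t t' r hγt hγt' htr hrt' hrD
    have hzs : (List.ofFn fun s => List.replicate (NN s) (a s)).flatten
        = x ++ (u ++ y ++ v) ++ w' := by
      rw [show (List.ofFn fun s => List.replicate (NN s) (a s)) = List.ofFn B from rfl]
      rw [← hzdef, hzdec]
      simp [List.append_assoc]
    have hst : 1 ≤ (u ++ y ++ v).count (a t) := by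
      simp only [List.count_append]
      show 1 ≤ _
      have : γ t = u.count (a t) + v.count (a t) := rfl
      omega
    have hst' : 1 ≤ (u ++ y ++ v).count (a t') := by
      simp only [List.count_append]
      have : γ t' = u.count (a t') + v.count (a t') := rfl
      omega
    have hseg := seg_lemma a hinj NN hzs htr hrt' hst hst'
    have hNNr : NN r = Pc g := if_pos hrD
    omega
  have hγrel : ∀ r s, Rel r s → γ r = γ s := by
    intro r s h
    rcases h with h | h
    · exact harcγ (r, s) h
    · exact (harcγ (s, r) h).symm
  have hγrtg : ∀ {r s : Fin k}, Relation.ReflTransGen Rel r s → γ r = γ s := by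
    intro r s h
    induction h with
    | refl => rfl
    | tail _ hstep ih => exact ih.trans (hγrel _ _ hstep)
  -- find a pumped letter
  obtain ⟨c, hc⟩ := List.exists_mem_of_ne_nil _ hne'
  have hcz : c ∈ z := by
    rcases List.mem_append.mp hc with h | h
    · exact hsubu c h
    · exact hsubv c h
  obtain ⟨r₀, rfl⟩ := hletz c hcz
  have hγr₀ : γ r₀ ≠ 0 := by
    have : 1 ≤ (u ++ v).count (a r₀) := List.one_le_count_iff.mpr hc
    rw [List.count_append] at this
    show u.count (a r₀) + v.count (a r₀) ≠ 0
    omega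
  rcases hsupγ r₀ hγr₀ with hcase | hcase
  · have hγi : γ i ≠ 0 := by rw [hγrtg hcase]; exact hγr₀
    have hγj : γ j ≠ 0 := by rw [← hγrel i j hRelij]; exact hγi
    exact hwindow i j i' hγi hγj h1 h2 hDi'
  · have hγi' : γ i' ≠ 0 := by rw [hγrtg hcase]; exact hγr₀
    have hγj' : γ j' ≠ 0 := by rw [← hγrel i' j' hRelij']; exact hγi'
    exact hwindow i' j' j hγi' hγj' h2 h3 hDj

end Core

end CFPump


/-- If some arc of `C₁` crosses some arc of `C₂`, then the intersection of the corresponding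
block-counting languages is not context-free. -/
theorem blockLang_inter_not_contextFree_of_cross {α : Type} {k : ℕ}
    (σ : Fin k → Set α)
    (hdisj : ∀ i j : Fin k, i ≠ j → Disjoint (σ i) (σ j))
    (hfin : ∀ i : Fin k, (σ i).Finite) (hne : ∀ i : Fin k, (σ i).Nonempty)
    (C₁ C₂ : Set (Fin k × Fin k))
    (hC₁ : IsArcSet C₁) (hC₂ : IsArcSet C₂)
    (hwn₁ : WellNested C₁) (hwn₂ : WellNested C₂)
    (hm₁ : IsMatching C₁) (hm₂ : IsMatching C₂)
    (hcross : ∃ e₁ ∈ C₁, ∃ e₂ ∈ C₂, ArcsCross e₁ e₂) :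
    ¬ (blockLang σ C₁ ⊓ blockLang σ C₂).IsContextFree := by
  rcases hcross with ⟨e₁, he₁, e₂, he₂, hcr⟩
  rcases hcr with ⟨ha1, ha2, ha3⟩ | ⟨hb1, hb2, hb3⟩
  · exact CFPump.core_not_cf σ hdisj hne C₁ C₂ he₁ he₂ ha1 ha2 ha3
  · rw [inf_comm]
    exact CFPump.core_not_cf σ hdisj hne C₂ C₁ he₂ he₁ hb1 hb2 hb3
end

section
/- Fix a natural number k, a type α, and pairwise disjoint, finite, nonempty sub-alphabets σ₁, …, σ_k ⊆ α. Let C₁ and C₂ be arc sets on {1, …, k} that are well-nested matchings. If there exist arcs e₁ ∈ C₁ and e₂ ∈ C₂ with e₁ ≠ e₂ that share an endpoint (i.e., the two-element endpoint sets of e₁ and e₂ intersect), then the intersection L(C₁) ∩ L(C₂) of the corresponding block-counting languages is not context-free. -/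
namespace ContextFreeRule

variable {T N : Type*} {r : ContextFreeRule T N}

theorem rewrites_append_iff {u v w : List (Symbol T N)} :
    r.Rewrites (u ++ v) w ↔
      (∃ u', r.Rewrites u u' ∧ w = u' ++ v) ∨ (∃ v', r.Rewrites v v' ∧ w = u ++ v') := by
  refine ⟨fun h => ?_, ?_⟩
  · induction u generalizing w with
    | nil => exact .inr ⟨w, h, rfl⟩
    | cons a u ih =>
      cases h with
      | head => exact .inl ⟨r.output ++ u, .head u, by simp⟩
      | cons _ h =>
        rcases ih h with ⟨u', hu, rfl⟩ | ⟨v', hv, rfl⟩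
        · exact .inl ⟨a :: u', hu.cons a, rfl⟩
        · exact .inr ⟨v', hv, rfl⟩
  · rintro (⟨u', hu, rfl⟩ | ⟨v', hv, rfl⟩)
    exacts [hu.append_right v, hv.append_left u]

end ContextFreeRule

namespace ContextFreeGrammar

variable {T : Type*} {g : ContextFreeGrammar T}

theorem produces_append_iff {u v w : List (Symbol T g.NT)} :
    g.Produces (u ++ v) w ↔
      (∃ u', g.Produces u u' ∧ w = u' ++ v) ∨ (∃ v', g.Produces v v' ∧ w = u ++ v') := by
  simp only [Produces, ContextFreeRule.rewrites_append_iff]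
  grind

inductive DerivesIn (g : ContextFreeGrammar T) :
    ℕ → List (Symbol T g.NT) → List (Symbol T g.NT) → Prop
  | refl (u : List (Symbol T g.NT)) : DerivesIn g 0 u u
  | head {n : ℕ} {u v w : List (Symbol T g.NT)} :
      g.Produces u v → DerivesIn g n v w → DerivesIn g (n + 1) u w

namespace DerivesIn

variable {n : ℕ} {u v w : List (Symbol T g.NT)}

theorem derives (h : g.DerivesIn n u v) : g.Derives u v := by
  induction h with
  | refl => rfl
  | head hp _ ih => exact hp.trans_derives ih

theorem tail (h : g.DerivesIn n u v) (hp : g.Produces v w) : g.DerivesIn (n + 1) u w := by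
  induction h with
  | refl => exact .head hp (.refl _)
  | head hp' _ ih => exact .head hp' (ih hp)

theorem exists_of_append (h : g.DerivesIn n (u ++ v) w) :
    ∃ n₁ n₂ u' v', n₁ + n₂ = n ∧ w = u' ++ v' ∧ g.DerivesIn n₁ u u' ∧ g.DerivesIn n₂ v v' := by
  generalize huv : u ++ v = s at h
  induction h generalizing u v with
  | refl => exact ⟨0, 0, u, v, rfl, huv.symm, .refl u, .refl v⟩
  | head hp _ ih =>
    subst huv
    rcases produces_append_iff.mp hp with ⟨u', hu, rfl⟩ | ⟨v', hv, rfl⟩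
    · obtain ⟨n₁, n₂, a, b, rfl, rfl, ha, hb⟩ := ih rfl
      exact ⟨n₁ + 1, n₂, a, b, by omega, rfl, .head hu ha, hb⟩
    · obtain ⟨n₁, n₂, a, b, rfl, rfl, ha, hb⟩ := ih rfl
      exact ⟨n₁, n₂ + 1, a, b, by omega, rfl, ha, .head hv hb⟩

theorem eq_of_map_terminal {x : List T} (h : g.DerivesIn n (x.map .terminal) v) :
    v = x.map .terminal := by
  cases h with
  | refl => rfl
  | head hp _ =>
    obtain ⟨r, -, hr⟩ := hp.exists_nonterminal_input_mem
    simp at hr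

theorem exists_rule {A : g.NT} {x : List T}
    (h : g.DerivesIn n [.nonterminal A] (x.map .terminal)) :
    ∃ m, ∃ r ∈ g.rules, n = m + 1 ∧ r.input = A ∧ g.DerivesIn m r.output (x.map .terminal) := by
  generalize hx : x.map Symbol.terminal = s at h
  cases h with
  | refl => cases x <;> simp at hx
  | @head m _ v _ hp hd =>
    obtain ⟨r, hr, hrw⟩ := hp
    cases hrw with
    | head => exact ⟨m, r, hr, rfl, rfl, by simpa using hd⟩
    | cons _ h => cases h

end DerivesIn

theorem Derives.exists_derivesIn {u v : List (Symbol T g.NT)} (h : g.Derives u v) :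
    ∃ n, g.DerivesIn n u v := by
  induction h with
  | refl => exact ⟨0, .refl _⟩
  | tail _ hp ih =>
    obtain ⟨n, hn⟩ := ih
    exact ⟨n + 1, hn.tail hp⟩

theorem Derives.iterate {B : g.NT} {v y : List T}
    (h : g.Derives [.nonterminal B] (v.map .terminal ++ [.nonterminal B] ++ y.map .terminal))
    (n : ℕ) :
    g.Derives [.nonterminal B] ((List.replicate n v).flatten.map .terminal ++ [.nonterminal B] ++
      (List.replicate n y).flatten.map .terminal) := by
  induction n with
  | zero => exact .refl _
  | succ n ih =>
    have := h.trans ((ih.append_left (v.map .terminal)).append_right (y.map .terminal))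
    rw [List.replicate_succ, List.replicate_succ']
    simpa using this

theorem exists_rule_of_derives {B : g.NT} {x : List T}
    (h : g.Derives [.nonterminal B] (x.map .terminal)) : ∃ r ∈ g.rules, r.input = B := by
  by_contra! hB
  exact derives_nonterminal hB _ (by cases x <;> simp) h

def branching (g : ContextFreeGrammar T) : ℕ :=
  g.rules.sup (fun r => r.output.length) + 1

theorem output_length_lt_branching {r : ContextFreeRule T g.NT} (hr : r ∈ g.rules) :
    r.output.length < g.branching :=
  Nat.lt_succ_of_le (Finset.le_sup (f := fun r => r.output.length) hr)

theorem DerivesIn.exists_long_nonterminal {d n : ℕ} {l : List (Symbol T g.NT)} {w : List T}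
    (h : g.DerivesIn n l (w.map .terminal)) (hw : g.branching ^ d * l.length < w.length) :
    ∃ B p x q m, w = p ++ x ++ q ∧ g.branching ^ d < x.length ∧ m ≤ n ∧
      g.Derives l (p.map .terminal ++ [.nonterminal B] ++ q.map .terminal) ∧
      g.DerivesIn m [.nonterminal B] (x.map .terminal) := by
  have hM : 1 ≤ g.branching ^ d := Nat.one_le_pow _ _ (Nat.succ_pos _)
  induction l generalizing n w with
  | nil =>
    have : w = [] := List.map_eq_nil_iff.mp (DerivesIn.eq_of_map_terminal (x := []) h)
    simp [this] at hw
  | cons s l ih =>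
    obtain ⟨n₁, n₂, u', v', rfl, huv, h₁, h₂⟩ := DerivesIn.exists_of_append (u := [s]) (v := l) h
    obtain ⟨w₁, w₂, rfl, rfl, rfl⟩ := List.map_eq_append_iff.mp huv
    by_cases hw₁ : g.branching ^ d < w₁.length
    · cases s with
      | terminal t =>
        have : w₁ = [t] := List.map_injective_iff.mpr (fun _ _ h => Symbol.terminal.inj h)
          (h₁.eq_of_map_terminal (x := [t]))
        simp only [this, List.length_singleton] at hw₁
        omega
      | nonterminal B =>
        exact ⟨B, [], w₁, w₂, n₁, by simp, hw₁, by omega,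
          by simpa using h₂.derives.append_left [Symbol.nonterminal B], h₁⟩
    · have hw₂ : g.branching ^ d * l.length < w₂.length := by
        simp only [List.length_append, List.length_cons, Nat.mul_succ] at hw
        omega
      obtain ⟨B, p, x, q, m, rfl, hx, hm, hl, hB⟩ := ih h₂ hw₂
      refine ⟨B, w₁ ++ p, x, q, m, by simp, hx, by omega, ?_, hB⟩
      simpa using (h₁.derives.append_right l).trans (hl.append_left (w₁.map .terminal))

theorem Derives.exists_proper_subderivation {d : ℕ} {A : g.NT} {w : List T}
    (h : g.Derives [.nonterminal A] (w.map .terminal)) (hw : g.branching ^ (d + 1) < w.length) :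
    ∃ B p x q, p ++ q ≠ [] ∧ w = p ++ x ++ q ∧ g.branching ^ d < x.length ∧
      g.Derives [.nonterminal A] (p.map .terminal ++ [.nonterminal B] ++ q.map .terminal) ∧
      g.Derives [.nonterminal B] (x.map .terminal) := by
  obtain ⟨n, hn⟩ := h.exists_derivesIn
  clear h
  induction n using Nat.strong_induction_on generalizing A w with
  | _ n ih =>
  obtain ⟨m, r, hr, rfl, rfl, hm⟩ := hn.exists_rule
  have hlen : g.branching ^ d * r.output.length < w.length :=
    calc _ ≤ g.branching ^ d * g.branching :=
          Nat.mul_le_mul_left _ (output_length_lt_branching hr).le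
      _ = g.branching ^ (d + 1) := (pow_succ ..).symm
      _ < _ := hw
  obtain ⟨B, p, x, q, m', rfl, hx, hm', hAB, hB⟩ := hm.exists_long_nonterminal hlen
  have hA : g.Derives [.nonterminal r.input]
      (p.map .terminal ++ [.nonterminal B] ++ q.map .terminal) :=
    (Produces.single ⟨r, hr, .input_output⟩).trans hAB
  by_cases hpq : p ++ q = []
  · -- `A ⇒* B` without shrinking the yield: descend along the shorter derivation from `B`.
    obtain ⟨rfl, rfl⟩ := List.append_eq_nil_iff.mp hpq
    simp only [List.map_nil, List.nil_append, List.append_nil] at hA hw ⊢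
    obtain ⟨B', p', x', q', hpq', rfl, hx', hBB', hB'⟩ := ih m' (by omega) hw hB
    exact ⟨B', p', x', q', hpq', rfl, hx', hA.trans hBB', hB'⟩
  · exact ⟨B, p, x, q, hpq, rfl, hx, hA, hB.derives⟩

def IsProperDescendant (g : ContextFreeGrammar T) (A : g.NT) (w : List T) (B : g.NT) : Prop :=
  ∃ u x z : List T, u ++ z ≠ [] ∧ w = u ++ x ++ z ∧
    g.Derives [.nonterminal A] (u.map .terminal ++ [.nonterminal B] ++ z.map .terminal) ∧
    g.Derives [.nonterminal B] (x.map .terminal)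

def IsPumpable (g : ContextFreeGrammar T) (A : g.NT) (w : List T) : Prop :=
  ∃ B u x z, w = u ++ x ++ z ∧
    g.Derives [.nonterminal A] (u.map .terminal ++ [.nonterminal B] ++ z.map .terminal) ∧
    g.IsProperDescendant B x B

theorem derives_nested {A B C : g.NT} {p q u z : List T}
    (hA : g.Derives [.nonterminal A] (p.map .terminal ++ [.nonterminal B] ++ q.map .terminal))
    (hB : g.Derives [.nonterminal B] (u.map .terminal ++ [.nonterminal C] ++ z.map .terminal)) :
    g.Derives [.nonterminal A]
      ((p ++ u).map .terminal ++ [.nonterminal C] ++ (z ++ q).map .terminal) := by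
  simpa using hA.trans ((hB.append_left (p.map .terminal)).append_right (q.map .terminal))

theorem IsProperDescendant.frame {A B C : g.NT} {p q x : List T}
    (hA : g.Derives [.nonterminal A] (p.map .terminal ++ [.nonterminal B] ++ q.map .terminal))
    (h : g.IsProperDescendant B x C) : g.IsProperDescendant A (p ++ x ++ q) C := by
  obtain ⟨u, y, z, huz, rfl, hB, hC⟩ := h
  exact ⟨p ++ u, y, z ++ q, by simp_all, by simp, derives_nested hA hB, hC⟩

theorem IsPumpable.frame {A B : g.NT} {p q x : List T}
    (hA : g.Derives [.nonterminal A] (p.map .terminal ++ [.nonterminal B] ++ q.map .terminal))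
    (h : g.IsPumpable B x) : g.IsPumpable A (p ++ x ++ q) := by
  obtain ⟨C, u, y, z, rfl, hB, hC⟩ := h
  exact ⟨C, p ++ u, y, z ++ q, by simp, derives_nested hA hB, hC⟩

theorem isPumpable_or_exists_descendants (d : ℕ) {A : g.NT} {w : List T}
    (h : g.Derives [.nonterminal A] (w.map .terminal)) (hw : g.branching ^ d < w.length) :
    g.IsPumpable A w ∨ ∃ S : Finset g.NT, S.card = d ∧ ∀ B ∈ S, g.IsProperDescendant A w B := by
  classical
  -- Walk down through `d` proper subderivations with long yields: unless some nonterminal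
  -- repeats, which closes a pumpable loop, the nonterminals met along the way are distinct.
  induction d generalizing A w with
  | zero => exact .inr ⟨∅, rfl, by simp⟩
  | succ d ih =>
    obtain ⟨B, p, x, q, hpq, rfl, hx, hAB, hB⟩ := h.exists_proper_subderivation hw
    rcases ih hB hx with hpump | ⟨S, rfl, hS⟩
    · exact .inl (IsPumpable.frame hAB hpump)
    by_cases hBS : B ∈ S
    · exact .inl ⟨B, p, x, q, rfl, hAB, hS B hBS⟩
    refine .inr ⟨insert B S, Finset.card_insert_of_notMem hBS, fun C hC => ?_⟩
    rcases Finset.mem_insert.mp hC with rfl | hC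
    · exact ⟨p, x, q, hpq, rfl, hAB, hB⟩
    · exact IsProperDescendant.frame hAB (hS C hC)

theorem Derives.isPumpable {A : g.NT} {w : List T}
    (h : g.Derives [.nonterminal A] (w.map .terminal))
    (hw : g.branching ^ (g.rules.card + 1) < w.length) : g.IsPumpable A w := by
  classical
  refine (isPumpable_or_exists_descendants _ h hw).resolve_right ?_
  rintro ⟨S, hS, hdesc⟩
  have hsub : S ⊆ g.rules.image (·.input) := fun B hB => by
    obtain ⟨-, x, -, -, -, -, hx⟩ := hdesc B hB
    simpa using exists_rule_of_derives hx
  have := (Finset.card_le_card hsub).trans Finset.card_image_le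
  omega

end ContextFreeGrammar

theorem Language.IsContextFree.pumping {T : Type*} {L : Language T} (hL : L.IsContextFree) :
    ∃ N, ∀ w ∈ L, N ≤ w.length → ∃ u v x y z : List T,
      w = u ++ v ++ x ++ y ++ z ∧ v ++ y ≠ [] ∧
      ∀ n, u ++ (List.replicate n v).flatten ++ x ++ (List.replicate n y).flatten ++ z ∈ L := by
  obtain ⟨g, rfl⟩ := hL
  refine ⟨g.branching ^ (g.rules.card + 1) + 1, fun w hw hN => ?_⟩
  obtain ⟨B, u, _, z, rfl, hS, v, x, y, hvy, rfl, hB, hx⟩ := hw.isPumpable hN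
  refine ⟨u, v, x, y, z, by simp, hvy, fun n => ?_⟩
  have hloop := ContextFreeGrammar.derives_nested hS (hB.iterate n)
  simpa using hloop.trans ((hx.append_left _).append_right _)

section LetterCount

variable {β : Type*}

open Classical in
noncomputable def letterCount (s : Set β) (w : List β) : ℕ :=
  w.countP (· ∈ s)

@[simp]
theorem letterCount_append (s : Set β) (u v : List β) :
    letterCount s (u ++ v) = letterCount s u + letterCount s v :=
  List.countP_append

theorem letterCount_pos {s : Set β} {w : List β} : 0 < letterCount s w ↔ ∃ x ∈ w, x ∈ s := by
  simp [letterCount, List.countP_pos_iff]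

end LetterCount

section BlockLanguage

open Function

variable {α : Type} {k : ℕ} {σ : Fin k → Set α}

theorem letterCount_flatten_ofFn (hdisj : Pairwise (Disjoint on σ))
    {B : Fin k → List α} (hB : ∀ i, ∀ x ∈ B i, x ∈ σ i) (i : Fin k) :
    letterCount (σ i) (List.ofFn B).flatten = (B i).length := by
  rw [letterCount, List.countP_flatten, List.map_ofFn, List.sum_ofFn,
    Finset.sum_eq_single_of_mem i (Finset.mem_univ i)]
  · exact List.countP_eq_length.mpr fun x hx => by simpa using hB i x hx
  · intro j _ hji
    exact List.countP_eq_zero.mpr fun x hx => by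
      simpa using (hdisj hji).notMem_of_mem_left (hB j x hx)

theorem letterCount_eq_of_mem_blockLang (hdisj : Pairwise (Disjoint on σ))
    {C : Set (Fin k × Fin k)} {w : List α} (hw : w ∈ blockLang σ C) {e : Fin k × Fin k}
    (he : e ∈ C) : letterCount (σ e.1) w = letterCount (σ e.2) w := by
  obtain ⟨B, rfl, hB, hlen⟩ := hw
  rw [letterCount_flatten_ofFn hdisj hB, letterCount_flatten_ofFn hdisj hB, hlen e he]

theorem blockLang_inf_blockLang (hdisj : Pairwise (Disjoint on σ))
    (C₁ C₂ : Set (Fin k × Fin k)) :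
    blockLang σ C₁ ⊓ blockLang σ C₂ = blockLang σ (C₁ ∪ C₂) := by
  -- The block decomposition is unique: `B i` has as many letters as `w` has in `σ i`.
  ext w
  refine ⟨fun ⟨hw₁, hw₂⟩ => ?_, fun ⟨B, hw, hB, hlen⟩ =>
    ⟨⟨B, hw, hB, fun e he => hlen e (.inl he)⟩, ⟨B, hw, hB, fun e he => hlen e (.inr he)⟩⟩⟩
  obtain ⟨B, rfl, hB, hlen⟩ := id hw₁
  refine ⟨B, rfl, hB, fun e he => he.elim (hlen e) fun he => ?_⟩
  rw [← letterCount_flatten_ofFn hdisj hB, ← letterCount_flatten_ofFn hdisj hB]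
  exact letterCount_eq_of_mem_blockLang hdisj hw₂ he

def arcRel (C : Set (Fin k × Fin k)) (i j : Fin k) : Prop :=
  (i, j) ∈ C

theorem letterCount_eq_of_eqvGen (hdisj : Pairwise (Disjoint on σ))
    {C : Set (Fin k × Fin k)} {w : List α} (hw : w ∈ blockLang σ C) {i j : Fin k}
    (hij : Relation.EqvGen (arcRel C) i j) : letterCount (σ i) w = letterCount (σ j) w := by
  induction hij with
  | rel i j h => exact letterCount_eq_of_mem_blockLang hdisj hw (e := (i, j)) h
  | refl => rfl
  | symm _ _ _ ih => exact ih.symm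
  | trans _ _ _ _ _ ih₁ ih₂ => exact ih₁.trans ih₂

theorem pairwise_of_mem_blockLang (hdisj : Pairwise (Disjoint on σ))
    {C : Set (Fin k × Fin k)} {w : List α} (hw : w ∈ blockLang σ C) :
    w.Pairwise fun x y => ∀ i j, x ∈ σ i → y ∈ σ j → i ≤ j := by
  obtain ⟨B, rfl, hB, -⟩ := hw
  have index_eq {i j : Fin k} {x : α} (hx : x ∈ σ i) (hx' : x ∈ σ j) : i = j := by
    by_contra hij
    exact (hdisj hij).notMem_of_mem_left hx hx'
  refine List.pairwise_flatten.mpr ⟨?_, List.pairwise_ofFn.mpr ?_⟩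
  · simp only [List.mem_ofFn, forall_exists_index, forall_apply_eq_imp_iff]
    intro m
    refine List.Pairwise.imp_of_mem ?_ (List.pairwise_of_forall fun _ _ => trivial)
    intro x y hx hy _ i j hxi hyj
    rw [index_eq hxi (hB m x hx), index_eq hyj (hB m y hy)]
  · intro m m' hmm' x hx y hy i j hxi hyj
    rw [index_eq hxi (hB m x hx), index_eq hyj (hB m' y hy)]
    exact hmm'.le

theorem eq_of_letterCount_pos_of_square_mem_blockLang
    (hdisj : Pairwise (Disjoint on σ)) {C : Set (Fin k × Fin k)}
    {u v z : List α} (hw : u ++ v ++ v ++ z ∈ blockLang σ C) {i j : Fin k}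
    (hi : 0 < letterCount (σ i) v) (hj : 0 < letterCount (σ j) v) : i = j := by
  obtain ⟨x, hx, hxi⟩ := letterCount_pos.mp hi
  obtain ⟨y, hy, hyj⟩ := letterCount_pos.mp hj
  rw [List.append_assoc u] at hw
  have hvv := (pairwise_of_mem_blockLang hdisj hw).sublist (List.infix_append u (v ++ v) z).sublist
  have hcross := (List.pairwise_append.mp hvv).2.2
  exact le_antisymm (hcross x hx y hy i j hxi hyj) (hcross y hy x hx j i hyj hxi)

def blockWord (a : Fin k → α) (n : Fin k → ℕ) : List α :=
  (List.ofFn fun i => List.replicate (n i) (a i)).flatten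

theorem blockWord_mem_blockLang {a : Fin k → α} (ha : ∀ i, a i ∈ σ i) {n : Fin k → ℕ}
    {C : Set (Fin k × Fin k)} (hn : ∀ e ∈ C, n e.1 = n e.2) : blockWord a n ∈ blockLang σ C :=
  ⟨_, rfl, fun i _ hx => List.eq_of_mem_replicate hx ▸ ha i, by simpa using hn⟩

theorem letterCount_blockWord (hdisj : Pairwise (Disjoint on σ))
    {a : Fin k → α} (ha : ∀ i, a i ∈ σ i) (n : Fin k → ℕ) (i : Fin k) :
    letterCount (σ i) (blockWord a n) = n i := by
  rw [blockWord, letterCount_flatten_ofFn hdisj fun i _ hx => List.eq_of_mem_replicate hx ▸ ha i,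
    List.length_replicate]

theorem exists_of_mem_blockWord {a : Fin k → α} {n : Fin k → ℕ} {x : α}
    (hx : x ∈ blockWord a n) : ∃ i, 0 < n i ∧ x = a i := by
  obtain ⟨_, hl, hx⟩ := List.mem_flatten.mp hx
  obtain ⟨i, rfl⟩ := List.mem_ofFn.mp hl
  exact ⟨i, List.length_pos_of_mem hx |>.trans_eq (List.length_replicate ..),
    List.eq_of_mem_replicate hx⟩

theorem letterCount_pumped_eq_of_eqvGen (hdisj : Pairwise (Disjoint on σ))
    {C : Set (Fin k × Fin k)} {u v x y z : List α} (hw : u ++ v ++ x ++ y ++ z ∈ blockLang σ C)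
    (hw₂ : u ++ v ++ v ++ x ++ y ++ y ++ z ∈ blockLang σ C) {i j : Fin k}
    (hij : Relation.EqvGen (arcRel C) i j) :
    letterCount (σ i) (v ++ y) = letterCount (σ j) (v ++ y) := by
  have h := letterCount_eq_of_eqvGen hdisj hw hij
  have h₂ := letterCount_eq_of_eqvGen hdisj hw₂ hij
  simp only [letterCount_append] at h h₂ ⊢
  omega

theorem letterCount_pos_of_pump_blockWord (hdisj : Pairwise (Disjoint on σ))
    {C : Set (Fin k × Fin k)} {a : Fin k → α} (ha : ∀ i, a i ∈ σ i) {n : Fin k → ℕ} {i₀ : Fin k}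
    (hn : ∀ i, 0 < n i → Relation.EqvGen (arcRel C) i₀ i) {u v x y z : List α}
    (hwd : blockWord a n = u ++ v ++ x ++ y ++ z) (hw : blockWord a n ∈ blockLang σ C)
    (hw₂ : u ++ v ++ v ++ x ++ y ++ y ++ z ∈ blockLang σ C) (hvy : v ++ y ≠ []) {i : Fin k}
    (hi : Relation.EqvGen (arcRel C) i₀ i) : 0 < letterCount (σ i) (v ++ y) := by
  rw [hwd] at hw
  obtain ⟨ξ, hξ⟩ := List.exists_mem_of_ne_nil _ hvy
  have hξw : ξ ∈ blockWord a n := by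
    rw [hwd]
    simp only [List.mem_append] at hξ ⊢
    tauto
  obtain ⟨j, hj, rfl⟩ := exists_of_mem_blockWord hξw
  have hij := (hi.symm _ _).trans _ _ _ (hn j hj)
  rw [letterCount_pumped_eq_of_eqvGen hdisj hw hw₂ hij]
  exact letterCount_pos.mpr ⟨a j, hξ, ha j⟩

theorem blockLang_not_isContextFree (hdisj : Pairwise (Disjoint on σ))
    (hne : ∀ i, (σ i).Nonempty) {C : Set (Fin k × Fin k)} {i₁ i₂ i₃ : Fin k}
    (h₁₂ : i₁ ≠ i₂) (h₁₃ : i₁ ≠ i₃) (h₂₃ : i₂ ≠ i₃)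
    (hr₂ : Relation.EqvGen (arcRel C) i₁ i₂) (hr₃ : Relation.EqvGen (arcRel C) i₁ i₃) :
    ¬ (blockLang σ C).IsContextFree := by
  classical
  intro hcf
  choose a ha using hne
  obtain ⟨N, hN⟩ := hcf.pumping
  set P : Fin k → Prop := Relation.EqvGen (arcRel C) i₁
  set n : Fin k → ℕ := fun i => if P i then N else 0
  have hn : ∀ i, 0 < n i → P i := fun i hi => by
    by_contra h
    simp [n, h] at hi
  have hw : blockWord a n ∈ blockLang σ C := by
    refine blockWord_mem_blockLang ha fun e he => ?_
    have hP : P e.1 ↔ P e.2 := ⟨fun h => h.trans _ _ _ (.rel _ _ he),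
      fun h => h.trans _ _ _ (.symm _ _ (.rel _ _ he))⟩
    simp only [n, hP]
  have hlen : N ≤ (blockWord a n).length :=
    calc N = letterCount (σ i₁) (blockWord a n) := by
          rw [letterCount_blockWord hdisj ha]; exact (if_pos (.refl _)).symm
      _ ≤ _ := List.countP_le_length
  obtain ⟨u, v, x, y, z, hwd, hvy, hpump⟩ := hN _ hw hlen
  have hw₂ : u ++ v ++ v ++ x ++ y ++ y ++ z ∈ blockLang σ C := by simpa using hpump 2
  have hhit : ∀ i, P i → 0 < letterCount (σ i) v ∨ 0 < letterCount (σ i) y := fun i hi => by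
    simpa [Nat.add_pos_iff_pos_or_pos] using
      letterCount_pos_of_pump_blockWord hdisj ha hn hwd hw hw₂ hvy hi
  -- `v` and `y` each meet at most one alphabet, yet together they meet three.
  have hv : ∀ {i j}, 0 < letterCount (σ i) v → 0 < letterCount (σ j) v → i = j :=
    eq_of_letterCount_pos_of_square_mem_blockLang hdisj (by simpa using hw₂)
  have hy : ∀ {i j}, 0 < letterCount (σ i) y → 0 < letterCount (σ j) y → i = j :=
    eq_of_letterCount_pos_of_square_mem_blockLang hdisj hw₂
  have := hhit i₁ (.refl _)
  have := hhit i₂ hr₂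
  have := hhit i₃ hr₃
  grind

theorem exists_three_eqvGen_of_sharedEndpoint {C₁ C₂ : Set (Fin k × Fin k)}
    (hC₁ : IsArcSet C₁) (hC₂ : IsArcSet C₂)
    (hshare : ∃ e₁ ∈ C₁, ∃ e₂ ∈ C₂, e₁ ≠ e₂ ∧
      (({e₁.1, e₁.2} : Set (Fin k)) ∩ {e₂.1, e₂.2}).Nonempty) :
    ∃ i₁ i₂ i₃, i₁ ≠ i₂ ∧ i₁ ≠ i₃ ∧ i₂ ≠ i₃ ∧ Relation.EqvGen (arcRel (C₁ ∪ C₂)) i₁ i₂ ∧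
      Relation.EqvGen (arcRel (C₁ ∪ C₂)) i₁ i₃ := by
  obtain ⟨⟨a, b⟩, he₁, ⟨c, d⟩, he₂, hne, s, hs₁, hs₂⟩ := hshare
  have hab : a < b := hC₁ _ he₁
  have hcd : c < d := hC₂ _ he₂
  have rab : Relation.EqvGen (arcRel (C₁ ∪ C₂)) a b := .rel _ _ (.inl he₁)
  have rcd : Relation.EqvGen (arcRel (C₁ ∪ C₂)) c d := .rel _ _ (.inr he₂)
  have rac : Relation.EqvGen (arcRel (C₁ ∪ C₂)) a c := by
    have ras : Relation.EqvGen (arcRel (C₁ ∪ C₂)) a s := by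
      rcases hs₁ with rfl | rfl
      exacts [.refl _, rab]
    rcases hs₂ with rfl | rfl
    exacts [ras, ras.trans _ _ _ (.symm _ _ rcd)]
  obtain ⟨t, ht, hta, htb⟩ : ∃ t, (t = c ∨ t = d) ∧ t ≠ a ∧ t ≠ b := by
    by_contra! h
    have := h c (.inl rfl)
    have := h d (.inr rfl)
    simp only [Fin.ext_iff, Fin.lt_def, ne_eq, Prod.mk.injEq] at *
    omega
  refine ⟨a, b, t, hab.ne, hta.symm, htb.symm, rab, ?_⟩
  rcases ht with rfl | rfl
  exacts [rac, rac.trans _ _ _ rcd]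

end BlockLanguage

theorem blockLang_inter_not_contextFree_of_sharedEndpoint_general {α : Type} {k : ℕ}
    (σ : Fin k → Set α)
    (hdisj : ∀ i j : Fin k, i ≠ j → Disjoint (σ i) (σ j))
    (hne : ∀ i : Fin k, (σ i).Nonempty)
    (C₁ C₂ : Set (Fin k × Fin k))
    (hC₁ : IsArcSet C₁) (hC₂ : IsArcSet C₂)
    (hshare : ∃ e₁ ∈ C₁, ∃ e₂ ∈ C₂, e₁ ≠ e₂ ∧
      (({e₁.1, e₁.2} : Set (Fin k)) ∩ {e₂.1, e₂.2}).Nonempty) :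
    ¬ (blockLang σ C₁ ⊓ blockLang σ C₂).IsContextFree := by
  obtain ⟨i₁, i₂, i₃, h₁₂, h₁₃, h₂₃, hr₂, hr₃⟩ :=
    exists_three_eqvGen_of_sharedEndpoint hC₁ hC₂ hshare
  rw [blockLang_inf_blockLang hdisj]
  exact blockLang_not_isContextFree hdisj hne h₁₂ h₁₃ h₂₃ hr₂ hr₃

/-- If some arc of `C₁` and some distinct arc of `C₂` share an endpoint, then the intersection
of the corresponding block-counting languages is not context-free. -/
theorem blockLang_inter_not_contextFree_of_sharedEndpoint {α : Type} {k : ℕ}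
    (σ : Fin k → Set α)
    (hdisj : ∀ i j : Fin k, i ≠ j → Disjoint (σ i) (σ j))
    (hfin : ∀ i : Fin k, (σ i).Finite) (hne : ∀ i : Fin k, (σ i).Nonempty)
    (C₁ C₂ : Set (Fin k × Fin k))
    (hC₁ : IsArcSet C₁) (hC₂ : IsArcSet C₂)
    (hwn₁ : WellNested C₁) (hwn₂ : WellNested C₂)
    (hm₁ : IsMatching C₁) (hm₂ : IsMatching C₂)
    (hshare : ∃ e₁ ∈ C₁, ∃ e₂ ∈ C₂, e₁ ≠ e₂ ∧
      (({e₁.1, e₁.2} : Set (Fin k)) ∩ {e₂.1, e₂.2}).Nonempty) :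
    ¬ (blockLang σ C₁ ⊓ blockLang σ C₂).IsContextFree :=
  blockLang_inter_not_contextFree_of_sharedEndpoint_general σ hdisj hne C₁ C₂ hC₁ hC₂ hshare
end
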